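/- arXiv:1104.0446 — 11 statements merged into one kernel-verified Lean document; each statement's English description precedes it below -/
import Mathlib

section
/- Let A be a real m×N matrix, let u0 ∈ ℝ^N be a binary vector (u0(x) ∈ {0,1} for every x), and set b = A u0. Then the following are equivalent: (i) there is no nonzero v ∈ ℝ^N with A v = 0 such that v(x) ≤ 0 whenever u0(x) = 1 and v(x) ≥ 0 whenever u0(x) = 0; (ii) u0 is the unique vector u ∈ ℝ^N satisfying A u = b and 0 ≤ u(x) ≤ 1 for all x. -/
/-- Theorem 1 of the paper: a binary vector `u0` is the unique solution of the
box-constrained problem (P1) iff the kernel of `A` meets the orthant determined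
by `u0` only at the origin. -/
theorem stmt_0 (m N : ℕ) (A : Matrix (Fin m) (Fin N) ℝ) (u0 : Fin N → ℝ)
    (hbin : ∀ x, u0 x = 0 ∨ u0 x = 1) :
    (¬ ∃ v : Fin N → ℝ, v ≠ 0 ∧ A.mulVec v = 0 ∧
        (∀ x, u0 x = 1 → v x ≤ 0) ∧ (∀ x, u0 x = 0 → 0 ≤ v x)) ↔
    (∀ u : Fin N → ℝ, A.mulVec u = A.mulVec u0 →
        (∀ x, 0 ≤ u x ∧ u x ≤ 1) → u = u0) := by
  constructor
  · intro h u hAu hbox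
    have hker : A.mulVec (u - u0) = 0 := by
      rw [Matrix.mulVec_sub, hAu, sub_self]
    by_contra hne
    apply h
    refine ⟨u - u0, fun hz => hne (by funext x; have := congrFun hz x; simpa [sub_eq_zero] using this), hker, ?_, ?_⟩
    · intro x hx
      have := (hbox x).2
      simp only [Pi.sub_apply, hx]
      linarith
    · intro x hx
      have := (hbox x).1
      simp only [Pi.sub_apply, hx]
      linarith
  · intro h hv
    obtain ⟨v, hv0, hker, hneg, hpos⟩ := hv
    set S : ℝ := ∑ x, |v x| with hSdef
    have hS0 : 0 ≤ S := Finset.sum_nonneg fun x _ => abs_nonneg _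
    have hSx : ∀ x, |v x| ≤ S := fun x =>
      Finset.single_le_sum (fun y _ => abs_nonneg (v y)) (Finset.mem_univ x)
    set ε : ℝ := (1 + S)⁻¹ with hεdef
    have hε : 0 < ε := by positivity
    have hεS : ε * S ≤ 1 := by
      rw [hεdef, inv_mul_le_iff₀ (by positivity)]
      linarith
    have key : ∀ x, ε * |v x| ≤ 1 := fun x =>
      le_trans (by nlinarith [hSx x, hε.le]) hεS
    have hu := h (u0 + ε • v) (by rw [Matrix.mulVec_add, Matrix.mulVec_smul, hker]; simp)
      (by
        intro x
        rcases hbin x with h0 | h1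
        · have hv' := hpos x h0
          have hk := key x
          rw [abs_of_nonneg hv'] at hk
          constructor
          · simp only [Pi.add_apply, Pi.smul_apply, smul_eq_mul, h0]
            positivity
          · simp only [Pi.add_apply, Pi.smul_apply, smul_eq_mul, h0]
            linarith
        · have hv' := hneg x h1
          have hk := key x
          rw [abs_of_nonpos hv'] at hk
          constructor
          · simp only [Pi.add_apply, Pi.smul_apply, smul_eq_mul, h1]
            linarith
          · simp only [Pi.add_apply, Pi.smul_apply, smul_eq_mul, h1]
            nlinarith [hε.le])
    apply hv0
    have : ε • v = 0 := by
      have := congrArg (fun w => w - u0) hu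
      simpa [add_sub_cancel_left] using this
    funext x
    have := congrFun this x
    simp only [Pi.smul_apply, smul_eq_mul, Pi.zero_apply] at this ⊢
    have := mul_eq_zero.mp this
    rcases this with h | h
    · exact absurd h hε.ne'
    · exact h
end

section
/- Let A be a real m×N matrix, let u0 ∈ ℝ^N be a binary vector (u0(x) ∈ {0,1} for every x), and set b = A u0. Then the following are equivalent: (i) there exists η ∈ ℝ^m such that the vector v = Aᵀη satisfies v(x) < 0 whenever u0(x) = 1 and v(x) > 0 whenever u0(x) = 0; (ii) u0 is the unique vector u ∈ ℝ^N satisfying A u = b and 0 ≤ u(x) ≤ 1 for all x. -/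
open Matrix Finset

/-- A vector orthogonal to the kernel of `A.mulVec` lies in the range of `Aᵀ.mulVec`. -/
lemma mem_range_transpose_of_perp_ker {m N : ℕ} (A : Matrix (Fin m) (Fin N) ℝ)
    (v : Fin N → ℝ) (h : ∀ w, A.mulVec w = 0 → v ⬝ᵥ w = 0) :
    ∃ η : Fin m → ℝ, A.transpose.mulVec η = v := by
  classical
  set E := EuclideanSpace ℝ (Fin N)
  let e : E ≃ₗ[ℝ] (Fin N → ℝ) := WithLp.linearEquiv 2 ℝ (Fin N → ℝ)
  let T : (Fin m → ℝ) →ₗ[ℝ] E := e.symm.toLinearMap ∘ₗ (Matrix.mulVecLin A.transpose)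
  let R : Submodule ℝ E := LinearMap.range T
  have hRR : Rᗮᗮ = R := Submodule.orthogonal_orthogonal R
  have hinner : ∀ a b : E, (inner ℝ a b : ℝ) = (e a) ⬝ᵥ (e b) := by
    intro a b
    simp [PiLp.inner_apply, dotProduct, mul_comm]
    rw [PiLp.inner_apply (𝕜 := ℝ) (f := fun _ : Fin N => ℝ) a b]
    simp [e, mul_comm]
    rfl
  have hv : (e.symm v) ∈ Rᗮᗮ := by
    rw [Submodule.mem_orthogonal]
    intro z hz
    -- z is orthogonal to the range of `Aᵀ`, so `A (e z) = 0`.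
    have hz' : A.mulVec (e z) = 0 := by
      funext i
      have h1 := (Submodule.mem_orthogonal' R z).mp hz (T (Pi.single i 1))
        (LinearMap.mem_range_self T _)
      rw [hinner] at h1
      have h2 : ((e z) ⬝ᵥ fun j => A i j) = 0 := by
        simp [T, e] at h1
        exact h1
      calc A.mulVec (e z) i = (fun j => A i j) ⬝ᵥ (e z) := rfl
        _ = (e z) ⬝ᵥ (fun j => A i j) := dotProduct_comm _ _
        _ = 0 := h2
    have h3 := h (e z) hz'
    rw [hinner]
    simp only [LinearEquiv.apply_symm_apply]
    rw [dotProduct_comm] at h3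
    exact h3
  rw [hRR] at hv
  obtain ⟨η, hη⟩ := hv
  refine ⟨η, ?_⟩
  have h4 : η ᵥ* A = v := by simpa [T, e] using congrArg e hη
  rw [Matrix.mulVec_transpose]
  exact h4

/-- Theorem 2 of the paper (positive criterion): a binary vector `u0` is the unique
solution of (P1) iff some vector in the row space of `A` is strictly negative on the
support of `u0` and strictly positive off it. -/
theorem stmt_1 (m N : ℕ) (A : Matrix (Fin m) (Fin N) ℝ) (u0 : Fin N → ℝ)
    (hbin : ∀ x, u0 x = 0 ∨ u0 x = 1) :
    (∃ η : Fin m → ℝ,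
        (∀ x, u0 x = 1 → A.transpose.mulVec η x < 0) ∧
        (∀ x, u0 x = 0 → 0 < A.transpose.mulVec η x)) ↔
    (∀ u : Fin N → ℝ, A.mulVec u = A.mulVec u0 →
        (∀ x, 0 ≤ u x ∧ u x ≤ 1) → u = u0) := by
  classical
  constructor
  · -- easy direction
    rintro ⟨η, hneg, hpos⟩ u hu hbox
    set v := A.transpose.mulVec η with hv
    have hsum : v ⬝ᵥ (u - u0) = 0 := by
      rw [hv, Matrix.mulVec_transpose, ← Matrix.dotProduct_mulVec, Matrix.mulVec_sub, hu]
      simp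
    have hterm : ∀ x ∈ Finset.univ, 0 ≤ v x * (u - u0) x := by
      intro x _
      rcases hbin x with h0 | h1
      · have := (hbox x).1
        have hvp := hpos x h0
        have : 0 ≤ (u - u0) x := by simp [h0, (hbox x).1]
        positivity
      · have hvn := hneg x h1
        have : (u - u0) x ≤ 0 := by
          simp only [Pi.sub_apply, h1]
          linarith [(hbox x).2]
        nlinarith
    have hall := (Finset.sum_eq_zero_iff_of_nonneg hterm).mp hsum
    funext x
    have hx := hall x (Finset.mem_univ x)
    have hvne : v x ≠ 0 := by
      rcases hbin x with h0 | h1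
      · exact ne_of_gt (hpos x h0)
      · exact ne_of_lt (hneg x h1)
    have : (u - u0) x = 0 := by
      rcases mul_eq_zero.mp hx with h | h
      · exact absurd h hvne
      · exact h
    simpa [sub_eq_zero] using this
  · -- hard direction
    intro huniq
    -- the sign vector and the simplex
    set s : Fin N → ℝ := fun x => if u0 x = 1 then -1 else 1 with hs
    set C : Set (Fin N → ℝ) := {w | ∀ x, if u0 x = 1 then w x ≤ 0 else 0 ≤ w x} with hC
    set Δ : Set (Fin N → ℝ) := {w ∈ C | s ⬝ᵥ w = 1} with hΔ
    set K : Submodule ℝ (Fin N → ℝ) := LinearMap.ker (Matrix.mulVecLin A) with hK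
    -- Claim 1: the kernel meets the cone only at 0
    have claim1 : ∀ w ∈ C, A.mulVec w = 0 → w = 0 := by
      intro w hw hker
      set M : ℝ := 1 + ∑ x, |w x| with hM
      have hMpos : 0 < M := by positivity
      have habs : ∀ x, |w x| ≤ M - 1 := by
        intro x
        have := Finset.single_le_sum (f := fun x => |w x|)
          (fun i _ => abs_nonneg _) (Finset.mem_univ x)
        simp [hM]; linarith
      set u : Fin N → ℝ := u0 + M⁻¹ • w with hu
      have hmul : A.mulVec u = A.mulVec u0 := by
        rw [hu, Matrix.mulVec_add, Matrix.mulVec_smul, hker]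
        simp
      have hbox : ∀ x, 0 ≤ u x ∧ u x ≤ 1 := by
        intro x
        have hax := habs x
        have haxl := abs_le.mp hax
        have hux : u x = u0 x + M⁻¹ * w x := by simp [hu]
        have hMinv : 0 < M⁻¹ := by positivity
        have hMM : M⁻¹ * M = 1 := inv_mul_cancel₀ (ne_of_gt hMpos)
        rcases hbin x with h0 | h1
        · have hwx : 0 ≤ w x := by
            have := hw x
            rw [if_neg (by rw [h0]; norm_num)] at this
            exact this
          constructor
          · rw [hux, h0]; positivity
          · rw [hux, h0]
            have : M⁻¹ * w x ≤ M⁻¹ * M := by nlinarith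
            linarith [hMM ▸ this]
        · have hwx : w x ≤ 0 := by
            have := hw x
            rwa [if_pos h1] at this
          constructor
          · rw [hux, h1]
            have : M⁻¹ * (-M) ≤ M⁻¹ * w x := by nlinarith
            nlinarith
          · rw [hux, h1]; nlinarith
      have := huniq u hmul hbox
      have hz : M⁻¹ • w = 0 := by
        have := congrArg (fun f => f - u0) this
        simpa [hu] using this
      have : w = 0 := by
        have := congrArg (fun f => M • f) hz
        simpa [smul_smul, mul_inv_cancel₀ (ne_of_gt hMpos)] using this
      exact this
    -- Δ is compact and convex, K is closed convex, and they are disjoint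
    have hΔconv : Convex ℝ Δ := by
      intro w1 hw1 w2 hw2 a b ha hb hab
      constructor
      · intro x
        have h1 := hw1.1 x
        have h2 := hw2.1 x
        by_cases h : u0 x = 1
        · rw [if_pos h] at h1 h2 ⊢
          have : (a • w1 + b • w2) x = a * w1 x + b * w2 x := by
            simp [smul_eq_mul]
          rw [this]; nlinarith
        · rw [if_neg h] at h1 h2 ⊢
          have : (a • w1 + b • w2) x = a * w1 x + b * w2 x := by
            simp [smul_eq_mul]
          rw [this]; positivity
      · have h1 := hw1.2
        have h2 := hw2.2
        rw [dotProduct_add, dotProduct_smul, dotProduct_smul, h1, h2]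
        simp [hab]
    have hΔcomp : IsCompact Δ := by
      apply Metric.isCompact_of_isClosed_isBounded
      · -- closed
        have h1 : IsClosed {w : Fin N → ℝ | s ⬝ᵥ w = 1} := by
          apply isClosed_eq _ continuous_const
          exact continuous_finset_sum _ fun x _ => continuous_const.mul (continuous_apply x)
        have h2 : IsClosed C := by
          rw [hC]
          have : {w : Fin N → ℝ | ∀ x, if u0 x = 1 then w x ≤ 0 else 0 ≤ w x}
              = ⋂ x, {w : Fin N → ℝ | if u0 x = 1 then w x ≤ 0 else 0 ≤ w x} := by
            ext w; simp
          rw [this]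
          apply isClosed_iInter
          intro x
          by_cases h : u0 x = 1
          · simp only [if_pos h]
            exact isClosed_le (continuous_apply x) continuous_const
          · simp only [if_neg h]
            exact isClosed_le continuous_const (continuous_apply x)
        exact h2.inter h1
      · -- bounded
        apply (Metric.isBounded_closedBall (x := (0 : Fin N → ℝ)) (r := 1)).subset
        intro w hw
        simp only [Metric.mem_closedBall, dist_zero_right]
        have hterm : ∀ x, s x * w x = |w x| := by
          intro x
          have h1 := hw.1 x
          by_cases h : u0 x = 1
          · rw [if_pos h] at h1
            rw [hs]; simp only [if_pos h]
            rw [abs_of_nonpos h1]; ring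
          · rw [if_neg h] at h1
            rw [hs]; simp only [if_neg h]
            rw [abs_of_nonneg h1]; ring
        have hsum : ∑ x, |w x| = 1 := by
          have := hw.2
          rw [dotProduct] at this
          rw [← this]
          exact Finset.sum_congr rfl fun x _ => (hterm x).symm
        have : ∀ x, |w x| ≤ 1 := by
          intro x
          have := Finset.single_le_sum (f := fun x => |w x|)
            (fun i _ => abs_nonneg _) (Finset.mem_univ x)
          linarith [hsum ▸ this]
        exact pi_norm_le_iff_of_nonneg zero_le_one |>.mpr fun x => by
          simpa [Real.norm_eq_abs] using this x
    have hKclosed : IsClosed (K : Set (Fin N → ℝ)) := Submodule.closed_of_finiteDimensional K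
    have hKconv : Convex ℝ (K : Set (Fin N → ℝ)) := K.convex
    have hdisj : Disjoint Δ (K : Set (Fin N → ℝ)) := by
      rw [Set.disjoint_left]
      rintro w ⟨hwC, hws⟩ hwK
      have hker : A.mulVec w = 0 := hwK
      have := claim1 w hwC hker
      rw [this] at hws
      simp at hws
    -- separation
    obtain ⟨f, c1, c2, hf1, hc, hf2⟩ :=
      geometric_hahn_banach_compact_closed hΔconv hΔcomp hKconv hKclosed hdisj
    -- f vanishes on K, hence c2 < 0
    have hfK : ∀ w ∈ K, f w = 0 := by
      intro w hw
      by_contra hne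
      have hmem : ((c2 - 1) / f w) • w ∈ K := K.smul_mem _ hw
      have := hf2 _ hmem
      rw [f.map_smul, smul_eq_mul, div_mul_cancel₀ _ hne] at this
      linarith
    have hc2 : c2 < 0 := by
      have := hf2 0 (K.zero_mem)
      rw [map_zero] at this
      linarith
    -- f is negative on Δ
    have hfneg : ∀ w ∈ Δ, f w < 0 := fun w hw => by linarith [hf1 w hw]
    -- the representing vector
    set v : Fin N → ℝ := fun x => -(f (Pi.single x 1)) with hvdef
    have hrep : ∀ w, f w = -(v ⬝ᵥ w) := by
      intro w
      have := LinearMap.pi_apply_eq_sum_univ (f : (Fin N → ℝ) →ₗ[ℝ] ℝ) w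
      simp only [ContinuousLinearMap.coe_coe] at this
      rw [this, dotProduct]
      rw [← Finset.sum_neg_distrib]
      apply Finset.sum_congr rfl
      intro x _
      have hsing : (fun j => if x = j then (1:ℝ) else 0) = Pi.single x 1 := by
        funext j
        simp [Pi.single_apply, eq_comm]
      rw [hsing, hvdef]
      simp [smul_eq_mul]; ring
    -- v is orthogonal to the kernel
    have hperp : ∀ w, A.mulVec w = 0 → v ⬝ᵥ w = 0 := by
      intro w hw
      have hwK : w ∈ K := hw
      have := hfK w hwK
      rw [hrep w] at this
      linarith
    obtain ⟨η, hη⟩ := mem_range_transpose_of_perp_ker A v hperp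
    refine ⟨η, ?_, ?_⟩
    · intro x hx
      rw [hη]
      -- test vector -(Pi.single x 1) ∈ Δ
      have hmem : -(Pi.single x (1:ℝ)) ∈ Δ := by
        constructor
        · intro j
          by_cases hj : j = x
          · subst hj
            rw [if_pos hx]
            simp
          · have : (-(Pi.single x (1:ℝ)) : Fin N → ℝ) j = 0 := by
              simp [Pi.single_apply, hj]
            rw [this]
            split <;> simp
        · rw [dotProduct_neg, dotProduct_single]
          rw [hs]; simp [hx]
      have := hfneg _ hmem
      rw [map_neg] at this
      have hvx : 0 < f (Pi.single x 1) := by linarith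
      simp only [hvdef]
      linarith
    · intro x hx
      rw [hη]
      have hx1 : u0 x ≠ 1 := by rw [hx]; norm_num
      have hmem : (Pi.single x (1:ℝ)) ∈ Δ := by
        constructor
        · intro j
          by_cases hj : j = x
          · subst hj
            rw [if_neg hx1]
            simp
          · have : ((Pi.single x (1:ℝ) : Fin N → ℝ)) j = 0 := by
              simp [Pi.single_apply, hj]
            rw [this]
            split <;> simp
        · rw [dotProduct_single]
          rw [hs]; simp [hx1]
      have := hfneg _ hmem
      simp only [hvdef]
      linarith
end

section
/- (Gordan–Stiemke alternative.) For any real m×n matrix A, exactly one of the following two statements holds: (1) there exists v ∈ ℝ^n with v ≥ 0 componentwise, v ≠ 0, and A v = 0; (2) there exists η ∈ ℝ^m such that every component of Aᵀη is strictly positive. -/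
open Finset

/-- Incompatibility: problems (1) and (2) cannot both be feasible. -/
lemma gordan_not_both (m n : ℕ) (A : Matrix (Fin m) (Fin n) ℝ)
    (h1 : ∃ v : Fin n → ℝ, (∀ x, 0 ≤ v x) ∧ v ≠ 0 ∧ A.mulVec v = 0)
    (h2 : ∃ η : Fin m → ℝ, ∀ x, 0 < A.transpose.mulVec η x) : False := by
  obtain ⟨v, hv0, hvne, hAv⟩ := h1
  obtain ⟨η, hη⟩ := h2
  have hdot : dotProduct (A.transpose.mulVec η) v = 0 := by
    rw [Matrix.mulVec_transpose, ← Matrix.dotProduct_mulVec, hAv, dotProduct_zero]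
  obtain ⟨j, hj⟩ : ∃ j, 0 < v j := by
    by_contra h
    push_neg at h
    exact hvne (funext fun j => le_antisymm (h j) (hv0 j))
  have hpos : 0 < dotProduct (A.transpose.mulVec η) v := by
    apply Finset.sum_pos' (fun i _ => mul_nonneg (hη i).le (hv0 i))
    exact ⟨j, Finset.mem_univ j, mul_pos (hη j) hj⟩
  exact absurd hdot hpos.ne'

/-- The Gordan–Stiemke theorem of the alternative: exactly one of the two problems
(1) find a nonzero componentwise-nonnegative `v` with `A v = 0`, and
(2) find `η` with all components of `Aᵀ η` strictly positive, is feasible. -/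
theorem stmt_2 (m n : ℕ) (A : Matrix (Fin m) (Fin n) ℝ) :
    Xor' (∃ v : Fin n → ℝ, (∀ x, 0 ≤ v x) ∧ v ≠ 0 ∧ A.mulVec v = 0)
         (∃ η : Fin m → ℝ, ∀ x, 0 < A.transpose.mulVec η x) := by
  set col : Fin n → (Fin m → ℝ) := fun j i => A i j with hcol
  by_cases h0 : (0 : Fin m → ℝ) ∈ convexHull ℝ (Set.range col)
  · -- case (1) holds
    have h1 : ∃ v : Fin n → ℝ, (∀ x, 0 ≤ v x) ∧ v ≠ 0 ∧ A.mulVec v = 0 := by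
      rw [convexHull_range_eq_exists_affineCombination] at h0
      obtain ⟨s, w, hw0, hw1, hw⟩ := h0
      rw [s.affineCombination_eq_linear_combination col w hw1] at hw
      refine ⟨fun j => if j ∈ s then w j else 0, fun j => ?_, ?_, ?_⟩
      · dsimp only; split
        · exact hw0 _ ‹_›
        · exact le_rfl
      · intro hzero
        have hs : ∑ j ∈ s, w j = 0 := by
          calc ∑ j ∈ s, w j = ∑ j ∈ s, (if j ∈ s then w j else 0) :=
                Finset.sum_congr rfl (fun j hj => by simp [hj])
            _ = ∑ j ∈ s, (0 : ℝ) :=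
                Finset.sum_congr rfl (fun j _ => congrFun hzero j)
            _ = 0 := by simp
        rw [hw1] at hs
        exact one_ne_zero hs
      · funext i
        have hwi := congrFun hw i
        simp only [Finset.sum_apply, Pi.smul_apply, smul_eq_mul, Pi.zero_apply] at hwi
        rw [Matrix.mulVec, Pi.zero_apply]
        calc dotProduct (A i) (fun j => if j ∈ s then w j else 0)
            = ∑ j, (if j ∈ s then A i j * w j else 0) := by
              refine Finset.sum_congr rfl (fun j _ => ?_)
              by_cases hj : j ∈ s <;> simp [dotProduct, hj]
          _ = ∑ j ∈ s, A i j * w j := by rw [Finset.sum_ite_mem, Finset.univ_inter]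
          _ = 0 := by rw [← hwi]; exact Finset.sum_congr rfl fun j _ => mul_comm _ _
    exact Or.inl ⟨h1, fun h2 => gordan_not_both m n A h1 h2⟩
  · -- case (2) holds
    have h2 : ∃ η : Fin m → ℝ, ∀ x, 0 < A.transpose.mulVec η x := by
      have hconv : Convex ℝ (convexHull ℝ (Set.range col)) := convex_convexHull ℝ _
      have hclosed : IsClosed (convexHull ℝ (Set.range col)) :=
        ((Set.finite_range col).isCompact_convexHull ℝ).isClosed
      obtain ⟨f, u, hfu, hub⟩ := geometric_hahn_banach_point_closed hconv hclosed h0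
      have hu : 0 < u := by simpa using hfu
      refine ⟨fun i => f (Pi.single i (1:ℝ)), fun j => ?_⟩
      have hcolj : u < f (col j) := hub _ (subset_convexHull ℝ _ ⟨j, rfl⟩)
      have hf : f (col j) = ∑ i, A i j * f (Pi.single i (1:ℝ)) := by
        have hc : col j = ∑ i, A i j • (Pi.single i (1:ℝ) : Fin m → ℝ) := by
          funext i'
          simp [Finset.sum_apply, Pi.single_apply, hcol]
        rw [hc, map_sum]
        simp [map_smul]
      have hlt : (0:ℝ) < ∑ i, A i j * f (Pi.single i (1:ℝ)) := by
        rw [← hf]; exact hu.trans hcolj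
      simpa [Matrix.mulVec, dotProduct, Matrix.transpose] using hlt
    exact Or.inr ⟨h2, fun h1 => gordan_not_both m n A h1 h2⟩
end

section
/- Let N and d be positive integers with 2d < N. Let u0 : ZMod N → ℝ be a binary signal (u0(x) ∈ {0,1} for all x) whose number of jumps, card{x ∈ ZMod N : u0(x) ≠ u0(x+1)}, is at most 2d. If u : ZMod N → ℝ satisfies 0 ≤ u(x) ≤ 1 for all x and a_k(u) = a_k(u0) for every integer k with |k| ≤ d, then u = u0. -/
open Complex in
lemma sin_formula (z : ℂ) : Complex.sin z = (Complex.exp (z*I) - Complex.exp (-z*I)) * (2*I)⁻¹ := by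
  rw [Complex.sin, mul_inv, Complex.inv_I]; ring

open Complex in
lemma sin_split (α β : ℝ) : ((Real.sin (α - β) : ℝ) : ℂ) =
    (Complex.exp (-(β:ℂ)*I) * (2*I)⁻¹) * Complex.exp ((α:ℂ)*I)
      + (-Complex.exp ((β:ℂ)*I) * (2*I)⁻¹) * Complex.exp (-(α:ℂ)*I) := by
  rw [Complex.ofReal_sin, Complex.ofReal_sub, sin_formula]
  have e1 : ((α:ℂ)-β)*I = (α*I) + (-β*I) := by ring
  have e2 : -((α:ℂ)-β)*I = (-α*I) + (β*I) := by ring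
  rw [e1, e2, Complex.exp_add, Complex.exp_add]
  ring

lemma prod_neg_pos_iff {α : Type*} [DecidableEq α] (s : Finset α) (f : α → ℝ) (h : ∀ i ∈ s, f i < 0) :
    (0 < ∏ i ∈ s, f i ↔ Even s.card) := by
  induction s using Finset.induction_on with
  | empty => simp
  | @insert a s' hx ih =>
    rw [Finset.prod_insert hx, Finset.card_insert_of_notMem hx, Nat.even_add_one]
    have ha : f a < 0 := h a (Finset.mem_insert_self a s')
    have ihh := ih (fun i hi => h i (Finset.mem_insert_of_mem hi))
    constructor
    · intro hpos hev
      have : 0 < ∏ i ∈ s', f i := ihh.2 hev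
      nlinarith
    · intro hnev
      have hprodne : ∏ i ∈ s', f i ≤ 0 := by
        by_contra hc
        exact hnev (ihh.1 (lt_of_not_ge hc))
      have hne : ∏ i ∈ s', f i ≠ 0 :=
        Finset.prod_ne_zero_iff.mpr (fun i hi => ne_of_lt (h i (Finset.mem_insert_of_mem hi)))
      have : ∏ i ∈ s', f i < 0 := lt_of_le_of_ne hprodne hne
      nlinarith

lemma bin_iff {p q r : ℝ} (hp : p = 0 ∨ p = 1) (hq : q = 0 ∨ q = 1) (hr : r = 0 ∨ r = 1)
    (hne : p ≠ q) : (¬ (p = r) ↔ q = r) := by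
  rcases hp with h1 | h1 <;> rcases hq with h2 | h2 <;> rcases hr with h3 | h3 <;>
    subst h1 <;> subst h2 <;> subst h3 <;> revert hne <;> norm_num

/-- Theorem (reconstruction of 1D binary signals from low frequencies): a binary
signal on `ZMod N` with at most `2d` jumps is uniquely determined, among all
`[0,1]`-valued signals, by its Fourier coefficients `a_k` for `|k| ≤ d`. -/
theorem stmt_4 (N d : ℕ) [NeZero N] (hd : 0 < d) (h2d : 2 * d < N)
    (u0 : ZMod N → ℝ) (hbin : ∀ x, u0 x = 0 ∨ u0 x = 1)
    (hjumps : {x : ZMod N | u0 x ≠ u0 (x + 1)}.ncard ≤ 2 * d)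
    (u : ZMod N → ℝ) (hbox : ∀ x, 0 ≤ u x ∧ u x ≤ 1)
    (hfreq : ∀ k : ℤ, |k| ≤ (d : ℤ) →
      (∑ x : ZMod N, (u x : ℂ) *
          Complex.exp (-(2 * Real.pi * Complex.I) * (k : ℂ) * (x.val : ℂ) / (N : ℂ))) =
      (∑ x : ZMod N, (u0 x : ℂ) *
          Complex.exp (-(2 * Real.pi * Complex.I) * (k : ℂ) * (x.val : ℂ) / (N : ℂ)))) :
    u = u0 := by
  classical
  have hN : 0 < N := Nat.pos_of_ne_zero (NeZero.ne N)
  have hNr : (0:ℝ) < N := by exact_mod_cast hN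
  have hπ : 0 < Real.pi := Real.pi_pos
  set J : Finset (ZMod N) := Finset.univ.filter (fun t => u0 t ≠ u0 (t+1)) with hJdef
  have hJcard : J.card ≤ 2*d := by
    have hset : {x : ZMod N | u0 x ≠ u0 (x + 1)} = ↑J := by ext x; simp [hJdef]
    rw [hset, Set.ncard_coe_finset] at hjumps; exact hjumps
  set c : ZMod N → ℝ := fun t => (t.val : ℝ) + 1/2 with hcdef
  set Qr : ZMod N → ℝ := fun x => ∏ t ∈ J, Real.sin (Real.pi * ((x.val:ℝ) - c t) / N) with hQdef
  -- sign of each factor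
  have hfacpos : ∀ x t : ZMod N, t.val < x.val →
      0 < Real.sin (Real.pi * ((x.val:ℝ) - c t) / N) := by
    intro x t h
    have hxv : (x.val:ℝ) < N := by exact_mod_cast ZMod.val_lt x
    have htx : (t.val:ℝ) + 1 ≤ (x.val:ℝ) := by exact_mod_cast h
    have hA : 0 < (x.val:ℝ) - c t := by simp only [hcdef]; linarith
    apply Real.sin_pos_of_pos_of_lt_pi
    · exact div_pos (mul_pos hπ hA) hNr
    · rw [div_lt_iff₀ hNr]
      have h2 : (x.val:ℝ) - c t < N := by simp only [hcdef]; linarith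
      nlinarith
  have hfacneg : ∀ x t : ZMod N, x.val ≤ t.val →
      Real.sin (Real.pi * ((x.val:ℝ) - c t) / N) < 0 := by
    intro x t h
    have htv : (t.val:ℝ) < N := by exact_mod_cast ZMod.val_lt t
    have hxt : (x.val:ℝ) ≤ (t.val:ℝ) := by exact_mod_cast h
    have hx0 : (0:ℝ) ≤ (x.val:ℝ) := by positivity
    have hA : (x.val:ℝ) - c t < 0 := by simp only [hcdef]; linarith
    have htv1 : (t.val:ℝ) + 1 ≤ N := by exact_mod_cast Nat.succ_le_of_lt (ZMod.val_lt t)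
    have hA2 : (-(N:ℝ)) < (x.val:ℝ) - c t := by simp only [hcdef]; linarith
    have key : 0 < Real.sin (-(Real.pi * ((x.val:ℝ) - c t) / N)) := by
      apply Real.sin_pos_of_pos_of_lt_pi
      · have : -(Real.pi * ((x.val:ℝ) - c t) / N) = Real.pi * (c t - (x.val:ℝ)) / N := by ring
        rw [this]
        have : 0 < c t - (x.val:ℝ) := by linarith
        exact div_pos (mul_pos hπ this) hNr
      · have heq : -(Real.pi * ((x.val:ℝ) - c t) / N) = Real.pi * (c t - (x.val:ℝ)) / N := by ring
        rw [heq, div_lt_iff₀ hNr]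
        have : c t - (x.val:ℝ) < N := by linarith
        nlinarith
    rw [Real.sin_neg] at key
    linarith
  -- sign of Qr
  have hQne : ∀ x : ZMod N, Qr x ≠ 0 := by
    intro x
    refine Finset.prod_ne_zero_iff.mpr (fun t ht => ?_)
    rcases lt_or_ge t.val x.val with h | h
    · exact ne_of_gt (hfacpos x t h)
    · exact ne_of_lt (hfacneg x t h)
  have hQpos_iff : ∀ x : ZMod N,
      (0 < Qr x ↔ Even ((J.filter (fun t => x.val ≤ t.val)).card)) := by
    intro x
    have hsplit : Qr x = (∏ t ∈ J.filter (fun t => t.val < x.val),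
          Real.sin (Real.pi * ((x.val:ℝ) - c t) / N)) *
        ∏ t ∈ J.filter (fun t => ¬ t.val < x.val),
          Real.sin (Real.pi * ((x.val:ℝ) - c t) / N) :=
      (Finset.prod_filter_mul_prod_filter_not J _ _).symm
    have hP1 : 0 < ∏ t ∈ J.filter (fun t => t.val < x.val),
        Real.sin (Real.pi * ((x.val:ℝ) - c t) / N) :=
      Finset.prod_pos (fun t ht => hfacpos x t (Finset.mem_filter.mp ht).2)
    have hnegall : ∀ t ∈ J.filter (fun t => ¬ t.val < x.val),
        Real.sin (Real.pi * ((x.val:ℝ) - c t) / N) < 0 :=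
      fun t ht => hfacneg x t (Nat.not_lt.mp (Finset.mem_filter.mp ht).2)
    have hP2iff := prod_neg_pos_iff _ _ hnegall
    have hconv : J.filter (fun t => x.val ≤ t.val) = J.filter (fun t => ¬ t.val < x.val) := by
      apply Finset.filter_congr; intro t _; simp [Nat.not_lt]
    rw [hconv, ← hP2iff, hsplit]
    constructor
    · intro h
      by_contra hc
      have hne : ∏ t ∈ J.filter (fun t => ¬ t.val < x.val),
          Real.sin (Real.pi * ((x.val:ℝ) - c t) / N) ≠ 0 :=
        Finset.prod_ne_zero_iff.mpr (fun t ht => ne_of_lt (hnegall t ht))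
      have hlt : ∏ t ∈ J.filter (fun t => ¬ t.val < x.val),
          Real.sin (Real.pi * ((x.val:ℝ) - c t) / N) < 0 :=
        lt_of_le_of_ne (not_lt.mp hc) hne
      nlinarith
    · intro h; exact mul_pos hP1 h
  -- parity of jump count vs value of u0
  have hpar : ∀ j : ℕ, j ≤ N →
      (Even ((J.filter (fun t => t.val < j)).card) ↔ u0 ((j:ZMod N)) = u0 0) := by
    intro j
    induction j with
    | zero => intro _; simp
    | succ j ih =>
      intro hj
      have hjN : j < N := hj
      have ihh := ih (le_of_lt hjN)
      have hvalj : ((j:ZMod N)).val = j := ZMod.val_cast_of_lt hjN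
      have hiffval : ∀ t : ZMod N, t.val = j ↔ t = (j:ZMod N) := by
        intro t
        constructor
        · intro h
          have h1 : ((t.val : ℕ) : ZMod N) = t := by
            simp [ZMod.natCast_val, ZMod.cast_id]
          rw [← h1, h]
        · intro h; rw [h, hvalj]
      have hsplit : J.filter (fun t => t.val < j+1)
          = J.filter (fun t => t.val < j) ∪ J.filter (fun t => t.val = j) := by
        rw [← Finset.filter_or]
        apply Finset.filter_congr; intro t _
        simp [Nat.lt_succ_iff_lt_or_eq]; omega
      have hdisj : Disjoint (J.filter (fun t => t.val < j)) (J.filter (fun t => t.val = j)) := by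
        rw [Finset.disjoint_left]
        intro t h1 h2
        have := (Finset.mem_filter.mp h1).2
        have := (Finset.mem_filter.mp h2).2
        omega
      have heqf : J.filter (fun t => t.val = j) = J.filter (fun t => t = (j:ZMod N)) := by
        apply Finset.filter_congr; intro t _; simp [hiffval t]
      have hcard : (J.filter (fun t => t.val < j+1)).card
          = (J.filter (fun t => t.val < j)).card + (if (j:ZMod N) ∈ J then 1 else 0) := by
        rw [hsplit, Finset.card_union_of_disjoint hdisj, heqf, Finset.filter_eq']
        split <;> simp
      have hmem : (j:ZMod N) ∈ J ↔ u0 (j:ZMod N) ≠ u0 ((j:ZMod N)+1) := by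
        simp [hJdef]
      have hc1 : (((j+1:ℕ)):ZMod N) = (j:ZMod N)+1 := by push_cast; ring
      rw [hcard, hc1]
      by_cases hmemJ : (j:ZMod N) ∈ J
      · simp only [hmemJ, if_true]
        rw [Nat.even_add_one, ihh]
        exact bin_iff (hbin _) (hbin _) (hbin 0) (hmem.mp hmemJ)
      · simp only [hmemJ, if_false, add_zero]
        have heq : u0 (j:ZMod N) = u0 ((j:ZMod N)+1) := by
          by_contra h; exact hmemJ (hmem.mpr h)
        rw [ihh, heq]
  have hJeven : Even J.card := by
    have h := hpar N le_rfl
    have hfil : J.filter (fun t => t.val < N) = J :=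
      Finset.filter_true_of_mem (fun t _ => ZMod.val_lt t)
    rw [hfil] at h
    exact h.mpr (by rw [ZMod.natCast_self])
  have heven_iff : ∀ x : ZMod N,
      (Even ((J.filter (fun t => x.val ≤ t.val)).card) ↔ u0 x = u0 0) := by
    intro x
    have hplus : (J.filter (fun t => t.val < x.val)).card
        + (J.filter (fun t => ¬ t.val < x.val)).card = J.card :=
      Finset.card_filter_add_card_filter_not _
    have hxx : ((x.val : ℕ) : ZMod N) = x := by simp [ZMod.natCast_val, ZMod.cast_id]
    have h1 := hpar x.val (le_of_lt (ZMod.val_lt x))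
    rw [hxx] at h1
    have hconv : J.filter (fun t => x.val ≤ t.val) = J.filter (fun t => ¬ t.val < x.val) := by
      apply Finset.filter_congr; intro t _; simp [Nat.not_lt]
    rw [hconv]
    have h2 : (Even ((J.filter (fun t => t.val < x.val)).card)
        ↔ Even ((J.filter (fun t => ¬ t.val < x.val)).card)) := by
      rw [← hplus] at hJeven
      exact Nat.even_add.mp hJeven
    exact (h2.symm.trans h1)
  have hsign : ∀ x : ZMod N, (u0 x = u0 0 → 0 < Qr x) ∧ (u0 x ≠ u0 0 → Qr x < 0) := by
    intro x
    constructor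
    · intro h; exact (hQpos_iff x).mpr ((heven_iff x).mpr h)
    · intro h
      have hnp : ¬ (0 < Qr x) := fun hc => h ((heven_iff x).mp ((hQpos_iff x).mp hc))
      exact lt_of_le_of_ne (not_lt.mp hnp) (hQne x)
  -- the difference signal
  set v : ZMod N → ℝ := fun x => u x - u0 x with hvdef
  have hva : ∀ k : ℤ, |k| ≤ (d:ℤ) →
      ∑ x : ZMod N, (v x : ℂ) *
        Complex.exp (-(2 * Real.pi * Complex.I) * (k : ℂ) * (x.val : ℂ) / (N : ℂ)) = 0 := by
    intro k hk
    have h := hfreq k hk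
    have hsum : ∑ x : ZMod N, (v x : ℂ) *
        Complex.exp (-(2 * Real.pi * Complex.I) * (k : ℂ) * (x.val : ℂ) / (N : ℂ))
        = (∑ x : ZMod N, (u x : ℂ) *
            Complex.exp (-(2 * Real.pi * Complex.I) * (k : ℂ) * (x.val : ℂ) / (N : ℂ)))
          - ∑ x : ZMod N, (u0 x : ℂ) *
            Complex.exp (-(2 * Real.pi * Complex.I) * (k : ℂ) * (x.val : ℂ) / (N : ℂ)) := by
      rw [← Finset.sum_sub_distrib]
      apply Finset.sum_congr rfl; intro x _
      have : ((v x : ℝ) : ℂ) = (u x : ℂ) - (u0 x : ℂ) := by rw [hvdef]; push_cast; ring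
      rw [this]; ring
    rw [hsum, h, sub_self]
  have hS : ∀ k : ℤ, Even k → |k| ≤ 2*(d:ℤ) →
      ∑ x : ZMod N, (v x : ℂ) *
        Complex.exp ((k:ℂ) * (↑Real.pi * Complex.I * (x.val:ℂ) / (N:ℂ))) = 0 := by
    intro k hk hkd
    obtain ⟨m, hm⟩ := hk
    have habs : |m| ≤ (d:ℤ) := by
      rw [hm, show m+m = 2*m by ring, abs_mul] at hkd
      simp only [abs_two] at hkd
      linarith
    have h := hva (-m) (by rwa [abs_neg])
    rw [← h]
    apply Finset.sum_congr rfl; intro x _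
    have : ((k:ℂ)) * (↑Real.pi * Complex.I * (x.val:ℂ) / (N:ℂ))
        = -(2 * Real.pi * Complex.I) * ((-m : ℤ) : ℂ) * (x.val : ℂ) / (N : ℂ) := by
      rw [hm]; push_cast; ring
    rw [this]
  -- expansion of Qr into low frequencies
  set E : ZMod N → ℂ := fun x => Complex.exp (↑Real.pi * Complex.I * (x.val:ℂ) / (N:ℂ)) with hEdef
  set a : ZMod N → ℂ :=
    fun t => Complex.exp (-(↑(Real.pi * c t / N):ℂ) * Complex.I) * (2*Complex.I)⁻¹ with hadef
  set b : ZMod N → ℂ :=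
    fun t => -Complex.exp ((↑(Real.pi * c t / N):ℂ) * Complex.I) * (2*Complex.I)⁻¹ with hbdef
  have hfactor : ∀ x t : ZMod N,
      ((Real.sin (Real.pi * ((x.val:ℝ) - c t) / N) : ℝ) : ℂ)
        = a t * E x + b t * (E x)⁻¹ := by
    intro x t
    have harg : Real.pi * ((x.val:ℝ) - c t) / N
        = (Real.pi * (x.val:ℝ) / N) - (Real.pi * c t / N) := by ring
    rw [harg, sin_split]
    have hEeq : E x = Complex.exp ((↑(Real.pi * (x.val:ℝ) / N) : ℂ) * Complex.I) := by
      simp only [hEdef]; congr 1; push_cast; ring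
    have hEinv : (E x)⁻¹ = Complex.exp (-(↑(Real.pi * (x.val:ℝ) / N) : ℂ) * Complex.I) := by
      rw [hEeq, show (-(↑(Real.pi * (x.val:ℝ) / N) : ℂ)) * Complex.I
        = -((↑(Real.pi * (x.val:ℝ) / N) : ℂ) * Complex.I) by ring, Complex.exp_neg]
    rw [hEinv, hEeq]
  have hQrC : ∀ x : ZMod N, ((Qr x : ℝ) : ℂ)
      = ∑ T ∈ J.powerset, ((∏ t ∈ T, a t) * (∏ t ∈ J \ T, b t))
          * Complex.exp ((((2*(T.card:ℤ) - (J.card:ℤ)) : ℤ) : ℂ)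
            * (↑Real.pi * Complex.I * (x.val:ℂ) / (N:ℂ))) := by
    intro x
    have hE : E x ≠ 0 := Complex.exp_ne_zero _
    have step1 : ((Qr x : ℝ) : ℂ) = ∏ t ∈ J, (a t * E x + b t * (E x)⁻¹) := by
      simp only [hQdef]
      rw [Complex.ofReal_prod]
      exact Finset.prod_congr rfl (fun t _ => hfactor x t)
    rw [step1, Finset.prod_add]
    apply Finset.sum_congr rfl; intro T hT
    have hTsub : T ⊆ J := Finset.mem_powerset.mp hT
    have h1 : ∏ t ∈ T, (a t * E x) = (∏ t ∈ T, a t) * E x ^ T.card := by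
      rw [Finset.prod_mul_distrib, Finset.prod_const]
    have h2 : ∏ t ∈ J \ T, (b t * (E x)⁻¹)
        = (∏ t ∈ J \ T, b t) * ((E x)⁻¹) ^ (J.card - T.card) := by
      rw [Finset.prod_mul_distrib, Finset.prod_const, Finset.card_sdiff_of_subset hTsub]
    rw [h1, h2, mul_mul_mul_comm]
    have hzp : E x ^ T.card * ((E x)⁻¹) ^ (J.card - T.card)
        = Complex.exp ((((2*(T.card:ℤ) - (J.card:ℤ)) : ℤ) : ℂ)
            * (↑Real.pi * Complex.I * (x.val:ℂ) / (N:ℂ))) := by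
      rw [inv_pow, ← zpow_natCast (E x) T.card, ← zpow_natCast (E x) (J.card - T.card),
        ← zpow_neg, ← zpow_add₀ hE]
      have hexp : (T.card : ℤ) + -(((J.card - T.card : ℕ)) : ℤ) = 2*(T.card:ℤ) - (J.card:ℤ) := by
        have := Finset.card_le_card hTsub
        omega
      rw [hexp, ← Complex.exp_int_mul]
    rw [hzp]
  -- the orthogonality sum
  have hsum0C : ∑ x : ZMod N, (v x : ℂ) * ((Qr x : ℝ) : ℂ) = 0 := by
    have step : ∑ x : ZMod N, (v x : ℂ) * ((Qr x : ℝ) : ℂ)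
        = ∑ T ∈ J.powerset, ((∏ t ∈ T, a t) * (∏ t ∈ J \ T, b t))
            * ∑ x : ZMod N, (v x : ℂ) * Complex.exp ((((2*(T.card:ℤ) - (J.card:ℤ)) : ℤ) : ℂ)
                * (↑Real.pi * Complex.I * (x.val:ℂ) / (N:ℂ))) := by
      calc ∑ x : ZMod N, (v x : ℂ) * ((Qr x : ℝ) : ℂ)
          = ∑ x : ZMod N, ∑ T ∈ J.powerset, (v x : ℂ) *
              (((∏ t ∈ T, a t) * (∏ t ∈ J \ T, b t))
                * Complex.exp ((((2*(T.card:ℤ) - (J.card:ℤ)) : ℤ) : ℂ)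
                  * (↑Real.pi * Complex.I * (x.val:ℂ) / (N:ℂ)))) := by
            refine Finset.sum_congr rfl fun x _ => ?_
            rw [hQrC x, Finset.mul_sum]
        _ = ∑ T ∈ J.powerset, ∑ x : ZMod N, (v x : ℂ) *
              (((∏ t ∈ T, a t) * (∏ t ∈ J \ T, b t))
                * Complex.exp ((((2*(T.card:ℤ) - (J.card:ℤ)) : ℤ) : ℂ)
                  * (↑Real.pi * Complex.I * (x.val:ℂ) / (N:ℂ)))) := Finset.sum_comm
        _ = _ := by
            refine Finset.sum_congr rfl fun T _ => ?_
            rw [Finset.mul_sum]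
            exact Finset.sum_congr rfl fun x _ => by ring
    rw [step]
    apply Finset.sum_eq_zero
    intro T hT
    have hTsub : T ⊆ J := Finset.mem_powerset.mp hT
    have hTle := Finset.card_le_card hTsub
    obtain ⟨m, hm⟩ := hJeven
    have hev : Even (2*(T.card:ℤ) - (J.card:ℤ)) := ⟨(T.card:ℤ) - m, by omega⟩
    have habs : |2*(T.card:ℤ) - (J.card:ℤ)| ≤ 2*(d:ℤ) := by
      rw [abs_le]; omega
    rw [hS _ hev habs, mul_zero]
  -- real orthogonality
  have hsum0 : ∑ x : ZMod N, v x * Qr x = 0 := by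
    have hcast : ((∑ x : ZMod N, v x * Qr x : ℝ) : ℂ)
        = ∑ x : ZMod N, (v x : ℂ) * ((Qr x : ℝ) : ℂ) := by push_cast; rfl
    have := hcast.trans hsum0C
    exact_mod_cast this
  -- pointwise conclusion
  have hterm : ∀ x : ZMod N, v x * Qr x = 0 := by
    rcases hbin 0 with h0 | h0
    · have hnn : ∀ x ∈ (Finset.univ : Finset (ZMod N)), 0 ≤ v x * Qr x := by
        intro x _
        rcases hbin x with hx | hx
        · have hq := (hsign x).1 (by rw [hx, h0])
          have hv : 0 ≤ v x := by simp only [hvdef]; rw [hx]; simpa using (hbox x).1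
          exact mul_nonneg hv (le_of_lt hq)
        · have hq := (hsign x).2 (by rw [hx, h0]; norm_num)
          have hv : v x ≤ 0 := by simp only [hvdef]; rw [hx]; linarith [(hbox x).2]
          nlinarith [hv, hq]
      intro x
      exact (Finset.sum_eq_zero_iff_of_nonneg hnn).mp hsum0 x (Finset.mem_univ x)
    · have hnp : ∀ x ∈ (Finset.univ : Finset (ZMod N)), v x * Qr x ≤ 0 := by
        intro x _
        rcases hbin x with hx | hx
        · have hq := (hsign x).2 (by rw [hx, h0]; norm_num)
          have hv : 0 ≤ v x := by simp only [hvdef]; rw [hx]; simpa using (hbox x).1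
          nlinarith [hv, hq]
        · have hq := (hsign x).1 (by rw [hx, h0])
          have hv : v x ≤ 0 := by simp only [hvdef]; rw [hx]; linarith [(hbox x).2]
          nlinarith [hv, hq]
      intro x
      exact (Finset.sum_eq_zero_iff_of_nonpos hnp).mp hsum0 x (Finset.mem_univ x)
  funext x
  have h := hterm x
  rcases mul_eq_zero.mp h with hv | hq
  · have : u x - u0 x = 0 := hv
    linarith
  · exact absurd hq (hQne x)
end

section
/- (Optimality of the low-frequency count.) Let N and d be positive integers with 2d < N, and let u0 : ZMod N → ℝ be a binary signal (u0(x) ∈ {0,1} for all x) with exactly 2d jumps, i.e. card{x ∈ ZMod N : u0(x) ≠ u0(x+1)} = 2d. Then there exists u : ZMod N → ℝ with 0 ≤ u(x) ≤ 1 for all x, u ≠ u0, and a_k(u) = a_k(u0) for every integer k with |k| ≤ d − 1. In other words, the measurements a_k for |k| ≤ d − 1 do not determine u0 among [0,1]-valued signals. -/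
open Complex Finset Polynomial

noncomputable def Qfun (d : ℕ) (γ : Fin d → ℂ) (ϑ : ℝ) : ℝ :=
  ∑ k : Fin d, (γ k * Complex.exp (-((k : ℕ) : ℂ) * Complex.I * (ϑ : ℂ))).re

lemma Qfun_continuous (d : ℕ) (γ : Fin d → ℂ) : Continuous (Qfun d γ) := by
  unfold Qfun; fun_prop

lemma Qfun_periodic (d : ℕ) (γ : Fin d → ℂ) (ϑ : ℝ) :
    Qfun d γ (ϑ + 2 * Real.pi) = Qfun d γ ϑ := by
  unfold Qfun
  refine Finset.sum_congr rfl fun k _ => ?_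
  congr 1
  have h : (-((k : ℕ) : ℂ) * Complex.I * ((ϑ : ℝ) + 2 * Real.pi : ℝ)) =
      -((k : ℕ) : ℂ) * Complex.I * (ϑ : ℂ) + (-(k : ℕ) : ℤ) * (2 * Real.pi * Complex.I) := by
    push_cast; ring
  rw [h, Complex.exp_add, Complex.exp_int_mul_two_pi_mul_I, mul_one]

lemma Qfun_eval (d : ℕ) (γ : Fin d → ℂ) (ϑ : ℝ) :
    Polynomial.eval (Complex.exp ((ϑ : ℂ) * Complex.I))
      (∑ k : Fin d, (Polynomial.C (γ k) * Polynomial.X ^ (d - 1 - (k : ℕ)) +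
        Polynomial.C ((starRingEnd ℂ) (γ k)) * Polynomial.X ^ (d - 1 + (k : ℕ)))) =
    2 * Complex.exp (((d - 1 : ℕ) : ℂ) * (ϑ : ℂ) * Complex.I) * ((Qfun d γ ϑ : ℝ) : ℂ) := by
  rw [Polynomial.eval_finset_sum]
  unfold Qfun
  rw [Complex.ofReal_sum, Finset.mul_sum]
  refine Finset.sum_congr rfl fun k _ => ?_
  have hk : (k : ℕ) ≤ d - 1 := by have := k.isLt; omega
  have e1 : Complex.exp ((ϑ : ℂ) * Complex.I) ^ (d - 1 - (k : ℕ)) =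
      Complex.exp (((d - 1 : ℕ) : ℂ) * (ϑ : ℂ) * Complex.I) *
        Complex.exp (-((k : ℕ) : ℂ) * Complex.I * (ϑ : ℂ)) := by
    rw [← Complex.exp_nat_mul, ← Complex.exp_add]
    congr 1
    rw [Nat.cast_sub hk]
    ring
  have e2 : Complex.exp ((ϑ : ℂ) * Complex.I) ^ (d - 1 + (k : ℕ)) =
      Complex.exp (((d - 1 : ℕ) : ℂ) * (ϑ : ℂ) * Complex.I) *
        Complex.exp (((k : ℕ) : ℂ) * Complex.I * (ϑ : ℂ)) := by
    rw [← Complex.exp_nat_mul, ← Complex.exp_add]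
    congr 1
    rw [Nat.cast_add]
    ring
  have e4 : (starRingEnd ℂ) (γ k * Complex.exp (-((k : ℕ) : ℂ) * Complex.I * (ϑ : ℂ))) =
      (starRingEnd ℂ) (γ k) * Complex.exp (((k : ℕ) : ℂ) * Complex.I * (ϑ : ℂ)) := by
    rw [map_mul, ← Complex.exp_conj]
    congr 1
    simp [map_mul, Complex.conj_I, Complex.conj_ofReal]
  have e3 : (((γ k * Complex.exp (-((k : ℕ) : ℂ) * Complex.I * (ϑ : ℂ))).re : ℝ) : ℂ) =
      (γ k * Complex.exp (-((k : ℕ) : ℂ) * Complex.I * (ϑ : ℂ)) +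
        (starRingEnd ℂ) (γ k * Complex.exp (-((k : ℕ) : ℂ) * Complex.I * (ϑ : ℂ)))) / 2 := by
    rw [Complex.add_conj]
    push_cast
    ring
  rw [Polynomial.eval_add, Polynomial.eval_mul, Polynomial.eval_mul, Polynomial.eval_C,
    Polynomial.eval_C, Polynomial.eval_pow, Polynomial.eval_pow, Polynomial.eval_X, e1, e2, e3, e4]
  push_cast
  ring

lemma no_alternation (d : ℕ) [NeZero (2 * d)] (γ : Fin d → ℂ) (θ : Fin (2 * d) → ℝ)
    (hmono : StrictMono θ) (hwidth : ∀ j, θ j < θ 0 + 2 * Real.pi)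
    (halt : ∀ j : Fin (2 * d), Qfun d γ (θ j) * Qfun d γ (θ (j + 1)) < 0) : False := by
  set η : Fin (2 * d) → ℝ := fun j => if h : (j : ℕ) + 1 < 2 * d then θ ⟨(j : ℕ) + 1, h⟩
    else θ 0 + 2 * Real.pi with hη
  have hηsucc : ∀ j, Qfun d γ (η j) = Qfun d γ (θ (j + 1)) := by
    intro j
    by_cases h : (j : ℕ) + 1 < 2 * d
    · have heq : (j + 1 : Fin (2 * d)) = ⟨(j : ℕ) + 1, h⟩ := by
        ext; rw [Fin.add_def]; simp [Fin.val_one', Nat.mod_eq_of_lt, h]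
      rw [heq, hη]; simp [h]
    · have hj : (j : ℕ) + 1 = 2 * d := by have := j.isLt; omega
      have heq : (j + 1 : Fin (2 * d)) = 0 := by
        ext; rw [Fin.add_def]; simp [Fin.val_one', hj]
      rw [heq, hη]
      simp only [dif_neg h]
      exact Qfun_periodic d γ (θ 0)
  have hηθ : ∀ j, θ j < η j := by
    intro j
    by_cases h : (j : ℕ) + 1 < 2 * d
    · simp only [hη, dif_pos h]
      exact hmono (by simp [Fin.lt_iff_val_lt_val])
    · simp only [hη, dif_neg h]
      exact hwidth j
  have hηub : ∀ j, η j ≤ θ 0 + 2 * Real.pi := by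
    intro j
    by_cases h : (j : ℕ) + 1 < 2 * d
    · simp only [hη, dif_pos h]
      exact le_of_lt (hwidth _)
    · simp only [hη, dif_neg h]
      exact le_rfl
  have hψex : ∀ j, ∃ ψ ∈ Set.Ioo (θ j) (η j), Qfun d γ ψ = 0 := by
    intro j
    have hs : Qfun d γ (θ j) * Qfun d γ (η j) < 0 := by rw [hηsucc j]; exact halt j
    rcases mul_neg_iff.1 hs with ⟨h1, h2⟩ | ⟨h1, h2⟩
    · obtain ⟨ψ, hmem, hval⟩ := intermediate_value_Ioo' (le_of_lt (hηθ j))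
        (Qfun_continuous d γ).continuousOn ⟨h2, h1⟩
      exact ⟨ψ, hmem, hval⟩
    · obtain ⟨ψ, hmem, hval⟩ := intermediate_value_Ioo (le_of_lt (hηθ j))
        (Qfun_continuous d γ).continuousOn ⟨h1, h2⟩
      exact ⟨ψ, hmem, hval⟩
  choose ψ hψmem hψ0 using hψex
  have hψlb : ∀ j, θ 0 ≤ θ j := fun j => hmono.monotone (Fin.zero_le j)
  have hψmono : ∀ a b : Fin (2 * d), a < b → ψ a < ψ b := by
    intro a b hab
    have h1 : (a : ℕ) + 1 < 2 * d := by
      have := b.isLt; have := Fin.lt_iff_val_lt_val.1 hab; omega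
    have h2 : η a ≤ θ b := by
      simp only [hη, dif_pos h1]
      exact hmono.monotone (by
        simp only [Fin.le_iff_val_le_val]
        exact Fin.lt_iff_val_lt_val.1 hab)
    calc ψ a < η a := (hψmem a).2
    _ ≤ θ b := h2
    _ < ψ b := (hψmem b).1
  have hbounds : ∀ j, θ 0 < ψ j ∧ ψ j < θ 0 + 2 * Real.pi := fun j =>
    ⟨lt_of_le_of_lt (hψlb j) (hψmem j).1, lt_of_lt_of_le (hψmem j).2 (hηub j)⟩
  set z : Fin (2 * d) → ℂ := fun j => Complex.exp ((ψ j : ℂ) * Complex.I) with hz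
  have hzinj : Function.Injective z := by
    have key : ∀ a b : Fin (2 * d), a < b → z a ≠ z b := by
      intro a b hab heq
      rw [hz] at heq
      simp only at heq
      obtain ⟨n, hn⟩ := Complex.exp_eq_exp_iff_exists_int.1 heq
      have him := congrArg Complex.im hn
      simp only [Complex.mul_im, Complex.add_im, Complex.ofReal_re, Complex.ofReal_im,
        Complex.I_re, Complex.I_im, Complex.mul_re, Complex.intCast_re, Complex.intCast_im,
        mul_zero, mul_one, zero_mul, add_zero, zero_add, sub_zero] at him
      norm_num at him
      have h1 : ψ a < ψ b := hψmono a b hab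
      have h2 : ψ b - ψ a < 2 * Real.pi := by
        have := (hbounds a).1; have := (hbounds b).2; linarith
      have hn1 : (n : ℝ) ≤ -1 ∨ (0 : ℝ) ≤ (n : ℝ) := by
        rcases le_or_gt n (-1) with h | h
        · left; exact_mod_cast h
        · right; exact_mod_cast (by omega : (0 : ℤ) ≤ n)
      rcases hn1 with h | h
      · nlinarith [Real.pi_pos]
      · nlinarith [Real.pi_pos]
    intro a b heq
    rcases lt_trichotomy a b with h | h | h
    · exact absurd heq (key a b h)
    · exact h
    · exact absurd heq.symm (key b a h)
  set p : Polynomial ℂ := ∑ k : Fin d, (Polynomial.C (γ k) * Polynomial.X ^ (d - 1 - (k : ℕ)) +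
      Polynomial.C ((starRingEnd ℂ) (γ k)) * Polynomial.X ^ (d - 1 + (k : ℕ))) with hp
  have hd : 0 < d := by
    by_contra h
    have h0 : 2 * d = 0 := by omega
    exact absurd h0 (NeZero.ne (2 * d))
  have hdeg : p.natDegree ≤ 2 * d - 2 := by
    rw [hp]
    refine Polynomial.natDegree_sum_le_of_forall_le _ _ fun k _ => ?_
    refine le_trans (Polynomial.natDegree_add_le _ _) (max_le ?_ ?_)
    · refine le_trans (Polynomial.natDegree_C_mul_le _ _) ?_
      rw [Polynomial.natDegree_X_pow]; omega
    · refine le_trans (Polynomial.natDegree_C_mul_le _ _) ?_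
      rw [Polynomial.natDegree_X_pow]
      have := k.isLt; omega
  have hQθ0 : Qfun d γ (θ 0) ≠ 0 := by
    intro h
    have := halt 0
    rw [h, zero_mul] at this
    exact lt_irrefl 0 this
  have hpne : p ≠ 0 := by
    intro h
    have heq := Qfun_eval d γ (θ 0)
    rw [← hp, h, Polynomial.eval_zero] at heq
    have h2 := heq.symm
    simp only [mul_eq_zero, Complex.exp_ne_zero, or_false, false_or,
      Complex.ofReal_eq_zero, OfNat.ofNat_ne_zero] at h2
    exact hQθ0 h2
  have hroots : ∀ j, p.eval (z j) = 0 := by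
    intro j
    have heq := Qfun_eval d γ (ψ j)
    rw [← hp] at heq
    rw [hz]
    simp only
    rw [heq, hψ0]
    simp
  have hsub : Finset.univ.image z ⊆ p.roots.toFinset := by
    intro y hy
    obtain ⟨j, _, rfl⟩ := Finset.mem_image.1 hy
    rw [Multiset.mem_toFinset, Polynomial.mem_roots hpne]
    exact hroots j
  have hcard : (Finset.univ.image z).card = 2 * d := by
    rw [Finset.card_image_of_injective _ hzinj, Finset.card_univ, Fintype.card_fin]
  have hle : 2 * d ≤ 2 * d - 2 := by
    calc 2 * d = (Finset.univ.image z).card := hcard.symm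
    _ ≤ p.roots.toFinset.card := Finset.card_le_card hsub
    _ ≤ Multiset.card p.roots := p.roots.toFinset_card_le
    _ ≤ p.natDegree := p.card_roots'
    _ ≤ 2 * d - 2 := hdeg
  omega

lemma clm_decomp (d : ℕ) (f : (Fin d → ℂ) →L[ℝ] ℝ) :
    ∃ γ : Fin d → ℂ, ∀ w, f w = ∑ k : Fin d, (γ k * w k).re := by
  refine ⟨fun k => ((f (Pi.single k 1) : ℝ) : ℂ) - Complex.I * ((f (Pi.single k Complex.I) : ℝ) : ℂ),
    fun w => ?_⟩
  have hw : w = ∑ k : Fin d, Pi.single k (w k) := by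
    rw [Finset.univ_sum_single]
  rw [hw, map_sum]
  refine Finset.sum_congr rfl fun k _ => ?_
  have hsingle : Pi.single k (w k) = (w k).re • (Pi.single k (1 : ℂ) : Fin d → ℂ) +
      (w k).im • (Pi.single k Complex.I : Fin d → ℂ) := by
    ext l
    by_cases h : l = k
    · subst h
      simp [Complex.real_smul, Complex.re_add_im]
    · simp [Pi.single_apply, h]
  rw [hsingle, map_add, map_smul, map_smul, smul_eq_mul, smul_eq_mul]
  simp [Complex.sub_re, Complex.mul_re, Complex.ofReal_re, Complex.ofReal_im]
  ring

lemma arc_const {N : ℕ} (u0 : ZMod N → ℝ) :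
    ∀ (n : ℕ) (x : ZMod N), (∀ m : ℕ, m < n → u0 (x + (m : ZMod N)) = u0 (x + (m : ZMod N) + 1)) →
      u0 (x + (n : ZMod N)) = u0 x := by
  intro n
  induction n with
  | zero => intro x _; simp
  | succ n ih =>
    intro x h
    have h1 : u0 (x + (n : ZMod N)) = u0 x := ih x (fun m hm => h m (by omega))
    have h2 : u0 (x + (n : ZMod N)) = u0 (x + (n : ZMod N) + 1) := h n (by omega)
    have h3 : (x + ((n + 1 : ℕ) : ZMod N)) = x + (n : ZMod N) + 1 := by push_cast; ring
    rw [h3, ← h2, h1]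

/-- Optimality of the low-frequency count: if a binary signal has exactly `2d` jumps,
then the Fourier coefficients `a_k` for `|k| ≤ d - 1` do not determine it among
`[0,1]`-valued signals. -/
theorem stmt_5 (N d : ℕ) [NeZero N] (hd : 0 < d) (h2d : 2 * d < N)
    (u0 : ZMod N → ℝ) (hbin : ∀ x, u0 x = 0 ∨ u0 x = 1)
    (hjumps : {x : ZMod N | u0 x ≠ u0 (x + 1)}.ncard = 2 * d) :
    ∃ u : ZMod N → ℝ, (∀ x, 0 ≤ u x ∧ u x ≤ 1) ∧ u ≠ u0 ∧
      ∀ k : ℤ, |k| ≤ (d : ℤ) - 1 →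
        (∑ x : ZMod N, (u x : ℂ) *
            Complex.exp (-(2 * Real.pi * Complex.I) * (k : ℂ) * (x.val : ℂ) / (N : ℂ))) =
        (∑ x : ZMod N, (u0 x : ℂ) *
            Complex.exp (-(2 * Real.pi * Complex.I) * (k : ℂ) * (x.val : ℂ) / (N : ℂ))) := by
  classical
  have hNpos : 0 < N := Nat.pos_of_ne_zero (NeZero.ne N)
  haveI : NeZero (2 * d) := ⟨by omega⟩
  set J : Finset (ZMod N) := Finset.univ.filter (fun x => u0 x ≠ u0 (x + 1)) with hJdef
  have hJcard : J.card = 2 * d := by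
    have h := hjumps
    rw [Set.ncard_eq_toFinset_card'] at h
    simpa [hJdef, Set.toFinset_setOf] using h
  set F : Finset ℕ := J.image ZMod.val with hFdef
  have hFcard : F.card = 2 * d := by
    rw [hFdef, Finset.card_image_of_injective _ (ZMod.val_injective N), hJcard]
  set t : Fin (2 * d) → ℕ := fun j => F.orderEmbOfFin hFcard j with htdef
  have htmono : StrictMono t := (F.orderEmbOfFin hFcard).strictMono
  have htmemF : ∀ j, t j ∈ F := fun j => F.orderEmbOfFin_mem hFcard j
  have htltN : ∀ j, t j < N := by
    intro j
    obtain ⟨x, _, hvx⟩ := Finset.mem_image.1 (htmemF j)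
    rw [← hvx]
    exact ZMod.val_lt x
  set pt : Fin (2 * d) → ZMod N := fun j => ((t j : ℕ) : ZMod N) with hptdef
  have hptval : ∀ j, (pt j).val = t j := fun j => ZMod.val_cast_of_lt (htltN j)
  have hptinj : Function.Injective pt := by
    intro a b h
    have h2 : t a = t b := by rw [← hptval a, ← hptval b, h]
    exact htmono.injective h2
  have hptjump : ∀ j, u0 (pt j) ≠ u0 (pt j + 1) := by
    intro j
    obtain ⟨x, hx, hvx⟩ := Finset.mem_image.1 (htmemF j)
    have hxe : pt j = x := by
      show (((t j : ℕ)) : ZMod N) = x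
      rw [← hvx, ZMod.natCast_zmod_val]
    rw [hxe]
    simpa [hJdef] using (Finset.mem_filter.1 hx).2
  have hmemJ : ∀ y : ZMod N, u0 y ≠ u0 (y + 1) → ∃ j, t j = y.val := by
    intro y hy
    have h1 : y ∈ J := Finset.mem_filter.2 ⟨Finset.mem_univ y, hy⟩
    have h2 : y.val ∈ F := Finset.mem_image_of_mem _ h1
    have h3 : y.val ∈ Set.range (F.orderEmbOfFin hFcard) := by
      rw [Finset.range_orderEmbOfFin]
      exact h2
    obtain ⟨j, hj⟩ := h3
    exact ⟨j, hj⟩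
  -- the flip property
  have hflip : ∀ j : Fin (2 * d), u0 (pt (j + 1)) ≠ u0 (pt j) := by
    intro j
    by_cases h : (j : ℕ) + 1 < 2 * d
    · have heq : (j + 1 : Fin (2 * d)) = ⟨(j : ℕ) + 1, h⟩ := by
        ext; rw [Fin.add_def]; simp [Fin.val_one', Nat.mod_eq_of_lt, h]
      have hab : t j < t ⟨(j : ℕ) + 1, h⟩ := htmono (by rw [Fin.lt_def]; exact Nat.lt_succ_self _)
      have harc : u0 (pt j + 1 + ((t ⟨(j : ℕ) + 1, h⟩ - t j - 1 : ℕ) : ZMod N)) = u0 (pt j + 1) := by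
        apply arc_const
        intro m hm
        by_contra hjump
        obtain ⟨i, hi⟩ := hmemJ _ hjump
        have hyval : (pt j + 1 + (m : ZMod N)).val = t j + 1 + m := by
          have hy2 : pt j + 1 + (m : ZMod N) = ((t j + 1 + m : ℕ) : ZMod N) := by
            rw [hptdef]; push_cast; ring
          rw [hy2, ZMod.val_cast_of_lt (by have := htltN ⟨(j : ℕ) + 1, h⟩; omega)]
        rw [hyval] at hi
        have hcase : (i : ℕ) ≤ (j : ℕ) ∨ (j : ℕ) + 1 ≤ (i : ℕ) := by omega
        rcases hcase with hc | hc
        · have : t i ≤ t j := htmono.monotone (by rw [Fin.le_def]; exact hc)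
          omega
        · have : t ⟨(j : ℕ) + 1, h⟩ ≤ t i := htmono.monotone (by rw [Fin.le_def]; exact hc)
          omega
      have hx : pt j + 1 + ((t ⟨(j : ℕ) + 1, h⟩ - t j - 1 : ℕ) : ZMod N) = pt ⟨(j : ℕ) + 1, h⟩ := by
        have h1 : (t j + 1 + (t ⟨(j : ℕ) + 1, h⟩ - t j - 1) : ℕ) = t ⟨(j : ℕ) + 1, h⟩ := by omega
        calc pt j + 1 + ((t ⟨(j : ℕ) + 1, h⟩ - t j - 1 : ℕ) : ZMod N)
            = ((t j + 1 + (t ⟨(j : ℕ) + 1, h⟩ - t j - 1) : ℕ) : ZMod N) := by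
              rw [hptdef]; push_cast; ring
        _ = pt ⟨(j : ℕ) + 1, h⟩ := by rw [h1, hptdef]
      rw [heq, ← hx, harc]
      intro hcon
      exact hptjump j hcon.symm
    · have hj2 : (j : ℕ) + 1 = 2 * d := by have := j.isLt; omega
      have heq : (j + 1 : Fin (2 * d)) = 0 := by
        ext; rw [Fin.add_def]; simp [Fin.val_one', hj2]
      have hab : t 0 < t j := htmono (by rw [Fin.lt_def, Fin.val_zero]; omega)
      have harc : u0 (pt j + 1 + ((t 0 + N - t j - 1 : ℕ) : ZMod N)) = u0 (pt j + 1) := by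
        apply arc_const
        intro m hm
        by_contra hjump
        obtain ⟨i, hi⟩ := hmemJ _ hjump
        have hy2 : pt j + 1 + (m : ZMod N) = ((t j + 1 + m : ℕ) : ZMod N) := by
          rw [hptdef]; push_cast; ring
        have htile : t i ≤ t j := htmono.monotone (by rw [Fin.le_def]; have := i.isLt; omega)
        have htige : t 0 ≤ t i := htmono.monotone (by rw [Fin.le_def, Fin.val_zero]; omega)
        rw [hy2, ZMod.val_natCast] at hi
        have hNj := htltN j
        have hN0 := htltN 0
        by_cases hlt : t j + 1 + m < N
        · rw [Nat.mod_eq_of_lt hlt] at hi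
          omega
        · have hge : N ≤ t j + 1 + m := by omega
          have hmod : (t j + 1 + m) % N = t j + 1 + m - N := by
            rw [Nat.mod_eq_sub_mod hge, Nat.mod_eq_of_lt (by omega)]
          rw [hmod] at hi
          omega
      have hx : pt j + 1 + ((t 0 + N - t j - 1 : ℕ) : ZMod N) = pt 0 := by
        have h1 : (t j + 1 + (t 0 + N - t j - 1) : ℕ) = t 0 + N := by
          have := htltN j; omega
        calc pt j + 1 + ((t 0 + N - t j - 1 : ℕ) : ZMod N)
            = ((t j + 1 + (t 0 + N - t j - 1) : ℕ) : ZMod N) := by rw [hptdef]; push_cast; ring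
        _ = ((t 0 + N : ℕ) : ZMod N) := by rw [h1]
        _ = pt 0 := by rw [hptdef]; push_cast [ZMod.natCast_self]; ring
      rw [heq, ← hx, harc]
      intro hcon
      exact hptjump j hcon.symm
  -- signs
  set sgn : Fin (2 * d) → ℝ := fun j => 1 - 2 * u0 (pt j) with hsgndef
  have hsgn1 : ∀ j, sgn j = 1 ∨ sgn j = -1 := by
    intro j
    rcases hbin (pt j) with h | h
    · left; simp only [hsgndef]; rw [h]; ring
    · right; simp only [hsgndef]; rw [h]; ring
  have hsgnflip : ∀ j, sgn (j + 1) = -sgn j := by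
    intro j
    rcases hbin (pt (j + 1)) with h1 | h1 <;> rcases hbin (pt j) with h2 | h2
    · exact absurd (h1.trans h2.symm) (hflip j)
    · simp only [hsgndef]; rw [h1, h2]; ring
    · simp only [hsgndef]; rw [h1, h2]; ring
    · exact absurd (h1.trans h2.symm) (hflip j)
  -- the vectors
  set bb : Fin (2 * d) → Fin d → ℂ := fun j k => (sgn j : ℂ) *
      Complex.exp (-(2 * (Real.pi : ℂ) * Complex.I) * ((k : ℕ) : ℂ) * ((t j : ℕ) : ℂ) / (N : ℂ))
    with hbbdef
  by_cases h0 : (0 : Fin d → ℂ) ∈ convexHull ℝ (Set.range bb)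
  · -- construct the perturbation
    obtain ⟨ι, _i, w, zz, hw0, hw1, hzz, hsum⟩ := mem_convexHull_iff_exists_fintype.1 h0
    choose g hg using fun i => Set.mem_range.1 (hzz i)
    set c : Fin (2 * d) → ℝ := fun j => ∑ i ∈ Finset.univ.filter (fun i => g i = j), w i with hcdef
    have hc0 : ∀ j, 0 ≤ c j := fun j => Finset.sum_nonneg fun i _ => hw0 i
    have hc1 : ∑ j, c j = 1 := by
      simp only [hcdef]
      rw [Finset.sum_fiberwise]
      exact hw1
    have hcb : ∑ j, c j • bb j = 0 := by
      simp only [hcdef]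
      have step : ∀ j, (∑ i ∈ Finset.univ.filter (fun i => g i = j), w i) • bb j
          = ∑ i ∈ Finset.univ.filter (fun i => g i = j), w i • zz i := by
        intro j
        rw [Finset.sum_smul]
        refine Finset.sum_congr rfl fun i hi => ?_
        have hgi : g i = j := (Finset.mem_filter.1 hi).2
        rw [← hg i, hgi]
      rw [Finset.sum_congr rfl fun j _ => step j, Finset.sum_fiberwise]
      exact hsum
    have hcle : ∀ a, c a ≤ 1 := by
      intro a
      calc c a ≤ ∑ j, c j := Finset.single_le_sum (fun i _ => hc0 i) (Finset.mem_univ a)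
      _ = 1 := hc1
    set v : ZMod N → ℝ := fun x => ∑ j, if x = pt j then c j * sgn j else 0 with hvdef
    have hvpt : ∀ a, v (pt a) = c a * sgn a := by
      intro a
      simp only [hvdef]
      rw [Finset.sum_eq_single a (fun b _ hb => if_neg (fun h => hb (hptinj h).symm))
        (fun h => absurd (Finset.mem_univ a) h)]
      exact if_pos rfl
    have hvne : ∀ x : ZMod N, (∀ j, x ≠ pt j) → v x = 0 := by
      intro x hx
      simp only [hvdef]
      rw [Finset.sum_congr rfl (fun j _ => if_neg (hx j))]
      simp
    refine ⟨fun x => u0 x + v x, ?_, ?_, ?_⟩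
    · intro x
      by_cases hx : ∃ a, x = pt a
      · obtain ⟨a, rfl⟩ := hx
        simp only
        rw [hvpt a]
        have h1 := hc0 a
        have h2 := hcle a
        rcases hbin (pt a) with h | h
        · have hs : sgn a = 1 := by simp only [hsgndef]; rw [h]; ring
          rw [h, hs]
          constructor <;> linarith
        · have hs : sgn a = -1 := by simp only [hsgndef]; rw [h]; ring
          rw [h, hs]
          constructor <;> linarith
      · push_neg at hx
        simp only
        rw [hvne x hx]
        rcases hbin x with h | h <;> rw [h] <;> norm_num
    · obtain ⟨a, ha⟩ : ∃ a, c a ≠ 0 := by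
        by_contra hcon
        push_neg at hcon
        rw [Finset.sum_congr rfl (fun j _ => hcon j)] at hc1
        simp at hc1
      intro hequ
      have h1 := congrFun hequ (pt a)
      rw [hvpt a] at h1
      have h2 : c a * sgn a = 0 := by linarith
      rcases mul_eq_zero.1 h2 with h3 | h3
      · exact ha h3
      · rcases hsgn1 a with hs | hs <;> rw [hs] at h3 <;> norm_num at h3
    · -- moments
      have hSnat : ∀ k : ℕ, k < d →
          (∑ x : ZMod N, ((v x : ℝ) : ℂ) *
            Complex.exp (-(2 * (Real.pi : ℂ) * Complex.I) * ((k : ℕ) : ℂ) * ((x.val : ℕ) : ℂ) / (N : ℂ))) = 0 := by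
        intro k hkd
        have hb := congrFun hcb ⟨k, hkd⟩
        rw [Finset.sum_apply] at hb
        simp only [Pi.smul_apply, Pi.zero_apply] at hb
        have hvx : ∀ x : ZMod N, ((v x : ℝ) : ℂ) =
            ∑ j, if x = pt j then ((c j : ℝ) : ℂ) * ((sgn j : ℝ) : ℂ) else 0 := by
          intro x
          simp only [hvdef]
          rw [Complex.ofReal_sum]
          refine Finset.sum_congr rfl fun j _ => ?_
          split_ifs with h
          · rw [Complex.ofReal_mul]
          · simp
        have hS : (∑ x : ZMod N, ((v x : ℝ) : ℂ) *
            Complex.exp (-(2 * (Real.pi : ℂ) * Complex.I) * ((k : ℕ) : ℂ) * ((x.val : ℕ) : ℂ) / (N : ℂ)))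
            = ∑ j, (c j : ℂ) * ((sgn j : ℂ) *
              Complex.exp (-(2 * (Real.pi : ℂ) * Complex.I) * ((k : ℕ) : ℂ) * ((t j : ℕ) : ℂ) / (N : ℂ))) := by
          calc (∑ x : ZMod N, ((v x : ℝ) : ℂ) *
              Complex.exp (-(2 * (Real.pi : ℂ) * Complex.I) * ((k : ℕ) : ℂ) * ((x.val : ℕ) : ℂ) / (N : ℂ)))
              = ∑ x : ZMod N, ∑ j, (if x = pt j then ((c j : ℝ) : ℂ) * ((sgn j : ℝ) : ℂ) else 0) *
                Complex.exp (-(2 * (Real.pi : ℂ) * Complex.I) * ((k : ℕ) : ℂ) * ((x.val : ℕ) : ℂ) / (N : ℂ)) := by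
                refine Finset.sum_congr rfl fun x _ => ?_
                rw [hvx x, Finset.sum_mul]
          _ = ∑ j, ∑ x : ZMod N, (if x = pt j then ((c j : ℝ) : ℂ) * ((sgn j : ℝ) : ℂ) else 0) *
                Complex.exp (-(2 * (Real.pi : ℂ) * Complex.I) * ((k : ℕ) : ℂ) * ((x.val : ℕ) : ℂ) / (N : ℂ)) :=
                Finset.sum_comm
          _ = ∑ j, (c j : ℂ) * ((sgn j : ℂ) *
              Complex.exp (-(2 * (Real.pi : ℂ) * Complex.I) * ((k : ℕ) : ℂ) * ((t j : ℕ) : ℂ) / (N : ℂ))) := by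
                refine Finset.sum_congr rfl fun j _ => ?_
                rw [Finset.sum_congr rfl (fun x _ => by rw [ite_mul, zero_mul])]
                rw [Finset.sum_ite_eq' Finset.univ (pt j) (fun x => ((c j : ℝ) : ℂ) * ((sgn j : ℝ) : ℂ) *
                  Complex.exp (-(2 * (Real.pi : ℂ) * Complex.I) * ((k : ℕ) : ℂ) * ((x.val : ℕ) : ℂ) / (N : ℂ)))]
                rw [if_pos (Finset.mem_univ _), hptval j, mul_assoc]
        rw [hS]
        calc ∑ j, (c j : ℂ) * ((sgn j : ℂ) *
              Complex.exp (-(2 * (Real.pi : ℂ) * Complex.I) * ((k : ℕ) : ℂ) * ((t j : ℕ) : ℂ) / (N : ℂ)))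
            = ∑ j, c j • bb j ⟨k, hkd⟩ := by
              refine Finset.sum_congr rfl fun j _ => ?_
              simp only [hbbdef, Complex.real_smul]
        _ = 0 := hb
      intro k hk
      simp only [Complex.ofReal_add, add_mul, Finset.sum_add_distrib]
      rw [add_eq_left]
      rcases le_or_gt 0 k with hk0 | hk0
      · have hlt : k.toNat < d := by rw [abs_of_nonneg hk0] at hk; omega
        have hcast : ((k : ℤ) : ℂ) = ((k.toNat : ℕ) : ℂ) := by
          exact_mod_cast congrArg (Int.cast : ℤ → ℂ) (Int.toNat_of_nonneg hk0).symm
        rw [hcast]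
        exact hSnat k.toNat hlt
      · have hlt : (-k).toNat < d := by rw [abs_of_neg hk0] at hk; omega
        have hcast : ((k : ℤ) : ℂ) = -(((-k).toNat : ℕ) : ℂ) := by
          have h2 : (k : ℤ) = -(((-k).toNat : ℕ) : ℤ) := by omega
          exact_mod_cast congrArg (Int.cast : ℤ → ℂ) h2
        rw [hcast]
        have hm := hSnat ((-k).toNat) hlt
        have hconj : (∑ x : ZMod N, ((v x : ℝ) : ℂ) *
            Complex.exp (-(2 * (Real.pi : ℂ) * Complex.I) * (-(((-k).toNat : ℕ) : ℂ)) * ((x.val : ℕ) : ℂ) / (N : ℂ)))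
            = (starRingEnd ℂ) (∑ x : ZMod N, ((v x : ℝ) : ℂ) *
            Complex.exp (-(2 * (Real.pi : ℂ) * Complex.I) * (((-k).toNat : ℕ) : ℂ) * ((x.val : ℕ) : ℂ) / (N : ℂ))) := by
          rw [map_sum]
          refine Finset.sum_congr rfl fun x _ => ?_
          rw [map_mul, Complex.conj_ofReal, ← Complex.exp_conj]
          congr 2
          rw [map_div₀]
          simp only [map_mul, map_neg, Complex.conj_I, Complex.conj_ofReal, map_natCast,
            map_ofNat]
          ring
        rw [hconj, hm, map_zero]
  · -- contradiction via separation
    exfalso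
    have hclosed : IsClosed (convexHull ℝ (Set.range bb)) :=
      ((Set.finite_range bb).isCompact_convexHull ℝ).isClosed
    obtain ⟨f, α, hfα, hα⟩ :=
      geometric_hahn_banach_point_closed (convex_convexHull ℝ _) hclosed h0
    have hf0 : (0 : ℝ) < α := by simpa using hfα
    obtain ⟨γ, hγ⟩ := clm_decomp d f
    set θ : Fin (2 * d) → ℝ := fun j => 2 * Real.pi * (t j) / N with hθdef
    have hN : (0 : ℝ) < N := by exact_mod_cast hNpos
    have hθmono : StrictMono θ := by
      intro a b hab
      simp only [hθdef]
      have h1 : (t a : ℝ) < t b := by exact_mod_cast htmono hab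
      have hpi := Real.pi_pos
      rw [div_lt_div_iff₀ hN hN]
      have := mul_lt_mul_of_pos_right
        (mul_lt_mul_of_pos_left h1 (by linarith : (0:ℝ) < 2 * Real.pi)) hN
      linarith
    have hwidth : ∀ j, θ j < θ 0 + 2 * Real.pi := by
      intro j
      have h1 : (t j : ℝ) < N := by exact_mod_cast htltN j
      have h2 : θ j < 2 * Real.pi := by
        simp only [hθdef]
        rw [div_lt_iff₀ hN]
        nlinarith [Real.pi_pos]
      have h3 : 0 ≤ θ 0 := by
        simp only [hθdef]
        positivity
      linarith
    apply no_alternation d γ θ hθmono hwidth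
    intro j
    have hfb : ∀ i, f (bb i) = sgn i * Qfun d γ (θ i) := by
      intro i
      rw [hγ]
      unfold Qfun
      rw [Finset.mul_sum]
      refine Finset.sum_congr rfl fun k _ => ?_
      have harg : bb i k = (sgn i : ℂ) *
          Complex.exp (-((k : ℕ) : ℂ) * Complex.I * ((θ i : ℝ) : ℂ)) := by
        simp only [hbbdef, hθdef]
        congr 2
        push_cast
        field_simp
      rw [harg, mul_left_comm]
      rw [Complex.re_ofReal_mul]
    have h1 := hα (bb j) (subset_convexHull ℝ _ (Set.mem_range_self j))
    have h2 := hα (bb (j + 1)) (subset_convexHull ℝ _ (Set.mem_range_self (j + 1)))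
    rw [hfb] at h1 h2
    have hs' := hsgnflip j
    rcases hsgn1 j with hs | hs <;> rw [hs] at h1 hs' <;> rw [hs'] at h2 <;> nlinarith
end

section
/- Let N and d be positive integers with 2d ≤ N. Let u0 : {0,1,…,N−1} → ℝ be a binary signal (u0(x) ∈ {0,1} for all x) consisting of at most 2d maximal constant blocks, i.e. card{x : 0 ≤ x ≤ N−2 and u0(x) ≠ u0(x+1)} ≤ 2d − 1. If u : {0,1,…,N−1} → ℝ satisfies 0 ≤ u(x) ≤ 1 for all x and c_k(u) = c_k(u0) for every integer k with 0 ≤ k ≤ 2d, then u = u0. -/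
set_option maxHeartbeats 1000000

open Real Finset

noncomputable def cosSpan (m : ℕ) : Submodule ℝ (ℝ → ℝ) :=
  Submodule.span ℝ {g : ℝ → ℝ | ∃ k ≤ m, g = fun θ => Real.cos (k * θ)}

lemma cosSpan_mono {m m' : ℕ} (h : m ≤ m') : cosSpan m ≤ cosSpan m' :=
  Submodule.span_mono (fun g ⟨k, hk, hg⟩ => ⟨k, hk.trans h, hg⟩)

lemma cos_mem_cosSpan {k m : ℕ} (hk : k ≤ m) :
    (fun θ => Real.cos (k * θ)) ∈ cosSpan m :=
  Submodule.subset_span ⟨k, hk, rfl⟩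

lemma mul_cos_mem {m : ℕ} {f : ℝ → ℝ} (hf : f ∈ cosSpan m) :
    (fun θ => Real.cos θ * f θ) ∈ cosSpan (m + 1) := by
  induction hf using Submodule.span_induction with
  | mem g hg =>
    obtain ⟨k, hk, rfl⟩ := hg
    rcases Nat.eq_zero_or_pos k with rfl | hkpos
    · have : (fun θ => Real.cos θ * Real.cos ((0:ℕ) * θ)) =
        fun θ => Real.cos ((1:ℕ) * θ) := by
        funext θ; simp
      rw [this]; exact cos_mem_cosSpan (by omega)
    · have : (fun θ => Real.cos θ * Real.cos (k * θ)) =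
        (1/2 : ℝ) • (fun θ => Real.cos (((k+1:ℕ):ℝ) * θ)) +
        (1/2 : ℝ) • (fun θ => Real.cos (((k-1:ℕ):ℝ) * θ)) := by
        funext θ
        have h1 : ((k - 1 : ℕ) : ℝ) = (k : ℝ) - 1 := by
          rw [Nat.cast_sub hkpos]; simp
        simp only [Pi.add_apply, Pi.smul_apply, smul_eq_mul]
        rw [h1]
        push_cast
        rw [add_mul, one_mul, sub_mul, one_mul, Real.cos_add, Real.cos_sub]
        ring
      rw [this]
      exact Submodule.add_mem _
        (Submodule.smul_mem _ _ (cos_mem_cosSpan (by omega)))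
        (Submodule.smul_mem _ _ (cos_mem_cosSpan (by omega)))
  | zero =>
    have : (fun θ => Real.cos θ * (0 : ℝ → ℝ) θ) = 0 := by funext θ; simp
    rw [this]; exact Submodule.zero_mem _
  | add g h hg hh ihg ihh =>
    have : (fun θ => Real.cos θ * (g + h) θ) =
        (fun θ => Real.cos θ * g θ) + (fun θ => Real.cos θ * h θ) := by
      funext θ; simp [mul_add]
    rw [this]; exact Submodule.add_mem _ ihg ihh
  | smul a g hg ihg =>
    have : (fun θ => Real.cos θ * (a • g) θ) = a • (fun θ => Real.cos θ * g θ) := by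
      funext θ; simp [Pi.smul_apply, smul_eq_mul]; ring
    rw [this]; exact Submodule.smul_mem _ _ ihg

lemma prod_mem_cosSpan (T : Finset ℕ) (c : ℕ → ℝ) :
    (fun θ => ∏ s ∈ T, (Real.cos θ - c s)) ∈ cosSpan T.card := by
  induction T using Finset.induction with
  | empty =>
    have : (fun θ : ℝ => ∏ s ∈ (∅ : Finset ℕ), (Real.cos θ - c s)) =
        fun θ => Real.cos ((0:ℕ) * θ) := by funext θ; simp
    rw [this]; exact cos_mem_cosSpan le_rfl
  | @insert a T ha ih =>
    have hexp : (fun θ => ∏ s ∈ insert a T, (Real.cos θ - c s)) =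
        (fun θ => Real.cos θ * (∏ s ∈ T, (Real.cos θ - c s))) +
        (-(c a)) • (fun θ => ∏ s ∈ T, (Real.cos θ - c s)) := by
      funext θ
      rw [Finset.prod_insert ha]
      simp only [Pi.add_apply, Pi.smul_apply, smul_eq_mul]
      ring
    rw [Finset.card_insert_of_notMem ha, hexp]
    exact Submodule.add_mem _ (mul_cos_mem ih)
      (Submodule.smul_mem _ _ (cosSpan_mono (Nat.le_succ _) ih))

lemma sum_eq_zero_of_mem_cosSpan {m N : ℕ} {v : ℕ → ℝ} {θ : ℕ → ℝ}
    (h0 : ∀ k ≤ m, ∑ x ∈ Finset.range N, v x * Real.cos (k * θ x) = 0)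
    {f : ℝ → ℝ} (hf : f ∈ cosSpan m) :
    ∑ x ∈ Finset.range N, v x * f (θ x) = 0 := by
  induction hf using Submodule.span_induction with
  | mem g hg => obtain ⟨k, hk, rfl⟩ := hg; exact h0 k hk
  | zero => simp
  | add g h hg hh ihg ihh =>
    simp only [Pi.add_apply, mul_add]
    rw [Finset.sum_add_distrib, ihg, ihh, add_zero]
  | smul a g hg ihg =>
    simp only [Pi.smul_apply, smul_eq_mul]
    simp_rw [mul_left_comm]
    rw [← Finset.mul_sum, ihg, mul_zero]



/-- Corollary (DCT version): a binary signal on `{0, …, N-1}` consisting of at most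
`2d` maximal constant blocks is uniquely determined, among `[0,1]`-valued signals, by
its discrete cosine transform coefficients `c_k` for `0 ≤ k ≤ 2d`. -/
theorem stmt_6 (N d : ℕ) (hd : 0 < d) (h2d : 2 * d ≤ N)
    (u0 : ℕ → ℝ) (hbin : ∀ x < N, u0 x = 0 ∨ u0 x = 1)
    (hjumps : ((Finset.range (N - 1)).filter fun x => u0 x ≠ u0 (x + 1)).card ≤ 2 * d - 1)
    (u : ℕ → ℝ) (hbox : ∀ x < N, 0 ≤ u x ∧ u x ≤ 1)
    (hdct : ∀ k : ℕ, k ≤ 2 * d →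
      (∑ x ∈ Finset.range N,
          u x * Real.cos (Real.pi * k * (2 * x + 1) / (2 * N))) =
      (∑ x ∈ Finset.range N,
          u0 x * Real.cos (Real.pi * k * (2 * x + 1) / (2 * N)))) :
    ∀ x < N, u x = u0 x := by
  have hN : 0 < N := by omega
  have hNR : (0:ℝ) < N := by exact_mod_cast hN
  have hpi := Real.pi_pos
  set S : Finset ℕ := (Finset.range (N - 1)).filter (fun x => u0 x ≠ u0 (x + 1)) with hSdef
  set θ : ℕ → ℝ := fun x => Real.pi * (2 * x + 1) / (2 * N) with hθdef
  set c : ℕ → ℝ := fun s => Real.cos (Real.pi * (s + 1) / N) with hcdef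
  set f : ℝ → ℝ := fun t => ∏ s ∈ S, (t - c s) with hfdef
  set e : ℕ → ℕ := fun x => (S.filter (· < x)).card with hedef
  -- angles in range
  have hθnn : ∀ x : ℕ, 0 ≤ θ x := by intro x; rw [hθdef]; positivity
  have hθle : ∀ x < N, θ x ≤ Real.pi := by
    intro x hx
    rw [hθdef]
    rw [div_le_iff₀ (by positivity)]
    have hx' : (x:ℝ) + 1 ≤ N := by exact_mod_cast hx
    nlinarith
  -- factor signs
  have hBrw : ∀ s : ℕ, Real.pi * (s + 1) / N = Real.pi * (2 * s + 2) / (2 * N) := by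
    intro s; field_simp
  have hBnn : ∀ s : ℕ, 0 ≤ Real.pi * (s + 1) / N := by intro s; positivity
  have hBle : ∀ s ∈ S, Real.pi * (s + 1) / N ≤ Real.pi := by
    intro s hs
    have : s < N - 1 := Finset.mem_range.mp (Finset.mem_filter.mp hs).1
    have hs' : (s:ℝ) + 1 ≤ N := by
      have : s + 1 ≤ N := by omega
      exact_mod_cast this
    rw [div_le_iff₀ hNR]
    nlinarith
  have factor_pos : ∀ s ∈ S, ∀ x, x ≤ s → 0 < Real.cos (θ x) - c s := by
    intro s hs x hxs
    have hlt : θ x < Real.pi * (s + 1) / N := by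
      rw [hθdef, hBrw s]
      have hxs' : (x:ℝ) ≤ s := by exact_mod_cast hxs
      rw [div_lt_div_iff_of_pos_right (by positivity)]
      nlinarith
    have := Real.cos_lt_cos_of_nonneg_of_le_pi (hθnn x) (hBle s hs) hlt
    rw [hcdef]
    linarith
  have factor_neg : ∀ s ∈ S, ∀ x < N, s < x → Real.cos (θ x) - c s < 0 := by
    intro s hs x hx hsx
    have hlt : Real.pi * (s + 1) / N < θ x := by
      rw [hθdef, hBrw s]
      have hsx' : (s:ℝ) + 1 ≤ x := by exact_mod_cast hsx
      rw [div_lt_div_iff_of_pos_right (by positivity)]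
      nlinarith
    have := Real.cos_lt_cos_of_nonneg_of_le_pi (hBnn s) (hθle x hx) hlt
    rw [hcdef]
    linarith
  -- sign of f at cos (θ x)
  have hFpos : ∀ x < N, 0 < (-1:ℝ) ^ (e x) * f (Real.cos (θ x)) := by
    intro x hx
    have hsplit : f (Real.cos (θ x)) =
        (∏ s ∈ S.filter (· < x), (Real.cos (θ x) - c s)) *
        (∏ s ∈ S.filter (fun s => ¬ s < x), (Real.cos (θ x) - c s)) := by
      rw [hfdef]
      exact (Finset.prod_filter_mul_prod_filter_not S (· < x) _).symm
    have h1 : (∏ s ∈ S.filter (· < x), (Real.cos (θ x) - c s)) =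
        (-1:ℝ) ^ (e x) * ∏ s ∈ S.filter (· < x), (c s - Real.cos (θ x)) := by
      rw [hedef]
      rw [← Finset.prod_const (-1:ℝ), ← Finset.prod_mul_distrib]
      exact Finset.prod_congr rfl (fun s _ => by ring)
    have hP1 : 0 < ∏ s ∈ S.filter (· < x), (c s - Real.cos (θ x)) := by
      apply Finset.prod_pos
      intro s hsx
      have hs := Finset.mem_filter.mp hsx
      have := factor_neg s hs.1 x hx hs.2
      linarith
    have hP2 : 0 < ∏ s ∈ S.filter (fun s => ¬ s < x), (Real.cos (θ x) - c s) := by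
      apply Finset.prod_pos
      intro s hsx
      have hs := Finset.mem_filter.mp hsx
      exact factor_pos s hs.1 x (by omega)
    have hsq : (-1:ℝ) ^ (e x) * (-1:ℝ) ^ (e x) = 1 := by
      rw [← pow_add]
      exact Even.neg_one_pow ⟨e x, rfl⟩
    rw [hsplit, h1]
    calc (0:ℝ) < (∏ s ∈ S.filter (· < x), (c s - Real.cos (θ x))) *
        (∏ s ∈ S.filter (fun s => ¬ s < x), (Real.cos (θ x) - c s)) := mul_pos hP1 hP2
      _ = (-1:ℝ) ^ (e x) * ((-1:ℝ) ^ (e x) *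
            (∏ s ∈ S.filter (· < x), (c s - Real.cos (θ x))) *
            (∏ s ∈ S.filter (fun s => ¬ s < x), (Real.cos (θ x) - c s))) := by
          rw [← mul_assoc, ← mul_assoc, hsq, one_mul]
      _ = _ := by ring
  -- parity description of u0
  have hestep : ∀ x : ℕ, e (x + 1) = if x ∈ S then e x + 1 else e x := by
    intro x
    have hset : S.filter (· < x + 1) =
        if x ∈ S then insert x (S.filter (· < x)) else S.filter (· < x) := by
      split
      · next hxS =>
        ext s
        simp only [Finset.mem_filter, Finset.mem_insert]
        constructor
        · rintro ⟨hsS, hlt⟩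
          rcases Nat.lt_succ_iff_lt_or_eq.mp hlt with h | h
          · exact Or.inr ⟨hsS, h⟩
          · exact Or.inl h
        · rintro (rfl | ⟨hsS, hlt⟩)
          · exact ⟨hxS, Nat.lt_succ_self _⟩
          · exact ⟨hsS, by omega⟩
      · next hxS =>
        ext s
        simp only [Finset.mem_filter]
        constructor
        · rintro ⟨hsS, hlt⟩
          refine ⟨hsS, ?_⟩
          rcases Nat.lt_succ_iff_lt_or_eq.mp hlt with h | h
          · exact h
          · exact absurd (h ▸ hsS) hxS
        · rintro ⟨hsS, hlt⟩
          exact ⟨hsS, by omega⟩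
    rw [hedef]
    simp only [hset]
    split
    · rw [Finset.card_insert_of_notMem (by simp)]
    · rfl
  have hpar : ∀ x < N, u0 x = if Even (e x) then u0 0 else 1 - u0 0 := by
    intro x
    induction x with
    | zero =>
      intro _
      have he0 : e 0 = 0 := by
        rw [hedef]
        simp
      rw [he0]
      simp
    | succ x ih =>
      intro hx1
      have hx : x < N := by omega
      have ihx := ih hx
      by_cases hxS : x ∈ S
      · have hne : u0 x ≠ u0 (x + 1) := (Finset.mem_filter.mp hxS).2
        have hx1' : x + 1 < N := hx1
        have hb1 := hbin x hx
        have hb2 := hbin (x + 1) hx1'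
        have hflip : u0 (x + 1) = 1 - u0 x := by
          rcases hb1 with h | h <;> rcases hb2 with h' | h' <;>
            simp [h, h'] at hne ⊢ <;> linarith
        have hE : e (x + 1) = e x + 1 := by rw [hestep x, if_pos hxS]
        rw [hflip, ihx, hE]
        rcases Nat.even_or_odd (e x) with hev | hod
        · rw [if_pos hev, if_neg (by simp [Nat.even_add_one, hev])]
        · rw [if_neg (Nat.not_even_iff_odd.mpr hod),
              if_pos (by simp [Nat.even_add_one, Nat.not_even_iff_odd.mpr hod])]
          ring
      · have hE : e (x + 1) = e x := by rw [hestep x, if_neg hxS]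
        have heq : u0 x = u0 (x + 1) := by
          by_contra hne
          exact hxS (Finset.mem_filter.mpr ⟨Finset.mem_range.mpr (by omega), hne⟩)
        rw [← heq, hE]
        exact ihx
  -- the vanishing of the weighted sum
  have h0 : ∀ k : ℕ, k ≤ 2 * d →
      ∑ x ∈ Finset.range N, (u x - u0 x) * Real.cos ((k:ℝ) * θ x) = 0 := by
    intro k hk
    have harg : ∀ x : ℕ, (k:ℝ) * θ x = Real.pi * k * (2 * x + 1) / (2 * N) := by
      intro x; rw [hθdef]; ring
    simp_rw [harg, sub_mul]
    rw [Finset.sum_sub_distrib, hdct k hk, sub_self]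
  have hmem : (fun φ => f (Real.cos φ)) ∈ cosSpan (2 * d) := by
    have h1 : (fun φ => ∏ s ∈ S, (Real.cos φ - c s)) ∈ cosSpan S.card :=
      prod_mem_cosSpan S c
    have h2 : S.card ≤ 2 * d := le_trans hjumps (by omega)
    exact cosSpan_mono h2 (by rw [hfdef]; exact h1)
  have hsum0 : ∑ x ∈ Finset.range N, (u x - u0 x) * f (Real.cos (θ x)) = 0 :=
    sum_eq_zero_of_mem_cosSpan h0 hmem
  -- sign bookkeeping
  set ε : ℝ := if u0 0 = 0 then 1 else -1 with hεdef
  have key : ∀ x < N, (u x - u0 x) * (ε * f (Real.cos (θ x))) =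
      |u x - u0 x| * ((-1:ℝ) ^ (e x) * f (Real.cos (θ x))) := by
    intro x hx
    have hu := hbox x hx
    have hpx := hpar x hx
    rcases hbin 0 hN with h00 | h00 <;> rcases Nat.even_or_odd (e x) with hev | hod
    · rw [hεdef, if_pos h00]
      rw [if_pos hev] at hpx
      rw [hpx, h00, Even.neg_one_pow hev]
      rw [sub_zero, abs_of_nonneg hu.1]
    · rw [hεdef, if_pos h00]
      rw [if_neg (Nat.not_even_iff_odd.mpr hod)] at hpx
      rw [hpx, h00, Odd.neg_one_pow hod]
      rw [sub_zero, abs_of_nonpos (by linarith [hu.2])]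
      ring
    · rw [hεdef, if_neg (by rw [h00]; norm_num)]
      rw [if_pos hev] at hpx
      rw [hpx, h00, Even.neg_one_pow hev]
      rw [abs_of_nonpos (by linarith [hu.2])]
      ring
    · rw [hεdef, if_neg (by rw [h00]; norm_num)]
      rw [if_neg (Nat.not_even_iff_odd.mpr hod)] at hpx
      rw [hpx, h00, Odd.neg_one_pow hod]
      have : (1:ℝ) - 1 = 0 := by ring
      rw [this, sub_zero, abs_of_nonneg hu.1]
  have hnn : ∀ x ∈ Finset.range N, 0 ≤ (u x - u0 x) * (ε * f (Real.cos (θ x))) := by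
    intro x hx
    rw [key x (Finset.mem_range.mp hx)]
    exact mul_nonneg (abs_nonneg _) (le_of_lt (hFpos x (Finset.mem_range.mp hx)))
  have hsum : ∑ x ∈ Finset.range N, (u x - u0 x) * (ε * f (Real.cos (θ x))) = 0 := by
    have : ∑ x ∈ Finset.range N, (u x - u0 x) * (ε * f (Real.cos (θ x))) =
        ε * ∑ x ∈ Finset.range N, (u x - u0 x) * f (Real.cos (θ x)) := by
      rw [Finset.mul_sum]
      exact Finset.sum_congr rfl (fun x _ => by ring)
    rw [this, hsum0, mul_zero]
  intro x hx
  have hterm := (Finset.sum_eq_zero_iff_of_nonneg hnn).mp hsum x (Finset.mem_range.mpr hx)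
  rw [key x hx] at hterm
  rcases mul_eq_zero.mp hterm with h | h
  · have := abs_eq_zero.mp h
    linarith [sub_eq_zero.mp this]
  · exact absurd h (ne_of_gt (hFpos x hx))
end

section
/- Let A be a real m×n matrix and u0 ∈ ℝ^n with u0(x) ≥ 0 for all x, and let K = {x : u0(x) ≠ 0} be its support. Assume the columns of A indexed by K are linearly independent. Then the following are equivalent: (i) u0 is the unique vector u ∈ ℝ^n satisfying A u = A u0 and u(x) ≥ 0 for all x; (ii) there exists η ∈ ℝ^m such that the vector v = Aᵀη satisfies v(x) = 0 for every x ∈ K and v(x) > 0 for every x ∉ K. -/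
open Finset

/-- The linear functional `w ↦ ∑ x, v x * w x`. -/
private def dotL {n : ℕ} (v : Fin n → ℝ) : (Fin n → ℝ) →ₗ[ℝ] ℝ where
  toFun w := ∑ x, v x * w x
  map_add' a b := by simp [mul_add, Finset.sum_add_distrib]
  map_smul' c a := by simp [Finset.mul_sum, mul_left_comm]

/-- Theorem (uniqueness of nonnegative solutions): for a nonnegative vector `u0`
supported on `K`, assuming the columns of `A` indexed by `K` are linearly independent,
`u0` is the unique nonnegative solution of `A u = A u0` iff some vector `v = Aᵀ η`
in the row space vanishes on `K` and is strictly positive off `K`. -/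
theorem stmt_7 (m n : ℕ) (A : Matrix (Fin m) (Fin n) ℝ) (u0 : Fin n → ℝ)
    (hpos : ∀ x, 0 ≤ u0 x)
    (hind : LinearIndependent ℝ fun x : {x : Fin n // u0 x ≠ 0} => fun i => A i x.val) :
    (∀ u : Fin n → ℝ, A.mulVec u = A.mulVec u0 → (∀ x, 0 ≤ u x) → u = u0) ↔
    (∃ η : Fin m → ℝ,
        (∀ x, u0 x ≠ 0 → A.transpose.mulVec η x = 0) ∧
        (∀ x, u0 x = 0 → 0 < A.transpose.mulVec η x)) := by
  classical
  constructor
  · -- (i) → (ii)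
    intro huniq
    -- Step 1: the only kernel vector that is nonnegative off the support is 0
    have hker0 : ∀ d : Fin n → ℝ, A.mulVec d = 0 → (∀ x, u0 x = 0 → 0 ≤ d x) → d = 0 := by
      intro d hAd hdpos
      obtain ⟨ε, hε, hεK⟩ : ∃ ε : ℝ, 0 < ε ∧ ∀ x, u0 x ≠ 0 → 0 ≤ u0 x + ε * d x := by
        by_cases hF : (Finset.univ.filter fun x => u0 x ≠ 0 : Finset (Fin n)).Nonempty
        · set F := (Finset.univ.filter fun x => u0 x ≠ 0 : Finset (Fin n)) with hFdef
          set ε := F.inf' hF (fun x => u0 x / (|d x| + 1)) with hεdef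
          have hεpos : 0 < ε := by
            rw [hεdef, Finset.lt_inf'_iff]
            intro x hx
            have hx' : u0 x ≠ 0 := by simpa [hFdef] using hx
            have : 0 < u0 x := lt_of_le_of_ne (hpos x) (Ne.symm hx')
            positivity
          refine ⟨ε, hεpos, ?_⟩
          intro x hx
          have hxF : x ∈ F := by simp [hFdef, hx]
          have h1 : ε ≤ u0 x / (|d x| + 1) := Finset.inf'_le _ hxF
          have h2 : (0:ℝ) < |d x| + 1 := by positivity
          have h5 : ε * (|d x| + 1) ≤ u0 x := by
            rw [← le_div_iff₀ h2]; exact h1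
          have h3 : -(|d x|) ≤ d x := neg_abs_le _
          nlinarith
        · exact ⟨1, one_pos, fun x hx => absurd ⟨x, by simp [hx]⟩ hF⟩
      have key := huniq (fun x => u0 x + ε * d x) ?_ ?_
      · funext x
        have := congrFun key x
        have : ε * d x = 0 := by linarith
        have := mul_eq_zero.mp this
        rcases this with h | h
        · exact absurd h (ne_of_gt hε)
        · simpa using h
      · have : (fun x => u0 x + ε * d x) = u0 + ε • d := by funext x; simp [mul_comm]
        rw [this, Matrix.mulVec_add, Matrix.mulVec_smul, hAd]
        simp
      · intro x
        by_cases hx : u0 x = 0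
        · have := hdpos x hx
          show 0 ≤ u0 x + ε * d x
          rw [hx]; positivity
        · exact hεK x hx
    -- Step 2: separation
    let W : Submodule ℝ (Fin n → ℝ) := LinearMap.ker A.mulVecLin
    let VK : Submodule ℝ (Fin n → ℝ) :=
      { carrier := {w | ∀ x, u0 x = 0 → w x = 0}
        add_mem' := fun ha hb x hx => by simp [ha x hx, hb x hx]
        zero_mem' := fun x _ => rfl
        smul_mem' := fun c w hw x hx => by simp [hw x hx] }
    let VK' : Submodule ℝ (Fin n → ℝ) :=
      { carrier := {w | ∀ x, u0 x ≠ 0 → w x = 0}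
        add_mem' := fun ha hb x hx => by simp [ha x hx, hb x hx]
        zero_mem' := fun x _ => rfl
        smul_mem' := fun c w hw x hx => by simp [hw x hx] }
    let S : Set (Fin n → ℝ) := ↑VK' ∩ stdSimplex ℝ (Fin n)
    have hdisj : Disjoint (↑(W ⊔ VK) : Set (Fin n → ℝ)) S := by
      rw [Set.disjoint_left]
      rintro a haU ⟨haV, haPos, haSum⟩
      obtain ⟨w, hw, k, hk, rfl⟩ := Submodule.mem_sup.mp haU
      have hk' : ∀ x, u0 x = 0 → k x = 0 := hk
      have hw0 : w = 0 := by
        apply hker0 w (by simpa [Matrix.mulVecLin_apply] using (LinearMap.mem_ker.mp hw))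
        intro x hx
        have := haPos x
        have hkx := hk' x hx
        simp only [Pi.add_apply, hkx, add_zero] at this
        exact this
      have hk0 : k = 0 := by
        funext x
        by_cases hx : u0 x = 0
        · exact hk' x hx
        · have := haV x hx
          simpa [hw0] using this
      rw [hw0, hk0] at haSum
      simp at haSum
    obtain ⟨f, a, b, hfU, hab, hfS⟩ :=
      geometric_hahn_banach_closed_compact (W ⊔ VK).convex
        (Submodule.closed_of_finiteDimensional (W ⊔ VK))
        (VK'.convex.inter (convex_stdSimplex ℝ (Fin n)))
        ((isCompact_stdSimplex ℝ (Fin n)).inter_left VK'.closed_of_finiteDimensional)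
        hdisj
    have hfU0 : ∀ w ∈ (W ⊔ VK : Submodule ℝ (Fin n → ℝ)), f w = 0 := by
      intro w hw
      by_contra h
      have h1 := hfU (((a + 1) / f w) • w) (Submodule.smul_mem _ _ hw)
      rw [map_smul, smul_eq_mul, div_mul_cancel₀ _ h] at h1
      linarith
    have ha0 : 0 < a := by
      have := hfU 0 (Submodule.zero_mem _)
      simpa using this
    set v0 : Fin n → ℝ := fun x => f (fun j => if x = j then 1 else 0) with hv0def
    have hv0K : ∀ x, u0 x ≠ 0 → v0 x = 0 := by
      intro x hx
      apply hfU0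
      apply Submodule.mem_sup_right
      intro y hy
      have : x ≠ y := fun h => hx (h ▸ hy)
      simp [this]
    have hv0pos : ∀ x, u0 x = 0 → 0 < v0 x := by
      intro x hx
      have hmem : (fun j => if x = j then 1 else 0) ∈ S := by
        refine ⟨fun y hy => ?_, fun y => ?_, ?_⟩
        · have : x ≠ y := fun h => hy (h ▸ hx)
          simp [this]
        · positivity
        · simp
      have := hfS _ hmem
      linarith
    have horth : ∀ w : Fin n → ℝ, A.mulVec w = 0 → ∑ x, v0 x * w x = 0 := by
      intro w hw
      have hmem : w ∈ (W ⊔ VK : Submodule ℝ (Fin n → ℝ)) :=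
        Submodule.mem_sup_left (LinearMap.mem_ker.mpr (by simpa [Matrix.mulVecLin_apply] using hw))
      have hf0 : f w = 0 := hfU0 w hmem
      have := LinearMap.pi_apply_eq_sum_univ (f : (Fin n → ℝ) →ₗ[ℝ] ℝ) w
      simp only [ContinuousLinearMap.coe_coe, smul_eq_mul] at this
      rw [hf0] at this
      rw [Finset.sum_congr rfl (fun x _ => mul_comm (v0 x) (w x))]
      exact this.symm
    -- Step 3: realize v0 as Aᵀ η
    let L : Fin m → (Fin n → ℝ) →ₗ[ℝ] ℝ := fun i => (LinearMap.proj i).comp A.mulVecLin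
    have hKer : ⨅ i, LinearMap.ker (L i) ≤ LinearMap.ker (dotL v0) := by
      intro w hw
      rw [Submodule.mem_iInf] at hw
      have hAw : A.mulVec w = 0 := by
        funext i
        have := hw i
        simpa [L, LinearMap.mem_ker, Matrix.mulVecLin_apply] using this
      show ∑ x, v0 x * w x = 0
      exact horth w hAw
    obtain ⟨η, hη⟩ := (Submodule.mem_span_range_iff_exists_fun ℝ).mp (mem_span_of_iInf_ker_le_ker hKer)
    have hv : ∀ x, A.transpose.mulVec η x = v0 x := by
      intro x
      have h1 := congrArg (fun g : (Fin n → ℝ) →ₗ[ℝ] ℝ => g (fun j => if x = j then 1 else 0)) hη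
      simp only [L, LinearMap.coe_sum, Finset.sum_apply, LinearMap.smul_apply, smul_eq_mul,
        LinearMap.comp_apply, LinearMap.proj_apply, Matrix.mulVecLin_apply] at h1
      have hlhs : ∀ i, A.mulVec (fun j => if x = j then 1 else 0) i = A i x := by
        intro i
        simp [Matrix.mulVec, dotProduct, mul_ite]
      have hrhs : dotL v0 (fun j => if x = j then 1 else 0) = v0 x := by
        show ∑ y, v0 y * (if x = y then 1 else 0) = v0 x
        simp [mul_ite]
      rw [hrhs] at h1
      rw [show A.transpose.mulVec η x = ∑ i, η i * A i x by
        simp [Matrix.mulVec, dotProduct, Matrix.transpose_apply, mul_comm]]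
      rw [← h1]
      exact Finset.sum_congr rfl fun i _ => by rw [hlhs i]

    exact ⟨η, fun x hx => by rw [hv x]; exact hv0K x hx,
      fun x hx => by rw [hv x]; exact hv0pos x hx⟩
  · -- (ii) → (i)
    rintro ⟨η, hηK, hηKc⟩ u hAu hu
    set v : Fin n → ℝ := A.transpose.mulVec η with hvdef
    have hdot : dotProduct v u = dotProduct v u0 := by
      rw [hvdef, Matrix.mulVec_transpose]
      rw [← Matrix.dotProduct_mulVec, ← Matrix.dotProduct_mulVec, hAu]
    have h0 : dotProduct v u0 = 0 := by
      apply Finset.sum_eq_zero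
      intro x _
      by_cases hx : u0 x = 0
      · simp [hx]
      · simp [hηK x hx]
    have hsum0 : ∑ x, v x * u x = 0 := by
      rw [← dotProduct] at *
      rw [hdot, h0]
    have hterm : ∀ x ∈ Finset.univ, v x * u x = 0 := by
      rw [← Finset.sum_eq_zero_iff_of_nonneg]
      · exact hsum0
      · intro x _
        by_cases hx : u0 x = 0
        · exact mul_nonneg (le_of_lt (hηKc x hx)) (hu x)
        · simp [hηK x hx]
    have huzero : ∀ x, u0 x = 0 → u x = 0 := by
      intro x hx
      have := hterm x (Finset.mem_univ x)
      rcases mul_eq_zero.mp this with h | h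
      · exact absurd h (ne_of_gt (hηKc x hx))
      · exact h
    -- now use linear independence
    have hd : A.mulVec (u - u0) = 0 := by
      rw [Matrix.mulVec_sub, hAu, sub_self]
    have hind' := Fintype.linearIndependent_iff.mp hind (fun x => (u - u0) x.val)
    have hzero : ∀ x : {x : Fin n // u0 x ≠ 0}, (u - u0) x.val = 0 := by
      apply hind'
      funext i
      rw [Finset.sum_apply]
      have step1 : ∑ x : {x : Fin n // u0 x ≠ 0}, ((u - u0) x.val • fun i => A i x.val) i
          = ∑ x : {x : Fin n // u0 x ≠ 0}, (u - u0) x.val * A i x.val := by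
        apply Finset.sum_congr rfl; intro x _; simp
      rw [step1]
      have step2 : ∑ x : {x : Fin n // u0 x ≠ 0}, (u - u0) x.val * A i x.val
          = ∑ x ∈ Finset.univ.filter (fun x => u0 x ≠ 0), (u - u0) x * A i x :=
        (Finset.sum_subtype (p := fun x => u0 x ≠ 0) (Finset.univ.filter fun x => u0 x ≠ 0)
          (fun x => by simp) (fun x => (u - u0) x * A i x)).symm
      rw [step2]
      have step3 : ∑ x ∈ Finset.univ.filter (fun x => u0 x ≠ 0), (u - u0) x * A i x
          = ∑ x, (u - u0) x * A i x := by
        apply Finset.sum_filter_of_ne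
        intro x _ hne hx0
        apply hne
        have : u x = 0 := huzero x hx0
        simp [Pi.sub_apply, this, hx0]
      rw [step3]
      have : ∑ x, (u - u0) x * A i x = A.mulVec (u - u0) i := by
        simp [Matrix.mulVec, dotProduct, mul_comm]
      rw [this, hd]
    funext x
    by_cases hx : u0 x = 0
    · rw [huzero x hx, hx]
    · have := hzero ⟨x, hx⟩
      simpa [sub_eq_zero] using this
end

section
/- Let N and d be positive integers with 2d < N. Let u0 : ZMod N → ℝ satisfy u0(x) ≥ 0 for all x and have support of cardinality at most d, i.e. card{x : u0(x) ≠ 0} ≤ d. If u : ZMod N → ℝ satisfies u(x) ≥ 0 for all x and a_k(u) = a_k(u0) for every integer k with |k| ≤ d, then u = u0. -/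
open Complex Polynomial Finset

private lemma aux_poly_sum (N d : ℕ) [NeZero N] (ω : ℂ) (hω0 : ω ≠ 0)
    (v : ZMod N → ℂ)
    (hA : ∀ j : ℤ, |j| ≤ (d : ℤ) → ∑ x : ZMod N, v x * ω ^ (j * (x.val : ℤ)) = 0)
    (r : Polynomial ℂ) (e : ℤ) (h1 : -(d : ℤ) ≤ e) (h2 : (r.natDegree : ℤ) + e ≤ d) :
    ∑ x : ZMod N, v x * r.eval (ω ^ ((x.val : ℤ))) * ω ^ (e * (x.val : ℤ)) = 0 := by
  have key : ∀ x : ZMod N, v x * r.eval (ω ^ ((x.val : ℤ))) * ω ^ (e * (x.val : ℤ))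
      = ∑ j ∈ Finset.range (r.natDegree + 1),
          r.coeff j * (v x * ω ^ (((j : ℤ) + e) * (x.val : ℤ))) := by
    intro x
    rw [Polynomial.eval_eq_sum_range, Finset.mul_sum, Finset.sum_mul]
    refine Finset.sum_congr rfl fun j _ => ?_
    have hz : (ω ^ ((x.val : ℤ))) ^ j * ω ^ (e * (x.val : ℤ))
        = ω ^ (((j : ℤ) + e) * (x.val : ℤ)) := by
      rw [← zpow_natCast (ω ^ ((x.val : ℤ))) j, ← zpow_mul, ← zpow_add₀ hω0]
      congr 1; ring
    calc v x * (r.coeff j * (ω ^ ((x.val : ℤ))) ^ j) * ω ^ (e * (x.val : ℤ))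
        = r.coeff j * (v x * ((ω ^ ((x.val : ℤ))) ^ j * ω ^ (e * (x.val : ℤ)))) := by ring
      _ = _ := by rw [hz]
  simp_rw [key]
  rw [Finset.sum_comm]
  refine Finset.sum_eq_zero fun j hj => ?_
  rw [← Finset.mul_sum, hA ((j : ℤ) + e), mul_zero]
  have hj' : (j : ℤ) ≤ (r.natDegree : ℤ) := by
    exact_mod_cast Nat.lt_succ_iff.mp (Finset.mem_range.mp hj)
  rw [abs_le]
  constructor <;> omega

/-- Theorem (reconstruction of sparse nonnegative signals from low frequencies): a
nonnegative signal on `ZMod N` supported on at most `d` points is uniquely determined,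
among nonnegative signals, by its Fourier coefficients `a_k` for `|k| ≤ d`. -/
theorem stmt_8 (N d : ℕ) [NeZero N] (hd : 0 < d) (h2d : 2 * d < N)
    (u0 : ZMod N → ℝ) (hpos : ∀ x, 0 ≤ u0 x)
    (hsupp : {x : ZMod N | u0 x ≠ 0}.ncard ≤ d)
    (u : ZMod N → ℝ) (hupos : ∀ x, 0 ≤ u x)
    (hfreq : ∀ k : ℤ, |k| ≤ (d : ℤ) →
      (∑ x : ZMod N, (u x : ℂ) *
          Complex.exp (-(2 * Real.pi * Complex.I) * (k : ℂ) * (x.val : ℂ) / (N : ℂ))) =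
      (∑ x : ZMod N, (u0 x : ℂ) *
          Complex.exp (-(2 * Real.pi * Complex.I) * (k : ℂ) * (x.val : ℂ) / (N : ℂ)))) :
    u = u0 := by
  classical
  have hN : N ≠ 0 := NeZero.ne N
  set ω : ℂ := Complex.exp (2 * Real.pi * Complex.I / N) with hωdef
  have hprim : IsPrimitiveRoot ω N := Complex.isPrimitiveRoot_exp N hN
  have hω0 : ω ≠ 0 := Complex.exp_ne_zero _
  -- ω^m = exp(m * (2πI/N))
  have hzpow : ∀ m : ℤ, ω ^ m = Complex.exp ((m : ℂ) * (2 * Real.pi * Complex.I / N)) := by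
    intro m
    rw [hωdef, ← Complex.exp_int_mul]
  -- the coefficient hypothesis in zpow form
  have hA : ∀ j : ℤ, |j| ≤ (d : ℤ) →
      ∑ x : ZMod N, ((u x : ℂ) - (u0 x : ℂ)) * ω ^ (j * (x.val : ℤ)) = 0 := by
    intro j hj
    have h := hfreq (-j) (by rwa [abs_neg])
    have hterm : ∀ x : ZMod N,
        Complex.exp (-(2 * Real.pi * Complex.I) * ((-j : ℤ) : ℂ) * (x.val : ℂ) / (N : ℂ))
          = ω ^ (j * (x.val : ℤ)) := by
      intro x
      rw [hzpow]
      congr 1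
      push_cast
      ring
    simp_rw [hterm] at h
    simp_rw [sub_mul, Finset.sum_sub_distrib, h, sub_self]
  -- conjugation of powers of ω
  have hconjω : (starRingEnd ℂ) ω = ω⁻¹ := by
    rw [hωdef, ← Complex.exp_conj, ← Complex.exp_neg]
    congr 1
    simp only [map_div₀, map_mul, Complex.conj_I, Complex.conj_ofReal, map_ofNat, map_natCast]
    ring
  have hconj : ∀ m : ℤ, (starRingEnd ℂ) (ω ^ m) = ω ^ (-m) := by
    intro m
    rw [map_zpow₀, hconjω, inv_zpow, ← zpow_neg]
  -- support finset
  set S : Finset (ZMod N) := Finset.univ.filter (fun x => u0 x ≠ 0) with hSdef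
  have hScard : S.card ≤ d := by
    have : {x : ZMod N | u0 x ≠ 0} = ↑S := by ext x; simp [hSdef]
    rwa [this, Set.ncard_coe_finset] at hsupp
  set m : ℕ := S.card with hmdef
  -- distinct roots
  have hne : ∀ x s : ZMod N, x ≠ s → ω ^ ((x.val : ℤ)) ≠ ω ^ ((s.val : ℤ)) := by
    intro x s hxs h
    apply hxs
    have h' : ω ^ x.val = ω ^ s.val := by
      rwa [zpow_natCast, zpow_natCast] at h
    have := hprim.pow_inj (ZMod.val_lt x) (ZMod.val_lt s) h'
    exact ZMod.val_injective N this
  -- the nonnegative trig polynomial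
  set P : ZMod N → ℝ := fun x => ∏ s ∈ S, Complex.normSq (ω ^ ((x.val : ℤ)) - ω ^ ((s.val : ℤ))) with hPdef
  have hPnonneg : ∀ x, 0 ≤ P x := fun x => Finset.prod_nonneg fun s _ => Complex.normSq_nonneg _
  -- P x as a polynomial expression
  set c : ℂ := ∏ s ∈ S, (-(ω ^ ((s.val : ℤ)))⁻¹) with hcdef
  set q : Polynomial ℂ :=
    Polynomial.C c * (Polynomial.X ^ (d - m) *
      ∏ s ∈ S, (Polynomial.X - Polynomial.C (ω ^ ((s.val : ℤ))))^2) with hqdef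
  have hqdeg : (q.natDegree : ℤ) + (-(d : ℤ)) ≤ (d : ℤ) := by
    have h1 : q.natDegree ≤ (Polynomial.X ^ (d - m) *
        ∏ s ∈ S, (Polynomial.X - Polynomial.C (ω ^ ((s.val : ℤ))))^2 : Polynomial ℂ).natDegree :=
      Polynomial.natDegree_C_mul_le _ _
    have h2 : (Polynomial.X ^ (d - m) *
        ∏ s ∈ S, (Polynomial.X - Polynomial.C (ω ^ ((s.val : ℤ))))^2 : Polynomial ℂ).natDegree
        ≤ (d - m) + 2 * m := by
      refine le_trans (Polynomial.natDegree_mul_le) ?_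
      have h3 : (∏ s ∈ S, (Polynomial.X - Polynomial.C (ω ^ ((s.val : ℤ))))^2 : Polynomial ℂ).natDegree ≤ 2 * m := by
        refine le_trans (Polynomial.natDegree_prod_le _ _) ?_
        have : ∀ s ∈ S, ((Polynomial.X - Polynomial.C (ω ^ ((s.val : ℤ))))^2 : Polynomial ℂ).natDegree ≤ 2 := by
          intro s _
          rw [Polynomial.natDegree_pow, Polynomial.natDegree_X_sub_C]
        calc _ ≤ ∑ s ∈ S, 2 := Finset.sum_le_sum this
          _ = 2 * m := by rw [Finset.sum_const, smul_eq_mul, hmdef]; ring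
      calc _ ≤ (d - m) + 2 * m := by
            gcongr
            exact Polynomial.natDegree_X_pow_le _
      _ = (d - m) + 2 * m := rfl
    have := le_trans h1 h2
    have hmd : m ≤ d := hScard
    omega
  -- pointwise identity: q.eval (ω^x) * ω^(-d x) = P x
  have hPeval : ∀ x : ZMod N,
      q.eval (ω ^ ((x.val : ℤ))) * ω ^ ((-(d : ℤ)) * (x.val : ℤ)) = ((P x : ℝ) : ℂ) := by
    intro x
    have hfac : ∀ s ∈ S,
        ((Complex.normSq (ω ^ ((x.val : ℤ)) - ω ^ ((s.val : ℤ))) : ℝ) : ℂ)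
        = (ω ^ ((x.val : ℤ)) - ω ^ ((s.val : ℤ)))^2 * (-(ω ^ ((s.val : ℤ)))⁻¹)
            * (ω ^ ((x.val : ℤ)))⁻¹ := by
      intro s _
      rw [← Complex.mul_conj, map_sub, hconj, hconj]
      have hx : ω ^ (-(x.val : ℤ)) = (ω ^ ((x.val : ℤ)))⁻¹ := zpow_neg ω _
      have hs : ω ^ (-(s.val : ℤ)) = (ω ^ ((s.val : ℤ)))⁻¹ := zpow_neg ω _
      rw [hx, hs]
      have hxne : ω ^ ((x.val : ℤ)) ≠ 0 := zpow_ne_zero _ hω0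
      have hsne : ω ^ ((s.val : ℤ)) ≠ 0 := zpow_ne_zero _ hω0
      have habs : ∀ z w : ℂ, z ≠ 0 → w ≠ 0 →
          (z - w) * (z⁻¹ - w⁻¹) = (z - w)^2 * (-w⁻¹) * z⁻¹ := by
        intro z w hz hw
        field_simp
        ring
      exact habs _ _ hxne hsne
    rw [hPdef]
    push_cast [Complex.ofReal_prod]
    rw [Finset.prod_congr rfl hfac]
    rw [Finset.prod_mul_distrib, Finset.prod_mul_distrib, Finset.prod_const]
    rw [hqdef]
    simp only [Polynomial.eval_mul, Polynomial.eval_C, Polynomial.eval_pow,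
      Polynomial.eval_prod, Polynomial.eval_sub, Polynomial.eval_X]
    rw [hcdef]
    have hmd : m ≤ d := hScard
    rw [← hmdef]
    have hz : ((ω ^ ((x.val : ℤ)))⁻¹) ^ m
        = (ω ^ ((x.val : ℤ))) ^ (d - m) * ω ^ ((-(d : ℤ)) * (x.val : ℤ)) := by
      rw [inv_pow, ← zpow_natCast (ω ^ ((x.val : ℤ))) m,
        ← zpow_natCast (ω ^ ((x.val : ℤ))) (d - m), ← zpow_neg, ← zpow_mul, ← zpow_mul,
        ← zpow_add₀ hω0]
      congr 1
      push_cast [Nat.cast_sub hmd]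
      ring
    rw [hz]
    ring
  -- the key sum identity
  have hkey : ∑ x : ZMod N, ((u x : ℂ) - (u0 x : ℂ)) * ((P x : ℝ) : ℂ) = 0 := by
    have := aux_poly_sum N d ω hω0 (fun x => (u x : ℂ) - (u0 x : ℂ)) hA q (-(d : ℤ))
      (le_refl _) hqdeg
    rw [← this]
    refine Finset.sum_congr rfl fun x _ => ?_
    rw [mul_assoc, hPeval]
  -- real version
  have hkeyR : ∑ x : ZMod N, (u x - u0 x) * P x = 0 := by
    have : ((∑ x : ZMod N, (u x - u0 x) * P x : ℝ) : ℂ) = 0 := by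
      push_cast
      rw [← hkey]
    exact_mod_cast this
  -- u0 x * P x = 0 always
  have hu0P : ∀ x : ZMod N, u0 x * P x = 0 := by
    intro x
    by_cases hx : u0 x = 0
    · rw [hx, zero_mul]
    · have hxS : x ∈ S := by simp [hSdef, hx]
      have : P x = 0 := by
        rw [hPdef]
        exact Finset.prod_eq_zero hxS (by simp)
      rw [this, mul_zero]
  have huP : ∑ x : ZMod N, u x * P x = 0 := by
    have : ∑ x : ZMod N, (u x - u0 x) * P x
        = ∑ x : ZMod N, u x * P x - ∑ x : ZMod N, u0 x * P x := by
      rw [← Finset.sum_sub_distrib]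
      exact Finset.sum_congr rfl fun x _ => by ring
    rw [this, Finset.sum_eq_zero (fun x _ => hu0P x), sub_zero] at hkeyR
    exact hkeyR
  have huPzero : ∀ x : ZMod N, u x * P x = 0 := by
    have := (Finset.sum_eq_zero_iff_of_nonneg
      (fun x _ => mul_nonneg (hupos x) (hPnonneg x))).mp huP
    exact fun x => this x (Finset.mem_univ x)
  -- outside S, u vanishes
  have hout : ∀ x : ZMod N, x ∉ S → u x = 0 := by
    intro x hx
    have hP : P x ≠ 0 := by
      rw [hPdef]
      refine Finset.prod_ne_zero_iff.mpr fun s hs => ?_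
      have hxs : x ≠ s := fun h => hx (h ▸ hs)
      intro hzero
      exact hne x s hxs (sub_eq_zero.mp (Complex.normSq_eq_zero.mp hzero))
    have := huPzero x
    exact (mul_eq_zero.mp this).resolve_right hP
  -- outside S, u0 vanishes too
  have hout0 : ∀ x : ZMod N, x ∉ S → u0 x = 0 := by
    intro x hx
    by_contra h
    exact hx (by simp [hSdef, h])
  funext x
  by_cases hxS : x ∈ S
  · -- use the interpolation polynomial vanishing on S \ {x}
    set r : Polynomial ℂ :=
      ∏ s ∈ S.erase x, (Polynomial.X - Polynomial.C (ω ^ ((s.val : ℤ)))) with hrdef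
    have hrdeg : (r.natDegree : ℤ) + 0 ≤ (d : ℤ) := by
      have h1 : r.natDegree ≤ (S.erase x).card := by
        rw [hrdef]
        refine le_trans (Polynomial.natDegree_prod_le _ _) ?_
        calc _ ≤ ∑ s ∈ S.erase x, 1 :=
              Finset.sum_le_sum fun s _ => le_of_eq (Polynomial.natDegree_X_sub_C _)
          _ = (S.erase x).card := by simp
      have h2 : (S.erase x).card < S.card := Finset.card_erase_lt_of_mem hxS
      have hmd : S.card ≤ d := hScard
      omega
    have hsum := aux_poly_sum N d ω hω0 (fun y => (u y : ℂ) - (u0 y : ℂ)) hA r 0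
      (by omega) hrdeg
    have hsingle : ∑ y : ZMod N,
        ((u y : ℂ) - (u0 y : ℂ)) * r.eval (ω ^ ((y.val : ℤ))) * ω ^ ((0:ℤ) * (y.val : ℤ))
        = ((u x : ℂ) - (u0 x : ℂ)) * r.eval (ω ^ ((x.val : ℤ))) := by
      rw [Finset.sum_eq_single x]
      · simp
      · intro y _ hyx
        by_cases hyS : y ∈ S
        · have : r.eval (ω ^ ((y.val : ℤ))) = 0 := by
            rw [hrdef, Polynomial.eval_prod]
            exact Finset.prod_eq_zero (Finset.mem_erase.mpr ⟨hyx, hyS⟩) (by simp)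
          rw [this]
          ring
        · rw [hout y hyS, hout0 y hyS]
          ring
      · intro h
        exact absurd (Finset.mem_univ x) h
    rw [hsingle] at hsum
    have hrne : r.eval (ω ^ ((x.val : ℤ))) ≠ 0 := by
      rw [hrdef, Polynomial.eval_prod]
      refine Finset.prod_ne_zero_iff.mpr fun s hs => ?_
      simp only [Polynomial.eval_sub, Polynomial.eval_X, Polynomial.eval_C]
      exact sub_ne_zero.mpr (hne x s (Finset.ne_of_mem_erase hs).symm ∘ id)
    have := (mul_eq_zero.mp hsum).resolve_right hrne
    have : (u x : ℂ) = (u0 x : ℂ) := by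
      have := sub_eq_zero.mp this
      exact this
    exact_mod_cast this
  · rw [hout x hxS, hout0 x hxS]
end

section
/- Let d > 0 be a real number and let v(x,y) = Σ_{(j,k): j²+k²≤d²} a(j,k)·e^{2πi(jx+ky)} be a real-valued ℤ²-periodic function on ℝ², with coefficients satisfying a(−j,−k) = conj(a(j,k)). Let p, q be coprime integers with q ≥ 1. Assume that for every s ∈ [0,1), the 1-periodic function t ↦ v(t, s + t·p/q) is not identically zero (so its zero set in [0,1) is finite). Then the average number of zero-crossings along lines of slope p/q satisfies ∫₀¹ card{t ∈ [0,1) : v(t, s + t·p/q) = 0} ds ≤ 2·d·√(p² + q²)/q; equivalently, with cos θ = q/√(p²+q²), the average directional number of zero-crossings K_θ = cos θ · ∫₀¹ card{t ∈ [0,1) : v(t, s + t·tan θ) = 0} ds is at most 2d. -/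
open Complex Set Polynomial

lemma inj_exp (c : ℝ) (hc : 0 < c) :
    Set.InjOn (fun t : ℝ => Complex.exp (2 * Real.pi * Complex.I * t / c)) (Set.Ico 0 c) := by
  intro t1 h1 t2 h2 h
  simp only at h
  rw [Complex.exp_eq_exp_iff_exists_int] at h
  obtain ⟨n, hn⟩ := h
  have hc' : (c : ℂ) ≠ 0 := by exact_mod_cast hc.ne'
  have hπ : (Real.pi : ℂ) ≠ 0 := by exact_mod_cast Real.pi_ne_zero
  have hne : (2 * (Real.pi:ℂ) * Complex.I) ≠ 0 := by
    simp [hπ, Complex.I_ne_zero]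
  rw [div_eq_iff hc'] at hn
  have hn' : (2*(Real.pi:ℂ)*Complex.I) * t1 = (2*(Real.pi:ℂ)*Complex.I) * (t2 + n*c) := by
    field_simp at hn
    linear_combination (2*(Real.pi:ℂ)*Complex.I) * hn
  have h2' : (t1 : ℂ) = t2 + n * c := mul_left_cancel₀ hne hn'
  have hre : t1 = t2 + n * c := by exact_mod_cast h2'
  have hn0 : n = 0 := by
    rcases h1 with ⟨h1a, h1b⟩; rcases h2 with ⟨h2a, h2b⟩
    have : -1 < (n:ℝ) ∧ (n:ℝ) < 1 := by
      constructor <;> nlinarith [hc]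
    have h1 : -1 < n := by exact_mod_cast this.1
    have h2 : n < 1 := by exact_mod_cast this.2
    omega
  rw [hn0] at hre; push_cast at hre; linarith

lemma trig_count {ι : Type*} [DecidableEq ι] (S : Finset ι) (b : ι → ℂ) (n : ι → ℤ) (N : ℤ)
    (hb : ∀ i ∈ S, b i ≠ 0 → |n i| ≤ N) (c : ℝ) (hc : 0 < c)
    (g : ℝ → ℂ)
    (hg : ∀ t, g t = ∑ i ∈ S, b i * Complex.exp (2 * Real.pi * Complex.I * (n i) * t / c))
    (hgne : g ≠ 0) :
    {t : ℝ | t ∈ Set.Ico (0:ℝ) c ∧ g t = 0}.Finite ∧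
      {t : ℝ | t ∈ Set.Ico (0:ℝ) c ∧ g t = 0}.ncard ≤ (2*N).toNat := by
  classical
  set w : ℝ → ℂ := fun t => Complex.exp (2 * Real.pi * Complex.I * t / c) with hw
  have hwne : ∀ t, w t ≠ 0 := fun t => Complex.exp_ne_zero _
  -- N ≥ 0
  have hex : ∃ i ∈ S, b i ≠ 0 := by
    by_contra hall
    push_neg at hall
    apply hgne
    funext t
    rw [hg t]
    refine Finset.sum_eq_zero fun i hi => by rw [hall i hi, zero_mul]
  obtain ⟨i0, hi0S, hi0⟩ := hex
  have hN0 : 0 ≤ N := le_trans (abs_nonneg _) (hb i0 hi0S hi0)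
  set P : Polynomial ℂ := ∑ i ∈ S, Polynomial.C (b i) * Polynomial.X ^ ((n i + N).toNat) with hP
  -- evaluation identity
  have heval : ∀ t, P.eval (w t) = w t ^ N * g t := by
    intro t
    rw [hP, hg t, Polynomial.eval_finset_sum, Finset.mul_sum]
    refine Finset.sum_congr rfl fun i hi => ?_
    simp only [Polynomial.eval_mul, Polynomial.eval_C, Polynomial.eval_pow, Polynomial.eval_X]
    by_cases hbi : b i = 0
    · simp [hbi]
    · have hni : -N ≤ n i := (abs_le.mp (hb i hi hbi)).1
      have hnn : 0 ≤ n i + N := by omega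
      have h1 : w t ^ ((n i + N).toNat) = w t ^ ((n i + N) : ℤ) := by
        rw [← zpow_natCast, Int.toNat_of_nonneg hnn]
      rw [h1, zpow_add₀ (hwne t)]
      have h2 : w t ^ (n i : ℤ) = Complex.exp (2 * Real.pi * Complex.I * (n i) * t / c) := by
        rw [hw]
        rw [← Complex.exp_int_mul]
        ring_nf
      rw [h2]; ring
  -- P ≠ 0
  have hPne : P ≠ 0 := by
    intro hP0
    apply hgne
    funext t
    have := heval t
    rw [hP0, Polynomial.eval_zero] at this
    have hwN : w t ^ N ≠ 0 := zpow_ne_zero _ (hwne t)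
    exact (mul_eq_zero.mp this.symm).resolve_left hwN
  -- degree bound
  have hdeg : P.natDegree ≤ (2*N).toNat := by
    rw [hP]
    refine Polynomial.natDegree_sum_le_of_forall_le _ _ fun i hi => ?_
    by_cases hbi : b i = 0
    · simp [hbi]
    · refine le_trans (Polynomial.natDegree_C_mul_le _ _) ?_
      rw [Polynomial.natDegree_X_pow]
      have := (abs_le.mp (hb i hi hbi)).2
      omega
  -- zero set injects into roots
  set Z := {t : ℝ | t ∈ Set.Ico (0:ℝ) c ∧ g t = 0} with hZ
  have hmap : ∀ t ∈ Z, w t ∈ (P.roots.toFinset : Set ℂ) := by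
    intro t ht
    simp only [Finset.mem_coe, Multiset.mem_toFinset]
    rw [Polynomial.mem_roots hPne]
    rw [Polynomial.IsRoot, heval t, ht.2, mul_zero]
  have hinj : Set.InjOn w Z := (inj_exp c hc).mono fun t ht => ht.1
  have hsub : w '' Z ⊆ (P.roots.toFinset : Set ℂ) := by
    rintro x ⟨t, ht, rfl⟩; exact hmap t ht
  have hfin : Z.Finite :=
    Set.Finite.of_finite_image ((P.roots.toFinset.finite_toSet).subset hsub) hinj
  refine ⟨hfin, ?_⟩
  calc Z.ncard = (w '' Z).ncard := (Set.ncard_image_of_injOn hinj).symm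
    _ ≤ (P.roots.toFinset : Set ℂ).ncard :=
        Set.ncard_le_ncard hsub (P.roots.toFinset.finite_toSet)
    _ = P.roots.toFinset.card := by rw [Set.ncard_coe_finset]
    _ ≤ Multiset.card P.roots := Multiset.toFinset_card_le _
    _ ≤ P.natDegree := Polynomial.card_roots' P
    _ ≤ (2*N).toNat := hdeg

set_option maxHeartbeats 1000000 in
/-- Theorem (average directional number of zero-crossings): for a real band-limited
trigonometric polynomial `v` on `𝕋²` with spectrum in the disk of radius `d`, the
average number of zeros of `v` along the lines of rational slope `p/q` is at most
`2 d √(p² + q²) / q`; equivalently `K_θ ≤ 2d` where `cos θ = q / √(p² + q²)`. -/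
theorem stmt_10 (d : ℝ) (hd : 0 < d) (a : ℤ × ℤ → ℂ)
    (hsupp : ∀ j k : ℤ, d ^ 2 < (j : ℝ) ^ 2 + (k : ℝ) ^ 2 → a (j, k) = 0)
    (hsym : ∀ j k : ℤ, a (-j, -k) = starRingEnd ℂ (a (j, k)))
    (V : ℝ → ℝ → ℂ)
    (hV : V = fun x y : ℝ => ∑ᶠ jk : ℤ × ℤ, a jk *
        Complex.exp (2 * Real.pi * Complex.I * ((jk.1 : ℂ) * (x : ℂ) + (jk.2 : ℂ) * (y : ℂ))))
    (p q : ℤ) (hq : 1 ≤ q) (hcop : Int.gcd p q = 1)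
    (hnz : ∀ s : ℝ, 0 ≤ s → s < 1 →
      (fun t : ℝ => V t (s + t * ((p : ℝ) / (q : ℝ)))) ≠ 0) :
    (∫ s in (0 : ℝ)..1,
        (({t : ℝ | t ∈ Set.Ico (0 : ℝ) 1 ∧ V t (s + t * ((p : ℝ) / (q : ℝ))) = 0}.ncard : ℝ))) ≤
      2 * d * Real.sqrt ((p : ℝ) ^ 2 + (q : ℝ) ^ 2) / (q : ℝ) := by
  classical
  have hq0 : (0:ℝ) < (q:ℝ) := by exact_mod_cast hq
  have hqC : ((q:ℂ)) ≠ 0 := by exact_mod_cast hq0.ne'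
  set M : ℤ := ⌈d⌉ with hM
  set S : Finset (ℤ × ℤ) := Finset.Icc (-M, -M) (M, M) with hSdef
  have hS : ∀ jk : ℤ × ℤ, a jk ≠ 0 → jk ∈ S := by
    rintro ⟨j, k⟩ ha
    have hle : (j:ℝ)^2 + (k:ℝ)^2 ≤ d^2 := by
      by_contra hlt
      exact ha (hsupp j k (lt_of_not_ge hlt))
    have hj : |(j:ℝ)| ≤ d := by
      rw [abs_le]; constructor <;> nlinarith [sq_nonneg ((k:ℝ))]
    have hk : |(k:ℝ)| ≤ d := by
      rw [abs_le]; constructor <;> nlinarith [sq_nonneg ((j:ℝ))]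
    have hdM : d ≤ (M:ℝ) := Int.le_ceil d
    simp only [hSdef, Finset.mem_Icc, Prod.mk_le_mk]
    rw [abs_le] at hj hk
    have h1 : -M ≤ j := by
      have : (-M:ℝ) ≤ (j:ℝ) := by push_cast; linarith [hj.1]
      exact_mod_cast this
    have h2 : -M ≤ k := by
      have : (-M:ℝ) ≤ (k:ℝ) := by push_cast; linarith [hk.1]
      exact_mod_cast this
    have h3 : j ≤ M := by
      have : (j:ℝ) ≤ (M:ℝ) := by linarith [hj.2]
      exact_mod_cast this
    have h4 : k ≤ M := by
      have : (k:ℝ) ≤ (M:ℝ) := by linarith [hk.2]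
      exact_mod_cast this
    exact ⟨⟨h1, h2⟩, h3, h4⟩
  have hVsum : ∀ x y : ℝ, V x y = ∑ jk ∈ S, a jk *
      Complex.exp (2 * Real.pi * Complex.I * ((jk.1 : ℂ) * (x : ℂ) + (jk.2 : ℂ) * (y : ℂ))) := by
    intro x y
    rw [hV]
    refine finsum_eq_finset_sum_of_support_subset _ ?_
    intro jk hjk
    simp only [Function.mem_support] at hjk
    have : a jk ≠ 0 := fun h => hjk (by rw [h, zero_mul])
    exact hS jk this
  -- periodicity in x and y by integer shifts
  have hVx : ∀ (m : ℤ) (x y : ℝ), V (x + m) y = V x y := by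
    intro m x y
    rw [hVsum, hVsum]
    refine Finset.sum_congr rfl fun jk _ => ?_
    have harg : 2 * (Real.pi:ℂ) * Complex.I * ((jk.1 : ℂ) * ((x + m : ℝ):ℂ) + (jk.2 : ℂ) * (y:ℂ))
        = 2 * (Real.pi:ℂ) * Complex.I * ((jk.1 : ℂ) * (x:ℂ) + (jk.2 : ℂ) * (y:ℂ))
          + ((jk.1 * m : ℤ):ℂ) * (2 * (Real.pi:ℂ) * Complex.I) := by
      push_cast; ring
    rw [harg, Complex.exp_add, Complex.exp_int_mul_two_pi_mul_I, mul_one]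
  have hVy : ∀ (m : ℤ) (x y : ℝ), V x (y + m) = V x y := by
    intro m x y
    rw [hVsum, hVsum]
    refine Finset.sum_congr rfl fun jk _ => ?_
    have harg : 2 * (Real.pi:ℂ) * Complex.I * ((jk.1 : ℂ) * (x:ℂ) + (jk.2 : ℂ) * ((y + m : ℝ):ℂ))
        = 2 * (Real.pi:ℂ) * Complex.I * ((jk.1 : ℂ) * (x:ℂ) + (jk.2 : ℂ) * (y:ℂ))
          + ((jk.2 * m : ℤ):ℂ) * (2 * (Real.pi:ℂ) * Complex.I) := by
      push_cast; ring
    rw [harg, Complex.exp_add, Complex.exp_int_mul_two_pi_mul_I, mul_one]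
  -- the trig polynomial along a line of slope p/q
  set N : ℤ := ⌊d * Real.sqrt ((p : ℝ) ^ 2 + (q : ℝ) ^ 2)⌋ with hN
  have hsq : (0:ℝ) < Real.sqrt ((p : ℝ) ^ 2 + (q : ℝ) ^ 2) := by
    apply Real.sqrt_pos.mpr; nlinarith
  have hN0 : 0 ≤ N := Int.le_floor.mpr (by simpa using by positivity)
  have h2N : ((2 * N).toNat : ℝ) ≤ 2 * d * Real.sqrt ((p : ℝ) ^ 2 + (q : ℝ) ^ 2) := by
    have h1 : ((2 * N).toNat : ℝ) = ((2 * N : ℤ) : ℝ) := by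
      norm_cast; omega
    rw [h1]
    push_cast
    have := Int.floor_le (d * Real.sqrt ((p : ℝ) ^ 2 + (q : ℝ) ^ 2))
    rw [← hN] at this
    linarith
  -- extension of the nonvanishing hypothesis to all s
  have hgne : ∀ s : ℝ, (fun t : ℝ => V t (s + t * ((p : ℝ) / (q : ℝ)))) ≠ 0 := by
    intro s h0
    have heq : ∀ t : ℝ, V t (s + t * ((p : ℝ) / (q : ℝ)))
        = V t (Int.fract s + t * ((p : ℝ) / (q : ℝ))) := by
      intro t
      have : s + t * ((p : ℝ) / (q : ℝ))
          = (Int.fract s + t * ((p : ℝ) / (q : ℝ))) + (⌊s⌋ : ℝ) := by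
        rw [Int.fract]; ring
      rw [this, hVy]
    apply hnz (Int.fract s) (Int.fract_nonneg s) (Int.fract_lt_one s)
    funext t
    rw [← heq t]
    exact congrFun h0 t
  -- per-s zero count on [0, q)
  have key : ∀ s : ℝ,
      ({t : ℝ | t ∈ Set.Ico (0:ℝ) (q:ℝ) ∧ V t (s + t * ((p : ℝ) / (q : ℝ))) = 0}).Finite ∧
      ({t : ℝ | t ∈ Set.Ico (0:ℝ) (q:ℝ) ∧ V t (s + t * ((p : ℝ) / (q : ℝ))) = 0}).ncard
        ≤ (2 * N).toNat := by
    intro s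
    refine trig_count S
      (fun jk => a jk * Complex.exp (2 * Real.pi * Complex.I * (jk.2 : ℂ) * (s:ℂ)))
      (fun jk => jk.1 * q + jk.2 * p) N ?_ (q:ℝ) hq0 _ ?_ (hgne s)
    · rintro ⟨j, k⟩ hjk hb
      have ha : a (j, k) ≠ 0 := fun h => hb (by simp [h])
      have hle : (j:ℝ)^2 + (k:ℝ)^2 ≤ d^2 := by
        by_contra hlt
        exact ha (hsupp j k (lt_of_not_ge hlt))
      simp only
      rw [hN]
      refine Int.le_floor.mpr ?_
      rw [Int.cast_abs]
      push_cast
      rw [← Real.sqrt_sq_eq_abs,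
        show d * Real.sqrt ((p:ℝ)^2 + (q:ℝ)^2) = Real.sqrt (d^2 * ((p:ℝ)^2 + (q:ℝ)^2)) by
          rw [Real.sqrt_mul (by positivity), Real.sqrt_sq hd.le]]
      refine Real.sqrt_le_sqrt ?_
      nlinarith [sq_nonneg ((j:ℝ)*(p:ℝ) - (k:ℝ)*(q:ℝ)),
        mul_nonneg (sub_nonneg.mpr hle) (by positivity : (0:ℝ) ≤ (p:ℝ)^2+(q:ℝ)^2)]
    · intro t
      rw [hVsum]
      refine Finset.sum_congr rfl fun ⟨j, k⟩ _ => ?_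
      simp only
      have harg : 2 * (Real.pi:ℂ) * Complex.I *
            ((j : ℂ) * (t : ℂ) + (k : ℂ) * ((s + t * ((p : ℝ) / (q : ℝ)) : ℝ) : ℂ))
          = 2 * Real.pi * Complex.I * (k : ℂ) * (s:ℂ)
            + 2 * Real.pi * Complex.I * ((j * q + k * p : ℤ) : ℂ) * (t:ℂ) / (q:ℂ) := by
        push_cast
        field_simp
        ring
      rw [harg, Complex.exp_add]
      push_cast
      ring
  -- abbreviation for the integrand
  set F : ℝ → ℝ := fun s =>
    (({t : ℝ | t ∈ Set.Ico (0 : ℝ) 1 ∧ V t (s + t * ((p : ℝ) / (q : ℝ))) = 0}.ncard : ℝ))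
    with hF
  -- shifting s by r * p / q corresponds to counting zeros on [r, r+1)
  have hAim : ∀ (s : ℝ) (r : ℤ),
      (fun u : ℝ => u + (r:ℝ)) ''
          {u : ℝ | u ∈ Set.Ico (0:ℝ) 1 ∧ V u ((s + (r:ℝ) * ((p:ℝ)/(q:ℝ))) + u * ((p:ℝ)/(q:ℝ))) = 0}
        = {t : ℝ | t ∈ Set.Ico ((r:ℝ)) ((r:ℝ)+1) ∧ V t (s + t * ((p:ℝ)/(q:ℝ))) = 0} := by
    intro s r
    ext t
    simp only [Set.mem_image, Set.mem_setOf_eq, Set.mem_Ico]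
    constructor
    · rintro ⟨u, ⟨⟨hu0, hu1⟩, hV0⟩, rfl⟩
      refine ⟨⟨by linarith, by linarith⟩, ?_⟩
      calc V (u + (r:ℝ)) (s + (u + (r:ℝ)) * ((p:ℝ)/(q:ℝ)))
          = V u (s + (u + (r:ℝ)) * ((p:ℝ)/(q:ℝ))) := hVx r u _
        _ = 0 := by
            rw [show s + (u + (r:ℝ)) * ((p:ℝ)/(q:ℝ))
                = (s + (r:ℝ) * ((p:ℝ)/(q:ℝ))) + u * ((p:ℝ)/(q:ℝ)) by ring]
            exact hV0
    · rintro ⟨⟨ht0, ht1⟩, hV0⟩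
      refine ⟨t - (r:ℝ), ⟨⟨by linarith, by linarith⟩, ?_⟩, by ring⟩
      have h1 : V ((t - (r:ℝ)) + (r:ℝ)) (s + t * ((p:ℝ)/(q:ℝ)))
          = V (t - (r:ℝ)) (s + t * ((p:ℝ)/(q:ℝ))) := hVx r (t - (r:ℝ)) _
      rw [sub_add_cancel] at h1
      rw [show (s + (r:ℝ) * ((p:ℝ)/(q:ℝ))) + (t - (r:ℝ)) * ((p:ℝ)/(q:ℝ))
          = s + t * ((p:ℝ)/(q:ℝ)) by ring, ← h1]
      exact hV0
  -- pointwise bound on the sum of shifted counts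
  have hptwise : ∀ s : ℝ, ∑ r ∈ Finset.range q.toNat, F (s + (r:ℝ) * ((p:ℝ)/(q:ℝ)))
      ≤ 2 * d * Real.sqrt ((p : ℝ) ^ 2 + (q : ℝ) ^ 2) := by
    intro s
    obtain ⟨hfin, hcard⟩ := key s
    set T : Finset ℝ := hfin.toFinset with hT
    set B : ℕ → Finset ℝ := fun r => T.filter (fun t => (r:ℝ) ≤ t ∧ t < (r:ℝ)+1) with hB
    have hBset : ∀ r : ℕ, r < q.toNat →
        {t : ℝ | t ∈ Set.Ico ((r:ℝ)) ((r:ℝ)+1) ∧ V t (s + t * ((p:ℝ)/(q:ℝ))) = 0}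
          = (B r : Set ℝ) := by
      intro r hr
      ext t
      simp only [hB, Finset.coe_filter, Set.mem_setOf_eq, Set.mem_Ico, hT,
        Set.Finite.mem_toFinset]
      constructor
      · rintro ⟨⟨h0, h1⟩, hV0⟩
        have hrq : ((r:ℝ)) + 1 ≤ (q:ℝ) := by
          have : (r:ℤ) + 1 ≤ q := by omega
          exact_mod_cast this
        exact ⟨⟨⟨by linarith, by linarith⟩, hV0⟩, h0, h1⟩
      · rintro ⟨⟨_, hV0⟩, h0, h1⟩
        exact ⟨⟨h0, h1⟩, hV0⟩
    have hFr : ∀ r : ℕ, r < q.toNat → F (s + (r:ℝ) * ((p:ℝ)/(q:ℝ))) = ((B r).card : ℝ) := by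
      intro r hr
      have h1 := hAim s (r:ℤ)
      have h2 : ((r:ℤ):ℝ) = (r:ℝ) := by push_cast; ring
      rw [h2] at h1
      have h3 : F (s + (r:ℝ) * ((p:ℝ)/(q:ℝ)))
          = ({u : ℝ | u ∈ Set.Ico (0:ℝ) 1 ∧
              V u ((s + (r:ℝ) * ((p:ℝ)/(q:ℝ))) + u * ((p:ℝ)/(q:ℝ))) = 0}.ncard : ℝ) := rfl
      rw [h3]
      congr 1
      rw [← Set.ncard_image_of_injective _ (add_left_injective ((r:ℝ))), h1, hBset r hr,
        Set.ncard_coe_finset]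
    have hdisj : ∀ r1 ∈ Finset.range q.toNat, ∀ r2 ∈ Finset.range q.toNat, r1 ≠ r2 →
        Disjoint (B r1) (B r2) := by
      intro r1 _ r2 _ hne
      rw [Finset.disjoint_left]
      intro t ht1 ht2
      simp only [hB, Finset.mem_filter] at ht1 ht2
      rcases lt_or_gt_of_ne hne with h | h
      · have : (r1:ℝ) + 1 ≤ (r2:ℝ) := by exact_mod_cast h
        linarith [ht1.2.2, ht2.2.1]
      · have : (r2:ℝ) + 1 ≤ (r1:ℝ) := by exact_mod_cast h
        linarith [ht2.2.2, ht1.2.1]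
    calc ∑ r ∈ Finset.range q.toNat, F (s + (r:ℝ) * ((p:ℝ)/(q:ℝ)))
        = ∑ r ∈ Finset.range q.toNat, ((B r).card : ℝ) := by
          refine Finset.sum_congr rfl fun r hr => hFr r (Finset.mem_range.mp hr)
      _ = (((Finset.range q.toNat).biUnion B).card : ℝ) := by
          rw [Finset.card_biUnion hdisj]; push_cast; ring
      _ ≤ (T.card : ℝ) := by
          have : (Finset.range q.toNat).biUnion B ⊆ T := by
            refine Finset.biUnion_subset.mpr fun r _ => Finset.filter_subset _ _
          exact_mod_cast Finset.card_le_card this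
      _ = (({t : ℝ | t ∈ Set.Ico (0:ℝ) (q:ℝ) ∧ V t (s + t * ((p : ℝ) / (q : ℝ))) = 0}).ncard : ℝ) := by
          rw [Set.ncard_eq_toFinset_card _ hfin]
      _ ≤ ((2 * N).toNat : ℝ) := by exact_mod_cast hcard
      _ ≤ 2 * d * Real.sqrt ((p : ℝ) ^ 2 + (q : ℝ) ^ 2) := h2N
  -- F is 1-periodic
  have hFper : Function.Periodic F 1 := by
    intro s
    have : ∀ t : ℝ, V t ((s + 1) + t * ((p:ℝ)/(q:ℝ))) = V t (s + t * ((p:ℝ)/(q:ℝ))) := by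
      intro t
      have := hVy 1 t (s + t * ((p:ℝ)/(q:ℝ)))
      rw [show ((1:ℤ):ℝ) = (1:ℝ) by norm_num] at this
      rw [show (s + 1) + t * ((p:ℝ)/(q:ℝ)) = (s + t * ((p:ℝ)/(q:ℝ))) + 1 by ring, this]
    have hset : {t : ℝ | t ∈ Set.Ico (0:ℝ) 1 ∧ V t ((s+1) + t * ((p:ℝ)/(q:ℝ))) = 0}
        = {t : ℝ | t ∈ Set.Ico (0:ℝ) 1 ∧ V t (s + t * ((p:ℝ)/(q:ℝ))) = 0} := by
      ext t
      rw [Set.mem_setOf_eq, Set.mem_setOf_eq, this t]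
    simp only [hF]
    rw [hset]
  show (∫ s in (0:ℝ)..1, F s) ≤ 2 * d * Real.sqrt ((p : ℝ) ^ 2 + (q : ℝ) ^ 2) / (q : ℝ)
  by_cases hInt : IntervalIntegrable F MeasureTheory.volume 0 1
  · -- F is integrable on every interval of length one
    have hIc : ∀ c : ℝ, IntervalIntegrable F MeasureTheory.volume c (c+1) := by
      intro c
      set m : ℤ := ⌈c⌉ with hm
      have hcm : c ≤ (m:ℝ) := Int.le_ceil c
      have hmc : (m:ℝ) ≤ c + 1 := by
        have := Int.ceil_le_floor_add_one c
        have h2 := Int.floor_le c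
        have : ((m:ℤ):ℝ) ≤ ((⌊c⌋ + 1 : ℤ):ℝ) := by exact_mod_cast this
        push_cast at this
        linarith
      have hper1 : (fun x : ℝ => F (x + (-(m:ℝ)))) = F := by
        funext x
        have := hFper.sub_int_mul_eq (x := x) m
        rw [mul_one] at this
        rw [show x + (-(m:ℝ)) = x - (m:ℝ) by ring, this]
      have hper2 : (fun x : ℝ => F (x + ((1:ℝ)-(m:ℝ)))) = F := by
        funext x
        have := (hFper.sub_int_mul_eq (x := x) (m - 1))
        rw [mul_one] at this
        push_cast at this
        rw [show x + ((1:ℝ)-(m:ℝ)) = x - ((m:ℝ) - 1) by ring, this]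
      have h1 : IntervalIntegrable F MeasureTheory.volume c (m:ℝ) := by
        have hsub : IntervalIntegrable F MeasureTheory.volume (c - (m:ℝ) + 1) 1 := by
          refine hInt.mono_set ?_
          rw [Set.uIcc_of_le (by linarith), Set.uIcc_of_le (by norm_num)]
          exact Set.Icc_subset_Icc (by linarith) (by norm_num)
        have h5 := hsub.comp_add_right ((1:ℝ)-(m:ℝ))
        rw [hper2] at h5
        rw [show c - (m:ℝ) + 1 - ((1:ℝ)-(m:ℝ)) = c by ring,
          show (1:ℝ) - ((1:ℝ)-(m:ℝ)) = (m:ℝ) by ring] at h5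
        exact h5
      have h2 : IntervalIntegrable F MeasureTheory.volume (m:ℝ) (c+1) := by
        have hsub : IntervalIntegrable F MeasureTheory.volume 0 (c + 1 - (m:ℝ)) := by
          refine hInt.mono_set ?_
          rw [Set.uIcc_of_le (by linarith), Set.uIcc_of_le (by norm_num)]
          exact Set.Icc_subset_Icc (by norm_num) (by linarith)
        have h5 := hsub.comp_add_right (-(m:ℝ))
        rw [hper1] at h5
        rw [show (0:ℝ) - -(m:ℝ) = (m:ℝ) by ring,
          show c + 1 - (m:ℝ) - -(m:ℝ) = c + 1 by ring] at h5
        exact h5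
      exact h1.trans h2
    have hshiftInt : ∀ c : ℝ, IntervalIntegrable (fun s => F (s + c))
        MeasureTheory.volume 0 1 := by
      intro c
      have h5 := (hIc c).comp_add_right c
      rw [show c - c = (0:ℝ) by ring, show c + 1 - c = (1:ℝ) by ring] at h5
      exact h5
    have hshiftEq : ∀ c : ℝ, (∫ s in (0:ℝ)..1, F (s + c)) = ∫ s in (0:ℝ)..1, F s := by
      intro c
      rw [intervalIntegral.integral_comp_add_right]
      have := hFper.intervalIntegral_add_eq c 0
      simpa [zero_add, add_comm] using this
    have hsumInt : IntervalIntegrable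
        (fun s => ∑ r ∈ Finset.range q.toNat, F (s + (r:ℝ) * ((p:ℝ)/(q:ℝ))))
        MeasureTheory.volume 0 1 := by
      have h := IntervalIntegrable.sum (μ := MeasureTheory.volume) (a := (0:ℝ)) (b := (1:ℝ))
        (Finset.range q.toNat)
        (f := fun (r : ℕ) (s : ℝ) => F (s + (r:ℝ) * ((p:ℝ)/(q:ℝ))))
        (fun r _ => hshiftInt _)
      have heq : (∑ r ∈ Finset.range q.toNat, fun (s : ℝ) => F (s + (r:ℝ) * ((p:ℝ)/(q:ℝ))))
          = fun (s : ℝ) => ∑ r ∈ Finset.range q.toNat, F (s + (r:ℝ) * ((p:ℝ)/(q:ℝ))) := by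
        funext s
        simp [Finset.sum_apply]
      rw [heq] at h
      exact h
    have hmain : (q:ℝ) * (∫ s in (0:ℝ)..1, F s)
        ≤ 2 * d * Real.sqrt ((p : ℝ) ^ 2 + (q : ℝ) ^ 2) := by
      have h1 : (∫ s in (0:ℝ)..1, ∑ r ∈ Finset.range q.toNat, F (s + (r:ℝ) * ((p:ℝ)/(q:ℝ))))
          = ∑ r ∈ Finset.range q.toNat, ∫ s in (0:ℝ)..1, F (s + (r:ℝ) * ((p:ℝ)/(q:ℝ))) :=
        intervalIntegral.integral_finset_sum
          (f := fun (r : ℕ) (s : ℝ) => F (s + (r:ℝ) * ((p:ℝ)/(q:ℝ))))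
          fun r _ => hshiftInt _
      have h2 : ∑ r ∈ Finset.range q.toNat, (∫ s in (0:ℝ)..1, F (s + (r:ℝ) * ((p:ℝ)/(q:ℝ))))
          = (q:ℝ) * ∫ s in (0:ℝ)..1, F s := by
        have h2a : ∑ r ∈ Finset.range q.toNat, (∫ s in (0:ℝ)..1, F (s + (r:ℝ) * ((p:ℝ)/(q:ℝ))))
            = ∑ _r ∈ Finset.range q.toNat, ∫ s in (0:ℝ)..1, F s :=
          Finset.sum_congr rfl fun r _ => hshiftEq ((r:ℝ) * ((p:ℝ)/(q:ℝ)))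
        rw [h2a, Finset.sum_const, Finset.card_range, nsmul_eq_mul]
        congr 1
        have : ((q.toNat : ℤ) : ℝ) = (q:ℝ) := by
          congr 1; omega
        exact_mod_cast this
      have h3 : (∫ s in (0:ℝ)..1, ∑ r ∈ Finset.range q.toNat, F (s + (r:ℝ) * ((p:ℝ)/(q:ℝ))))
          ≤ ∫ _ in (0:ℝ)..1, 2 * d * Real.sqrt ((p : ℝ) ^ 2 + (q : ℝ) ^ 2) := by
        refine intervalIntegral.integral_mono_on (by norm_num) hsumInt
          intervalIntegrable_const fun s _ => hptwise s
      rw [intervalIntegral.integral_const, smul_eq_mul] at h3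
      rw [h1, h2] at h3
      linarith
    rw [le_div_iff₀ hq0]
    linarith [hmain]
  · rw [intervalIntegral.integral_undef hInt]
    positivity
end

section
/- Let m ≥ 1 and let S ⊂ ℤ^m be a finite set with 0 ∉ S and S = −S. Let c : S → ℂ satisfy c(−k) = conj(c(k)) for all k ∈ S, so that v(x) = Σ_{k∈S} c(k)·e^{2πi⟨k,x⟩} defines a real-valued ℤ^m-periodic function on ℝ^m. Then for every x0 ∈ ℝ^m there exists x ∈ ℝ^m with ‖x − x0‖ ≤ (1/2)·Σ_{k∈S} 1/(4‖k‖) and v(x) = 0; that is, v has at least one zero in every closed ball of diameter Σ_{k∈S} 1/(4‖k‖). -/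
set_option maxHeartbeats 1000000
open Finset
namespace KO
variable {m : ℕ}

noncomputable def ip (k : Fin m → ℤ) (x : Fin m → ℝ) : ℝ := ∑ i, (k i : ℝ) * x i
noncomputable def nrm (k : Fin m → ℤ) : ℝ := Real.sqrt (∑ i, (k i : ℝ) ^ 2)
noncomputable def E (k : Fin m → ℤ) (x : Fin m → ℝ) : ℂ :=
  Complex.exp (2 * Real.pi * Complex.I * ((ip k x : ℝ) : ℂ))
noncomputable def D (x y : Fin m → ℝ) : ℝ := Real.sqrt (∑ i, (x i - y i) ^ 2)

lemma D_eq_dist (x y : Fin m → ℝ) :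
    D x y = dist ((WithLp.equiv 2 (Fin m → ℝ)).symm x) ((WithLp.equiv 2 (Fin m → ℝ)).symm y) := by
  rw [EuclideanSpace.dist_eq]
  simp [D, Real.dist_eq, sq_abs]

lemma D_self (x : Fin m → ℝ) : D x x = 0 := by simp [D]

lemma D_triangle (x y z : Fin m → ℝ) : D x z ≤ D x y + D y z := by
  rw [D_eq_dist, D_eq_dist, D_eq_dist]; exact dist_triangle _ _ _

lemma ip_neg (k : Fin m → ℤ) (x : Fin m → ℝ) : ip (-k) x = -ip k x := by
  simp [ip, Finset.sum_neg_distrib]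

lemma nrm_neg (k : Fin m → ℤ) : nrm (-k) = nrm k := by simp [nrm]

lemma nrm_pos {k : Fin m → ℤ} (hk : k ≠ 0) : 0 < nrm k := by
  apply Real.sqrt_pos.2
  obtain ⟨i, hi⟩ := Function.ne_iff.mp hk
  apply Finset.sum_pos' (fun j _ => sq_nonneg _) ⟨i, Finset.mem_univ i, ?_⟩
  have : (k i : ℝ) ≠ 0 := by exact_mod_cast hi
  positivity

lemma conj_E (k : Fin m → ℤ) (x : Fin m → ℝ) :
    starRingEnd ℂ (E k x) = E (-k) x := by
  rw [E, E, ← Complex.exp_conj]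
  congr 1
  rw [ip_neg]
  push_cast
  rw [map_mul, map_mul, map_mul, Complex.conj_I, Complex.conj_ofReal, Complex.conj_ofReal, map_ofNat]
  ring

lemma real_sum (S : Finset (Fin m → ℤ)) (hsym : ∀ k, k ∈ S ↔ -k ∈ S)
    (c : (Fin m → ℤ) → ℂ) (hc : ∀ k ∈ S, c (-k) = starRingEnd ℂ (c k)) (x : Fin m → ℝ) :
    starRingEnd ℂ (∑ k ∈ S, c k * E k x) = ∑ k ∈ S, c k * E k x := by
  rw [map_sum]
  refine Finset.sum_equiv (Equiv.neg _) (fun k => (hsym k)) (fun k hk => ?_)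
  simp only [Equiv.neg_apply, map_mul, conj_E, hc k hk]

lemma ip_shift (j : Fin m → ℤ) (x δ : Fin m → ℝ) (t : ℝ) :
    ip j (fun i => x i + t * δ i) = ip j x + t * ip j δ := by
  simp only [ip, mul_add, Finset.sum_add_distrib, Finset.mul_sum]
  congr 1
  exact Finset.sum_congr rfl (fun i _ => by ring)

lemma E_shift (j : Fin m → ℤ) (x δ : Fin m → ℝ) (t : ℝ) :
    E j (fun i => x i + t * δ i) =
      E j x * Complex.exp (2 * Real.pi * Complex.I * ((t * ip j δ : ℝ) : ℂ)) := by
  rw [E, E, ip_shift, ← Complex.exp_add]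
  congr 1
  push_cast
  ring

lemma two_cos_key (a : ℝ) :
    Complex.exp (2 * Real.pi * Complex.I * (((1:ℝ)/2 * a : ℝ) : ℂ)) +
      Complex.exp (2 * Real.pi * Complex.I * ((-(1:ℝ)/2 * a : ℝ) : ℂ)) =
    ((2 * Real.cos (Real.pi * a) : ℝ) : ℂ) := by
  push_cast [Complex.ofReal_cos]
  rw [show ((2:ℂ) * Real.pi * Complex.I * (1/2 * a)) = (Real.pi * a) * Complex.I by ring,
      show ((2:ℂ) * Real.pi * Complex.I * (-1/2 * a)) = -((Real.pi * a)) * Complex.I by ring]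
  rw [← Complex.two_cos]

lemma main (S : Finset (Fin m → ℤ)) :
    (0 : Fin m → ℤ) ∉ S → (∀ k, k ∈ S ↔ -k ∈ S) →
    ∀ c : (Fin m → ℤ) → ℂ, (∀ k ∈ S, c (-k) = starRingEnd ℂ (c k)) →
    ∀ x0 : Fin m → ℝ, ∃ x : Fin m → ℝ,
      D x x0 ≤ ∑ k ∈ S, 1 / (8 * nrm k) ∧ (∑ k ∈ S, c k * E k x) = 0 := by
  induction S using Finset.strongInduction with
  | _ S IH =>
  intro h0 hsym c hc x0
  rcases S.eq_empty_or_nonempty with rfl | ⟨k, hk⟩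
  · exact ⟨x0, by simp [D_self], by simp⟩
  have hknegS : -k ∈ S := (hsym k).1 hk
  have hkne0 : k ≠ 0 := fun h => h0 (h ▸ hk)
  have hkneq : k ≠ -k := by
    intro h
    apply hkne0
    funext i
    have h2 := congrFun h i
    simp only [Pi.neg_apply] at h2
    simp only [Pi.zero_apply]
    omega
  set nk := nrm k with hnk_def
  have hnk : 0 < nk := nrm_pos hkne0
  set δ : Fin m → ℝ := fun i => (k i : ℝ) / (2 * nk ^ 2) with hδ_def
  have hsumsq : ∑ i, ((k i : ℝ)) ^ 2 = nk ^ 2 := (Real.sq_sqrt (by positivity)).symm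
  have hnkne : nk ≠ 0 := ne_of_gt hnk
  have hipkδ : ip k δ = 1 / 2 := by
    have h1 : ip k δ = ∑ i, ((k i : ℝ) ^ 2 / (2 * nk ^ 2)) := by
      rw [ip]
      exact Finset.sum_congr rfl (fun i _ => by simp only [hδ_def]; ring)
    rw [h1, ← Finset.sum_div, hsumsq]
    field_simp
  have hδnorm : Real.sqrt (∑ i, δ i ^ 2) = 1 / (2 * nk) := by
    have h2 : ∑ i, δ i ^ 2 = (1 / (2 * nk)) ^ 2 := by
      have h1 : ∑ i, δ i ^ 2 = ∑ i, ((k i : ℝ) ^ 2 / (2 * nk ^ 2) ^ 2) :=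
        Finset.sum_congr rfl (fun i _ => by simp only [hδ_def]; ring)
      rw [h1, ← Finset.sum_div, hsumsq]
      field_simp
    rw [h2, Real.sqrt_sq (by positivity)]
  -- distance of a t-shift
  have hDshift : ∀ (y : Fin m → ℝ) (t : ℝ), D (fun i => y i + t * δ i) y = |t| * (1 / (2 * nk)) := by
    intro y t
    rw [D]
    have : ∑ i, ((y i + t * δ i) - y i) ^ 2 = t ^ 2 * ∑ i, δ i ^ 2 := by
      rw [Finset.mul_sum]
      exact Finset.sum_congr rfl (fun i _ => by ring)
    rw [this, Real.sqrt_mul (sq_nonneg t), Real.sqrt_sq_eq_abs, hδnorm]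
  -- new spectrum and coefficients
  set S' : Finset (Fin m → ℤ) := (S.erase k).erase (-k) with hS'_def
  set c' : (Fin m → ℤ) → ℂ := fun j => c j * ((2 * Real.cos (Real.pi * ip j δ) : ℝ) : ℂ) with hc'_def
  have hS'sub : S' ⊂ S :=
    Finset.ssubset_of_subset_of_ssubset (Finset.erase_subset _ _) (Finset.erase_ssubset hk)
  have hS'0 : (0 : Fin m → ℤ) ∉ S' := fun h => h0 (hS'sub.1 h)
  have hS'sym : ∀ j, j ∈ S' ↔ -j ∈ S' := by
    intro j
    simp only [hS'_def, Finset.mem_erase]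
    constructor
    · rintro ⟨h1, h2, h3⟩
      exact ⟨fun h => h2 (neg_injective h), fun h => h1 (by rw [← h, neg_neg]), (hsym j).1 h3⟩
    · rintro ⟨h1, h2, h3⟩
      refine ⟨fun h => h2 (by rw [h, neg_neg]), fun h => h1 (by rw [h]), ?_⟩
      have h4 := (hsym (-j)).1 h3
      rwa [neg_neg] at h4
  have hc' : ∀ j ∈ S', c' (-j) = starRingEnd ℂ (c' j) := by
    intro j hj
    have hjS : j ∈ S := hS'sub.1 hj
    simp only [hc'_def, map_mul]
    rw [hc j hjS, ip_neg, Complex.conj_ofReal]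
    norm_num
  -- key per-term identity
  have hkey : ∀ (j : Fin m → ℤ) (x : Fin m → ℝ),
      c j * E j (fun i => x i + (1:ℝ)/2 * δ i) + c j * E j (fun i => x i + (-(1:ℝ)/2) * δ i)
        = c' j * E j x := by
    intro j x
    rw [E_shift, E_shift, hc'_def]
    have := two_cos_key (ip j δ)
    calc c j * (E j x * Complex.exp (2 * Real.pi * Complex.I * (((1:ℝ)/2 * ip j δ : ℝ) : ℂ)))
          + c j * (E j x * Complex.exp (2 * Real.pi * Complex.I * ((-(1:ℝ)/2 * ip j δ : ℝ) : ℂ)))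
        = c j * E j x * (Complex.exp (2 * Real.pi * Complex.I * (((1:ℝ)/2 * ip j δ : ℝ) : ℂ))
            + Complex.exp (2 * Real.pi * Complex.I * ((-(1:ℝ)/2 * ip j δ : ℝ) : ℂ))) := by ring
      _ = c j * ((2 * Real.cos (Real.pi * ip j δ) : ℝ) : ℂ) * E j x := by rw [this]; ring
  -- c' vanishes at ±k
  have hcos0 : Real.cos (Real.pi * ip k δ) = 0 := by
    rw [hipkδ, show Real.pi * (1/2) = Real.pi / 2 by ring, Real.cos_pi_div_two]
  have hc'k : c' k = 0 := by
    simp only [hc'_def]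
    rw [hcos0]
    norm_num
  have hc'negk : c' (-k) = 0 := by
    have : Real.cos (Real.pi * ip (-k) δ) = 0 := by
      rw [ip_neg, hipkδ, show Real.pi * -(1/2) = -(Real.pi / 2) by ring, Real.cos_neg,
        Real.cos_pi_div_two]
    simp only [hc'_def]
    rw [this]
    norm_num
  -- sum identity
  have hsumid : ∀ x : Fin m → ℝ,
      (∑ j ∈ S, c j * E j (fun i => x i + (1:ℝ)/2 * δ i))
        + (∑ j ∈ S, c j * E j (fun i => x i + (-(1:ℝ)/2) * δ i))
      = ∑ j ∈ S', c' j * E j x := by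
    intro x
    rw [← Finset.sum_add_distrib]
    have h1 : ∑ j ∈ S, (c j * E j (fun i => x i + (1:ℝ)/2 * δ i)
        + c j * E j (fun i => x i + (-(1:ℝ)/2) * δ i)) = ∑ j ∈ S, c' j * E j x :=
      Finset.sum_congr rfl (fun j _ => hkey j x)
    rw [h1, hS'_def]
    rw [Finset.sum_erase _ (by rw [hc'negk]; ring), Finset.sum_erase _ (by rw [hc'k]; ring)]
  -- apply induction hypothesis
  obtain ⟨x1, hx1d, hx1z⟩ := IH S' hS'sub hS'0 hS'sym c' hc' x0
  -- the real-valued function along the segment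
  set F : ℝ → ℝ := fun t => (∑ j ∈ S, c j * E j (fun i => x1 i + t * δ i)).re with hF_def
  have hreal : ∀ y : Fin m → ℝ, ((∑ j ∈ S, c j * E j y) : ℂ) = ((∑ j ∈ S, c j * E j y).re : ℂ) :=
    fun y => (Complex.conj_eq_iff_re.mp (real_sum S hsym c hc y)).symm
  have hFcont : Continuous F := by
    apply Complex.continuous_re.comp
    apply continuous_finset_sum
    intro j _
    apply Continuous.mul continuous_const
    unfold E ip
    fun_prop
  have hFsum : F ((1:ℝ)/2) + F (-(1:ℝ)/2) = 0 := by
    have h2 := hsumid x1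
    rw [hx1z] at h2
    have h3 : (∑ j ∈ S, c j * E j (fun i => x1 i + (1:ℝ)/2 * δ i)).re
        + (∑ j ∈ S, c j * E j (fun i => x1 i + (-(1:ℝ)/2) * δ i)).re = 0 := by
      rw [← Complex.add_re, h2, Complex.zero_re]
    exact h3
  -- IVT
  have hIVT : ∃ t ∈ Set.Icc (-(1:ℝ)/2) (1/2), F t = 0 := by
    rcases le_or_gt 0 (F ((1:ℝ)/2)) with h | h
    · have h0mem : (0:ℝ) ∈ Set.Icc (F (-(1:ℝ)/2)) (F ((1:ℝ)/2)) :=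
        ⟨by linarith, by linarith⟩
      obtain ⟨t, ht, hFt⟩ := intermediate_value_Icc (by norm_num : -(1:ℝ)/2 ≤ (1:ℝ)/2)
        (hFcont.continuousOn) h0mem
      exact ⟨t, ht, hFt⟩
    · have h0mem : (0:ℝ) ∈ Set.Icc (F ((1:ℝ)/2)) (F (-(1:ℝ)/2)) :=
        ⟨by linarith, by linarith⟩
      obtain ⟨t, ht, hFt⟩ := intermediate_value_Icc' (by norm_num : -(1:ℝ)/2 ≤ (1:ℝ)/2)
        (hFcont.continuousOn) h0mem
      exact ⟨t, ht, hFt⟩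
  obtain ⟨t, ⟨htl, htr⟩, hFt⟩ := hIVT
  refine ⟨fun i => x1 i + t * δ i, ?_, ?_⟩
  · -- distance bound
    have habs : |t| ≤ 1/2 := abs_le.2 ⟨by linarith, htr⟩
    have hd1 : D (fun i => x1 i + t * δ i) x1 = |t| * (1/(2*nk)) := hDshift x1 t
    have htri := D_triangle (fun i => x1 i + t * δ i) x1 x0
    have hstep : |t| * (1/(2*nk)) ≤ 1/(4*nk) := by
      have h4 : |t| * (1/(2*nk)) ≤ (1/2) * (1/(2*nk)) :=
        mul_le_mul_of_nonneg_right habs (by positivity)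
      have h5 : ((1:ℝ)/2) * (1/(2*nk)) = 1/(4*nk) := by
        field_simp
        ring
      linarith
    -- sum splitting
    have hnegk_mem : -k ∈ S.erase k := Finset.mem_erase.2 ⟨fun h => hkneq h.symm, hknegS⟩
    have hsplit : ∑ j ∈ S, 1/(8 * nrm j)
        = (∑ j ∈ S', 1/(8 * nrm j)) + 1/(8*nk) + 1/(8*nk) := by
      rw [← Finset.sum_erase_add S _ hk, ← Finset.sum_erase_add (S.erase k) _ hnegk_mem]
      rw [nrm_neg, ← hnk_def, ← hS'_def]
    calc D (fun i => x1 i + t * δ i) x0 ≤ D (fun i => x1 i + t * δ i) x1 + D x1 x0 := htri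
      _ ≤ 1/(4*nk) + ∑ j ∈ S', 1/(8 * nrm j) := by
          rw [hd1]; exact add_le_add hstep hx1d
      _ = ∑ j ∈ S, 1/(8 * nrm j) := by rw [hsplit]; ring
  · -- zero value
    have hre : (∑ j ∈ S, c j * E j (fun i => x1 i + t * δ i)).re = 0 := hFt
    rw [hreal, hre]
    exact Complex.ofReal_zero

end KO

/-- Theorem (Kozma–Oravecz): a real trigonometric polynomial on `𝕋^m` with finite
symmetric spectrum `S` not containing `0` has a zero in every closed ball of diameter
`∑_{k ∈ S} 1/(4‖k‖)`. -/
theorem stmt_11 (m : ℕ) (hm : 1 ≤ m) (S : Finset (Fin m → ℤ))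
    (h0 : (0 : Fin m → ℤ) ∉ S) (hsym : ∀ k, k ∈ S ↔ -k ∈ S)
    (c : (Fin m → ℤ) → ℂ) (hc : ∀ k ∈ S, c (-k) = starRingEnd ℂ (c k))
    (v : (Fin m → ℝ) → ℂ)
    (hv : v = fun x : Fin m → ℝ => ∑ k ∈ S, c k *
        Complex.exp (2 * Real.pi * Complex.I * ((∑ i, (k i : ℝ) * x i : ℝ) : ℂ)))
    (x0 : Fin m → ℝ) :
    ∃ x : Fin m → ℝ,
      Real.sqrt (∑ i, (x i - x0 i) ^ 2) ≤
        (1 / 2) * ∑ k ∈ S, 1 / (4 * Real.sqrt (∑ i, (k i : ℝ) ^ 2)) ∧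
      v x = 0 := by
  obtain ⟨x, hd, hz⟩ := KO.main S h0 hsym c hc x0
  refine ⟨x, ?_, ?_⟩
  · have h1 : (1/2 : ℝ) * ∑ k ∈ S, 1 / (4 * Real.sqrt (∑ i, (k i : ℝ) ^ 2))
        = ∑ k ∈ S, 1 / (8 * KO.nrm k) := by
      rw [Finset.mul_sum]
      exact Finset.sum_congr rfl (fun k _ => by rw [KO.nrm]; ring)
    rw [h1]
    exact hd
  · simp only [hv]
    exact hz
end

section
/- (Orthant-counting lemma.) Let 1 ≤ r ≤ N and let V be an r-dimensional linear subspace of ℝ^N that is in general position, meaning that for every set s of r coordinates the restriction map V → ℝ^s, v ↦ (v(i))_{i∈s}, is injective. Then the number of sign vectors ε ∈ {−1,+1}^N for which there exists v ∈ V with ε(i)·v(i) > 0 for every i equals 2·Σ_{i=0}^{r−1} C(N−1, i), where C(·,·) is the binomial coefficient. In other words, V passes through the interiors of exactly 2·Σ_{i=0}^{r−1} C(N−1, i) of the 2^N open orthants of ℝ^N. -/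
open Finset Module

/-- The set of sign vectors realized by a subspace. -/
def RS {n : ℕ} (V : Submodule ℝ (Fin n → ℝ)) : Set (Fin n → Bool) :=
  {ε | ∃ v ∈ V, ∀ i, 0 < (if ε i then (1:ℝ) else -1) * v i}

/-- Kernel-style general position condition. -/
def GP {n : ℕ} (V : Submodule ℝ (Fin n → ℝ)) (r : ℕ) : Prop :=
  ∀ s : Finset (Fin n), s.card = r → ∀ v ∈ V, (∀ i ∈ s, v i = 0) → v = 0

lemma gp_of_inj {n r : ℕ} (V : Submodule ℝ (Fin n → ℝ))
    (hgen : ∀ s : Finset (Fin n), s.card = r →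
      Function.Injective fun v : V => fun i : s => (v : Fin n → ℝ) i) :
    GP V r := by
  intro s hs v hv hz
  have := hgen s hs (a₁ := ⟨v, hv⟩) (a₂ := 0) (by
    funext i
    exact hz i.1 i.2)
  simpa [Subtype.ext_iff] using this

/-- Perturbation lemma: strict sign conditions are stable. -/
lemma perturb {n : ℕ} (ε : Fin n → Bool) (v u : Fin n → ℝ)
    (h : ∀ i, 0 < (if ε i then (1:ℝ) else -1) * v i) :
    ∃ δ > (0:ℝ), ∀ t : ℝ, |t| < δ →
      ∀ i, 0 < (if ε i then (1:ℝ) else -1) * (v i + t * u i) := by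
  set S : Set (Fin n → ℝ) := {x | ∀ i, 0 < (if ε i then (1:ℝ) else -1) * x i} with hS
  have hopen : IsOpen S := by
    have : S = ⋂ i, {x : Fin n → ℝ | 0 < (if ε i then (1:ℝ) else -1) * x i} := by
      ext x; simp [hS, Set.mem_iInter]
    rw [this]
    exact isOpen_iInter_of_finite fun i =>
      isOpen_lt continuous_const (continuous_const.mul (continuous_apply i))
  have hc : Continuous fun t : ℝ => v + t • u := by continuity
  have hvS : (fun t : ℝ => v + t • u) 0 ∈ S := by
    simp only [zero_smul, add_zero]
    exact h
  have hpre : IsOpen ((fun t : ℝ => v + t • u) ⁻¹' S) := hopen.preimage hc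
  rcases Metric.isOpen_iff.1 hpre 0 hvS with ⟨δ, hδ, hball⟩
  refine ⟨δ, hδ, fun t ht i => ?_⟩
  have : t ∈ Metric.ball (0:ℝ) δ := by simpa [Real.dist_eq] using ht
  have := hball this
  simpa using this i

lemma ext_lastCases {n : ℕ} (ε₁ ε₂ : Fin (n+1) → Bool)
    (h1 : ε₁ ∘ Fin.castSucc = ε₂ ∘ Fin.castSucc) (h2 : ε₁ (Fin.last n) = ε₂ (Fin.last n)) :
    ε₁ = ε₂ := by
  funext i
  induction i using Fin.lastCases with
  | last => exact h2
  | cast j => exact congrFun h1 j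

/-- Binomial sum recursion. -/
lemma sum_choose_rec (M q : ℕ) :
    ∑ i ∈ range (q+1), Nat.choose (M+1) i =
      ∑ i ∈ range (q+1), Nat.choose M i + ∑ i ∈ range q, Nat.choose M i := by
  induction q with
  | zero => simp
  | succ q ih =>
      rw [Finset.sum_range_succ, ih, Nat.choose_succ_succ' M q,
        Finset.sum_range_succ (fun i => Nat.choose M i) (q+1),
        Finset.sum_range_succ (fun i => Nat.choose M i) q]
      ring

section Step

variable {N : ℕ}

/-- projection forgetting last coordinate -/
noncomputable def pr (N : ℕ) : (Fin (N+1) → ℝ) →ₗ[ℝ] (Fin N → ℝ) :=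
  LinearMap.funLeft ℝ ℝ Fin.castSucc

@[simp] lemma pr_apply (v : Fin (N+1) → ℝ) (i : Fin N) : pr N v i = v i.castSucc := rfl

variable (V : Submodule ℝ (Fin (N+1) → ℝ)) {r : ℕ}

/-- if v ∈ V vanishes on all non-last coordinates then v = 0 -/
lemma pr_inj_on (hgp : GP V r) (hrN : r ≤ N) :
    ∀ v ∈ V, pr N v = 0 → v = 0 := by
  intro v hv hz
  obtain ⟨s, hsub, hcard⟩ := Finset.exists_subset_card_eq
    (s := (Finset.univ : Finset (Fin (N+1))).erase (Fin.last N)) (n := r)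
    (by simpa using hrN)
  refine hgp s hcard v hv fun i hi => ?_
  have hne : i ≠ Fin.last N := Finset.ne_of_mem_erase (hsub hi)
  obtain ⟨j, rfl⟩ := Fin.exists_castSucc_eq.2 hne
  exact congrFun hz j

lemma finrank_map_pr (hgp : GP V r) (hrN : r ≤ N) (hdim : finrank ℝ V = r) :
    finrank ℝ (V.map (pr N)) = r := by
  have hinj : Function.Injective ((pr N).domRestrict V) := by
    rw [injective_iff_map_eq_zero]
    intro v hv
    have hz : pr N (v : Fin (N+1) → ℝ) = 0 := hv
    have := pr_inj_on V hgp hrN v v.2 hz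
    exact Subtype.ext this
  have h1 : finrank ℝ (LinearMap.range ((pr N).domRestrict V)) = finrank ℝ V :=
    LinearMap.finrank_range_of_inj hinj
  rw [LinearMap.range_domRestrict] at h1
  rw [h1, hdim]


lemma gp_map_pr (hgp : GP V r) : GP (V.map (pr N)) r := by
  intro s hs u hu hz
  obtain ⟨v, hv, rfl⟩ := hu
  have hcard : (s.map Fin.castSuccEmb).card = r := by simpa using hs
  have hv0 : v = 0 := by
    refine hgp _ hcard v hv fun i hi => ?_
    obtain ⟨j, hj, rfl⟩ := Finset.mem_map.1 hi
    exact hz j hj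
  simp [hv0]

lemma exists_last_ne_zero (hgp : GP V r) (hr : 1 ≤ r) (hrN : r ≤ N)
    (hdim : finrank ℝ V = r) :
    ∃ u ∈ V, u (Fin.last N) ≠ 0 := by
  by_contra hcon
  push_neg at hcon
  obtain ⟨t, hsub, hcard⟩ := Finset.exists_subset_card_eq
    (s := (Finset.univ : Finset (Fin (N+1))).erase (Fin.last N)) (n := r-1)
    (by simp; omega)
  have hlast : Fin.last N ∉ t := fun h => (Finset.mem_erase.1 (hsub h)).1 rfl
  -- map into coordinates t is injective on V
  set F : V →ₗ[ℝ] ({i // i ∈ t} → ℝ) :=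
    (LinearMap.funLeft ℝ ℝ (Subtype.val : {i // i ∈ t} → Fin (N+1))).comp V.subtype with hF
  have hinj : Function.Injective F := by
    rw [injective_iff_map_eq_zero]
    intro v hv
    have hz : ∀ i ∈ t, (v : Fin (N+1) → ℝ) i = 0 := fun i hi => congrFun hv ⟨i, hi⟩
    have hcard' : (insert (Fin.last N) t).card = r := by
      rw [Finset.card_insert_of_notMem hlast, hcard]; omega
    refine Subtype.ext (hgp _ hcard' v v.2 fun i hi => ?_)
    rcases Finset.mem_insert.1 hi with rfl | hi
    · exact hcon v v.2
    · exact hz i hi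
  have hle : finrank ℝ V ≤ finrank ℝ ({i // i ∈ t} → ℝ) :=
    LinearMap.finrank_le_finrank_of_injective (f := F) hinj
  rw [hdim, Module.finrank_fintype_fun_eq_card, Fintype.card_coe, hcard] at hle
  omega

/-- the slice submodule -/
noncomputable def KK (V : Submodule ℝ (Fin (N+1) → ℝ)) : Submodule ℝ (Fin (N+1) → ℝ) :=
  V ⊓ LinearMap.ker (LinearMap.proj (R := ℝ) (φ := fun _ : Fin (N+1) => ℝ) (Fin.last N))

lemma mem_KK {v : Fin (N+1) → ℝ} : v ∈ KK V ↔ v ∈ V ∧ v (Fin.last N) = 0 := by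
  simp [KK]

lemma KK_le : KK V ≤ V := inf_le_left

lemma finrank_KK (hgp : GP V r) (hr : 1 ≤ r) (hrN : r ≤ N) (hdim : finrank ℝ V = r) :
    finrank ℝ (KK V) = r - 1 := by
  set f : V →ₗ[ℝ] ℝ :=
    (LinearMap.proj (R := ℝ) (φ := fun _ : Fin (N+1) => ℝ) (Fin.last N)).comp V.subtype with hf
  have hrange : LinearMap.range f = ⊤ := by
    obtain ⟨u, hu, hune⟩ := exists_last_ne_zero V hgp hr hrN hdim
    rcases eq_bot_or_eq_top (LinearMap.range f) with hb | ht
    · exfalso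
      have : f ⟨u, hu⟩ = 0 := by
        have : f ⟨u, hu⟩ ∈ LinearMap.range f := LinearMap.mem_range_self f _
        rwa [hb, Submodule.mem_bot] at this
      exact hune this
    · exact ht
  have hrn := LinearMap.finrank_range_add_finrank_ker f
  rw [hrange, finrank_top, Module.finrank_self, hdim] at hrn
  have hker : finrank ℝ (LinearMap.ker f) = r - 1 := by omega
  have hKmap : (LinearMap.ker f).map V.subtype = KK V := by
    ext x
    simp only [Submodule.mem_map, LinearMap.mem_ker, mem_KK]
    constructor
    · rintro ⟨⟨y, hy⟩, hfy, rfl⟩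
      exact ⟨hy, hfy⟩
    · rintro ⟨hx, hx0⟩
      exact ⟨⟨x, hx⟩, hx0, rfl⟩
  rw [← hKmap, Submodule.finrank_map_subtype_eq]
  exact hker

lemma finrank_WW (hgp : GP V r) (hr : 1 ≤ r) (hrN : r ≤ N) (hdim : finrank ℝ V = r) :
    finrank ℝ ((KK V).map (pr N)) = r - 1 := by
  have hinj : Function.Injective ((pr N).domRestrict (KK V)) := by
    rw [injective_iff_map_eq_zero]
    intro v hv
    have hz : pr N (v : Fin (N+1) → ℝ) = 0 := hv
    exact Subtype.ext (pr_inj_on V hgp hrN v (KK_le V v.2) hz)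
  have h1 : finrank ℝ (LinearMap.range ((pr N).domRestrict (KK V))) = finrank ℝ (KK V) :=
    LinearMap.finrank_range_of_inj hinj
  rw [LinearMap.range_domRestrict] at h1
  rw [h1]
  exact finrank_KK V hgp hr hrN hdim

lemma gp_WW (hgp : GP V r) (hr : 1 ≤ r) : GP ((KK V).map (pr N)) (r-1) := by
  intro s hs u hu hz
  obtain ⟨v, hv, rfl⟩ := hu
  obtain ⟨hvV, hvlast⟩ := mem_KK V |>.1 hv
  have hlast : Fin.last N ∉ s.map Fin.castSuccEmb := by
    intro h
    obtain ⟨j, _, hj⟩ := Finset.mem_map.1 h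
    exact absurd hj (by simp [Fin.castSuccEmb]; exact (Fin.castSucc_lt_last j).ne)
  have hcard : (insert (Fin.last N) (s.map Fin.castSuccEmb)).card = r := by
    rw [Finset.card_insert_of_notMem hlast, Finset.card_map, hs]; omega
  have hv0 : v = 0 := by
    refine hgp _ hcard v hvV fun i hi => ?_
    rcases Finset.mem_insert.1 hi with rfl | hi
    · exact hvlast
    · obtain ⟨j, hj, rfl⟩ := Finset.mem_map.1 hi
      exact hz j hj
  simp [hv0]

lemma comp_lastCases (ε' : Fin N → Bool) (b : Bool) :
    (Fin.lastCases b ε' : Fin (N+1) → Bool) ∘ Fin.castSucc = ε' := by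
  funext j; simp [Function.comp]

lemma proj_mem (ε : Fin (N+1) → Bool) (hε : ε ∈ RS V) :
    ε ∘ Fin.castSucc ∈ RS (V.map (pr N)) := by
  obtain ⟨v, hv, hs⟩ := hε
  exact ⟨pr N v, Submodule.mem_map_of_mem hv, fun j => hs j.castSucc⟩

lemma ext_mem_of_W (ε' : Fin N → Bool) (hw : ε' ∈ RS ((KK V).map (pr N)))
    (hu : ∃ u₀ ∈ V, u₀ (Fin.last N) ≠ 0) (b : Bool) :
    (Fin.lastCases b ε' : Fin (N+1) → Bool) ∈ RS V := by
  obtain ⟨u, huW, hsu⟩ := hw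
  obtain ⟨w, hwK, rfl⟩ := huW
  obtain ⟨hwV, hwl⟩ := (mem_KK V).1 hwK
  obtain ⟨u₀, hu₀V, hne⟩ := hu
  set c : ℝ := (if b then (1:ℝ) else -1) / u₀ (Fin.last N) with hc
  set u₁ : Fin (N+1) → ℝ := c • u₀ with hu₁
  have hu₁V : u₁ ∈ V := V.smul_mem c hu₀V
  have hu₁l : u₁ (Fin.last N) = (if b then (1:ℝ) else -1) := by
    simp [hu₁, hc, div_mul_cancel₀ _ hne, mul_comm]
  obtain ⟨δ, hδ, H⟩ := perturb ε' (pr N w) (pr N u₁) hsu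
  refine ⟨w + (δ/2) • u₁, V.add_mem hwV (V.smul_mem _ hu₁V), fun i => ?_⟩
  induction i using Fin.lastCases with
  | last =>
      simp only [Fin.lastCases_last, Pi.add_apply, Pi.smul_apply, smul_eq_mul, hwl, hu₁l]
      cases b <;> simp <;> nlinarith
  | cast j =>
      have := H (δ/2) (by rw [abs_of_pos (by linarith)]; linarith) j
      simpa [Fin.lastCases_castSucc] using this

lemma mem_W_of_both (ε₁ ε₂ : Fin (N+1) → Bool)
    (hcmp : ε₁ ∘ Fin.castSucc = ε₂ ∘ Fin.castSucc)
    (hb₁ : ε₁ (Fin.last N) = true) (hb₂ : ε₂ (Fin.last N) = false)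
    (h₁ : ε₁ ∈ RS V) (h₂ : ε₂ ∈ RS V) :
    (ε₁ ∘ Fin.castSucc) ∈ RS ((KK V).map (pr N)) := by
  obtain ⟨vp, hvp, hsp2⟩ := h₁
  obtain ⟨vm, hvm, hsm2⟩ := h₂
  have hlp : 0 < vp (Fin.last N) := by have := hsp2 (Fin.last N); rw [hb₁] at this; simpa using this
  have hlm : vm (Fin.last N) < 0 := by
    have := hsm2 (Fin.last N); rw [hb₂] at this; simp at this; linarith
  set z : Fin (N+1) → ℝ := (-(vm (Fin.last N))) • vp + (vp (Fin.last N)) • vm with hz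
  have hzV : z ∈ V := V.add_mem (V.smul_mem _ hvp) (V.smul_mem _ hvm)
  have hzl : z (Fin.last N) = 0 := by simp [hz]; ring
  have hzK : z ∈ KK V := (mem_KK V).2 ⟨hzV, hzl⟩
  refine ⟨pr N z, Submodule.mem_map_of_mem hzK, fun j => ?_⟩
  have hsp := hsp2 j.castSucc
  have hsm := hsm2 j.castSucc
  have heq : ε₂ j.castSucc = ε₁ j.castSucc := (congrFun hcmp j).symm
  rw [heq] at hsm
  simp only [Function.comp_apply, pr_apply, hz, Pi.add_apply, Pi.smul_apply, smul_eq_mul]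
  by_cases hb : ε₁ j.castSucc = true <;> simp [hb] at hsp hsm ⊢ <;> nlinarith

lemma exists_ext (ε' : Fin N → Bool) (h' : ε' ∈ RS (V.map (pr N)))
    (hu : ∃ u₀ ∈ V, u₀ (Fin.last N) ≠ 0) :
    ∃ b : Bool, (Fin.lastCases b ε' : Fin (N+1) → Bool) ∈ RS V := by
  obtain ⟨u, huV', hsu⟩ := h'
  obtain ⟨v, hvV, rfl⟩ := huV'
  rcases lt_trichotomy (v (Fin.last N)) 0 with hneg | hzero | hpos
  · refine ⟨false, v, hvV, fun i => ?_⟩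
    induction i using Fin.lastCases with
    | last => simp [Fin.lastCases_last]; linarith
    | cast j => simpa [Fin.lastCases_castSucc] using hsu j
  · have hvK : v ∈ KK V := (mem_KK V).2 ⟨hvV, hzero⟩
    exact ⟨true, ext_mem_of_W V ε' ⟨pr N v, Submodule.mem_map_of_mem hvK, hsu⟩ hu true⟩
  · refine ⟨true, v, hvV, fun i => ?_⟩
    induction i using Fin.lastCases with
    | last => simp [Fin.lastCases_last]; linarith
    | cast j => simpa [Fin.lastCases_castSucc] using hsu j

lemma card_split (hu : ∃ u₀ ∈ V, u₀ (Fin.last N) ≠ 0) :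
    Nat.card (RS V) =
      Nat.card (RS (V.map (pr N))) + Nat.card (RS ((KK V).map (pr N))) := by
  classical
  set V' := V.map (pr N) with hV'
  set W := (KK V).map (pr N) with hW
  let f : RS V → (RS V' ⊕ RS W) := fun εh =>
    if hw : ((εh : Fin (N+1) → Bool) ∘ Fin.castSucc ∈ RS W ∧
        (εh : Fin (N+1) → Bool) (Fin.last N) = false) then
      Sum.inr ⟨(εh : Fin (N+1) → Bool) ∘ Fin.castSucc, hw.1⟩
    else
      Sum.inl ⟨(εh : Fin (N+1) → Bool) ∘ Fin.castSucc, proj_mem V _ εh.2⟩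
  have hbij : Function.Bijective f := by
    constructor
    · rintro ⟨ε₁, h₁⟩ ⟨ε₂, h₂⟩ heq
      simp only [f] at heq
      by_cases hw1 : (ε₁ ∘ Fin.castSucc ∈ RS W ∧ ε₁ (Fin.last N) = false) <;>
        by_cases hw2 : (ε₂ ∘ Fin.castSucc ∈ RS W ∧ ε₂ (Fin.last N) = false)
      · rw [dif_pos hw1, dif_pos hw2] at heq
        simp only [Sum.inr.injEq, Subtype.mk.injEq] at heq
        exact Subtype.ext (ext_lastCases ε₁ ε₂ heq (hw1.2.trans hw2.2.symm))
      · rw [dif_pos hw1, dif_neg hw2] at heq; exact absurd heq (by simp)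
      · rw [dif_neg hw1, dif_pos hw2] at heq; exact absurd heq (by simp)
      · rw [dif_neg hw1, dif_neg hw2] at heq
        simp only [Sum.inl.injEq, Subtype.mk.injEq] at heq
        by_cases hb : ε₁ (Fin.last N) = ε₂ (Fin.last N)
        · exact Subtype.ext (ext_lastCases ε₁ ε₂ heq hb)
        · exfalso
          have hWmem : ε₁ ∘ Fin.castSucc ∈ RS W := by
            rcases Bool.eq_false_or_eq_true (ε₁ (Fin.last N)) with hb1 | hb1
            · have hb2 : ε₂ (Fin.last N) = false := by
                cases hb2 : ε₂ (Fin.last N)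
                · rfl
                · exact absurd (hb1.trans hb2.symm) hb
              exact mem_W_of_both V ε₁ ε₂ heq hb1 hb2 h₁ h₂
            · have hb2 : ε₂ (Fin.last N) = true := by
                cases hb2 : ε₂ (Fin.last N)
                · exact absurd (hb1.trans hb2.symm) hb
                · rfl
              rw [heq]
              exact mem_W_of_both V ε₂ ε₁ heq.symm hb2 hb1 h₂ h₁
          have hb1 : ε₁ (Fin.last N) = true := by
            cases hb1 : ε₁ (Fin.last N)
            · exact absurd ⟨hWmem, hb1⟩ hw1
            · rfl
          have hb2 : ε₂ (Fin.last N) = true := by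
            cases hb2 : ε₂ (Fin.last N)
            · exact absurd ⟨heq ▸ hWmem, hb2⟩ hw2
            · rfl
          exact hb (hb1.trans hb2.symm)
    · rintro (⟨ε', h'⟩ | ⟨ε', hw⟩)
      · by_cases hwm : ε' ∈ RS W
        · refine ⟨⟨Fin.lastCases true ε', ext_mem_of_W V ε' hwm hu true⟩, ?_⟩
          simp only [f]
          rw [dif_neg (by simp [comp_lastCases])]
          simp [comp_lastCases]
        · obtain ⟨b, hb⟩ := exists_ext V ε' h' hu
          refine ⟨⟨Fin.lastCases b ε', hb⟩, ?_⟩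
          simp only [f]
          rw [dif_neg (by rw [comp_lastCases]; tauto)]
          simp [comp_lastCases]
      · refine ⟨⟨Fin.lastCases false ε', ext_mem_of_W V ε' hw hu false⟩, ?_⟩
        simp only [f]
        rw [dif_pos (by simp [comp_lastCases]; exact hw)]
        simp [comp_lastCases]
  rw [Nat.card_congr (Equiv.ofBijective f hbij), Nat.card_sum]

end Step

lemma card_zero {n : ℕ} (hn : 1 ≤ n) (V : Submodule ℝ (Fin n → ℝ)) (hgp : GP V 0) :
    Nat.card (RS V) = 0 := by
  have : IsEmpty (RS V) := by
    rw [Set.isEmpty_coe_sort, Set.eq_empty_iff_forall_notMem]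
    rintro ε ⟨v, hv, hs⟩
    have hv0 : v = 0 := hgp ∅ rfl v hv (by simp)
    have := hs ⟨0, hn⟩
    rw [hv0] at this
    simp at this
  exact Nat.card_of_isEmpty

lemma card_top {n : ℕ} (hn : 1 ≤ n) (V : Submodule ℝ (Fin n → ℝ))
    (hdim : Module.finrank ℝ V = n) :
    Nat.card (RS V) = 2 * ∑ i ∈ range n, Nat.choose (n-1) i := by
  have hVtop : V = ⊤ := Submodule.eq_top_of_finrank_eq (by
    rw [hdim, Module.finrank_fintype_fun_eq_card, Fintype.card_fin])
  have hRS : RS V = Set.univ := by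
    rw [Set.eq_univ_iff_forall]
    intro ε
    refine ⟨fun i => if ε i then (1:ℝ) else -1, hVtop ▸ Submodule.mem_top, fun i => ?_⟩
    cases h : ε i <;> simp [h]
  rw [hRS]
  have h1 : Nat.card (Set.univ : Set (Fin n → Bool)) = Nat.card (Fin n → Bool) :=
    Nat.card_congr (Equiv.Set.univ _)
  rw [h1, Nat.card_eq_fintype_card]
  obtain ⟨M, rfl⟩ : ∃ M, n = M + 1 := ⟨n - 1, by omega⟩
  simp only [Nat.add_sub_cancel]
  rw [Nat.sum_range_choose]
  simp [Fintype.card_fun]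
  ring

theorem aux : ∀ (n r : ℕ), r ≤ n → 1 ≤ n →
    ∀ V : Submodule ℝ (Fin n → ℝ), Module.finrank ℝ V = r → GP V r →
    Nat.card (RS V) = 2 * ∑ i ∈ range r, Nat.choose (n-1) i := by
  intro n
  induction n with
  | zero => intro r _ h1; omega
  | succ N IH =>
    intro r hrN hN V hdim hgp
    rcases Nat.eq_zero_or_pos r with rfl | hr
    · rw [card_zero hN V hgp]; simp
    rcases eq_or_lt_of_le hrN with rfl | hrlt
    · exact card_top hN V hdim
    · have hrN' : r ≤ N := by omega
      have hu := exists_last_ne_zero V hgp hr hrN' hdim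
      rw [card_split V hu,
        IH r hrN' (by omega) (V.map (pr N)) (finrank_map_pr V hgp hrN' hdim) (gp_map_pr V hgp),
        IH (r-1) (by omega) (by omega) ((KK V).map (pr N))
          (finrank_WW V hgp hr hrN' hdim) (gp_WW V hgp hr)]
      obtain ⟨M, rfl⟩ : ∃ M, N = M + 1 := ⟨N - 1, by omega⟩
      obtain ⟨q, rfl⟩ : ∃ q, r = q + 1 := ⟨r - 1, by omega⟩
      simp only [Nat.add_sub_cancel]
      rw [sum_choose_rec M q]
      ring

/-- Orthant-counting lemma: an `r`-dimensional subspace of `ℝ^N` in general position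
meets the interiors of exactly `2 ∑_{i=0}^{r-1} C(N-1, i)` of the `2^N` open orthants. -/
theorem stmt_12 (N r : ℕ) (hr : 1 ≤ r) (hrN : r ≤ N)
    (V : Submodule ℝ (Fin N → ℝ)) (hdim : Module.finrank ℝ V = r)
    (hgen : ∀ s : Finset (Fin N), s.card = r →
      Function.Injective fun v : V => fun i : s => (v : Fin N → ℝ) i) :
    Nat.card {ε : Fin N → Bool //
        ∃ v ∈ V, ∀ i, 0 < (if ε i then (1 : ℝ) else -1) * v i} =
      2 * ∑ i ∈ Finset.range r, Nat.choose (N - 1) i := by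
  exact aux N r hrN (le_trans hr hrN) V hdim (gp_of_inj V hgen)
end
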